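/- arXiv:1808.06666 — 7 statements merged into one kernel-verified Lean document; each statement's English description precedes it below -/
import Mathlib

section
/- For every ε > 0 there exists δ > 0 (which may be taken to be Ω(ε)) such that for every graph G on n vertices: if itm(G) < (1 − ε)·n/3, then log₂ mis(G) < ((log₂ 3)/3 − δ)·n. -/
/-- A set of vertices is independent in `G` if it spans no edge. -/
def IsIndepSet {V : Type*} (G : SimpleGraph V) (s : Set V) : Prop :=
  ∀ ⦃x⦄, x ∈ s → ∀ ⦃y⦄, y ∈ s → ¬ G.Adj x y

/-- A maximal independent set. -/
def IsMaxIndepSet {V : Type*} (G : SimpleGraph V) (s : Set V) : Prop :=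
  IsIndepSet G s ∧ ∀ t, IsIndepSet G t → s ⊆ t → s = t

/-- `mis G` is the number of maximal independent sets of `G`. -/
noncomputable def mis {V : Type*} (G : SimpleGraph V) : ℕ :=
  Nat.card {s : Set V // IsMaxIndepSet G s}

/-- `S` induces a triangle matching: within `S`, every vertex has exactly two
neighbours, and these two neighbours are adjacent; so `G[S]` is a vertex-disjoint
union of triangles. -/
def IsInducedTriangleMatching {V : Type*} (G : SimpleGraph V) (S : Finset V) : Prop :=
  ∀ x ∈ S, ∃ y ∈ S, ∃ z ∈ S, G.Adj x y ∧ G.Adj x z ∧ G.Adj y z ∧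
    ∀ w ∈ S, G.Adj x w → w = y ∨ w = z

/-- `itm G`: the largest number of triangles in an induced triangle matching. -/
noncomputable def itm {V : Type*} (G : SimpleGraph V) : ℕ :=
  sSup {k | ∃ S : Finset V, S.card = 3 * k ∧ IsInducedTriangleMatching G S}

/-- `S` induces a matching: within `S`, every vertex has exactly one neighbour. -/
def IsInducedMatching {V : Type*} (G : SimpleGraph V) (S : Finset V) : Prop :=
  ∀ x ∈ S, ∃ y ∈ S, G.Adj x y ∧ ∀ z ∈ S, G.Adj x z → z = y

/-- `im G`: the largest number of edges in an induced matching. -/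
noncomputable def im {V : Type*} (G : SimpleGraph V) : ℕ :=
  sSup {k | ∃ S : Finset V, S.card = 2 * k ∧ IsInducedMatching G S}

/-- The neighbourhood of a set of vertices. -/
def nbhd {V : Type*} (G : SimpleGraph V) (S : Set V) : Set V :=
  {y | ∃ x ∈ S, G.Adj x y}

/-- A set `J` is irredundant if no member's neighbourhood is covered by the
neighbourhoods of the other members. -/
def Irredundant {V : Type*} (G : SimpleGraph V) (J : Set V) : Prop :=
  ∀ x ∈ J, ¬ (G.neighborSet x ⊆ nbhd G (J \ {x}))

/-- `irr G X`: the number of irredundant subsets of `X`. -/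
noncomputable def irr {V : Type*} (G : SimpleGraph V) (X : Set V) : ℕ :=
  Nat.card {J : Set V // J ⊆ X ∧ Irredundant G J}

open Finset

namespace StabAux

/-- the bound function `3^t * √2^(n-3t)` -/
noncomputable def f (n t : ℕ) : ℝ := 3 ^ t * Real.sqrt 2 ^ ((n : ℤ) - 3 * t)

lemma sqrt2_pos : (0:ℝ) < Real.sqrt 2 := Real.sqrt_pos.mpr (by norm_num)

lemma sqrt2_sq : Real.sqrt 2 ^ 2 = 2 := Real.sq_sqrt (by norm_num)

lemma one_le_sqrt2 : (1:ℝ) ≤ Real.sqrt 2 := by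
  nlinarith [sqrt2_sq, sqrt2_pos]

lemma sqrt2_le : Real.sqrt 2 ≤ 3/2 := by
  nlinarith [sqrt2_sq, sqrt2_pos]

lemma f_pos (n t : ℕ) : 0 < f n t := by
  unfold f
  positivity

lemma f_mono_n {m n : ℕ} (h : m ≤ n) (t : ℕ) : f m t ≤ f n t := by
  unfold f
  have : Real.sqrt 2 ^ ((m:ℤ) - 3*t) ≤ Real.sqrt 2 ^ ((n:ℤ) - 3*t) :=
    zpow_le_zpow_right₀ one_le_sqrt2 (by omega)
  nlinarith [this, (by positivity : (0:ℝ) < (3:ℝ)^t)]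

lemma f_succ_t (n t : ℕ) : f n (t+1) = f n t * (3 / Real.sqrt 2 ^ (3:ℤ)) := by
  unfold f
  have h : (n : ℤ) - 3 * (t+1 : ℕ) = ((n:ℤ) - 3*t) - 3 := by push_cast; ring
  rw [h, zpow_sub₀ (ne_of_gt sqrt2_pos)]
  ring

lemma f_mono_t (n : ℕ) {s t : ℕ} (h : s ≤ t) : f n s ≤ f n t := by
  have step : ∀ k, f n k ≤ f n (k+1) := by
    intro k
    rw [f_succ_t]
    have h3 : Real.sqrt 2 ^ (3:ℤ) ≤ 3 := by
      have : Real.sqrt 2 ^ (3:ℤ) = Real.sqrt 2 ^ (3:ℕ) := by norm_cast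
      rw [this]
      nlinarith [sqrt2_sq, sqrt2_pos, sqrt2_le]
    have hp : (0:ℝ) < Real.sqrt 2 ^ (3:ℤ) := zpow_pos sqrt2_pos 3
    have : (1:ℝ) ≤ 3 / Real.sqrt 2 ^ (3:ℤ) := (one_le_div hp).mpr h3
    nlinarith [f_pos n k]
  exact monotone_nat_of_le_succ step h

lemma f_shift (n k t : ℕ) : f (n + k) t = Real.sqrt 2 ^ (k:ℤ) * f n t := by
  unfold f
  have h : ((n+k : ℕ) : ℤ) - 3 * t = (k:ℤ) + ((n:ℤ) - 3*t) := by push_cast; ring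
  rw [h, zpow_add₀ (ne_of_gt sqrt2_pos)]
  ring

lemma f_triangle (n t : ℕ) : f (n + 3) (t + 1) = 3 * f n t := by
  unfold f
  have h : ((n+3 : ℕ) : ℤ) - 3 * ((t+1:ℕ):ℤ) = (n:ℤ) - 3*t := by push_cast; ring
  rw [h]
  ring

lemma f_zero_zero : f 0 0 = 1 := by unfold f; norm_num

/-- numeric fact: m² ≤ 2^m unless m = 3 -/
lemma nat_sq_le_two_pow {m : ℕ} (h : m ≠ 3) : m ^ 2 ≤ 2 ^ m := by
  rcases lt_or_ge m 5 with hm | hm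
  · interval_cases m <;> simp_all <;> norm_num
  · clear h
    induction m, hm using Nat.le_induction with
    | base => norm_num
    | succ k hk ih =>
      have h1 : (k+1)^2 ≤ 2 * k^2 := by nlinarith
      have h2 : 2 * k^2 ≤ 2 * 2^k := by omega
      calc (k+1)^2 ≤ 2 * 2^k := le_trans h1 h2
      _ = 2^(k+1) := by ring

/-- branch count bound for min degree d ≠ 2 -/
lemma f_branch {d : ℕ} (hd : d ≠ 2) (m t : ℕ) :
    ((d:ℝ) + 1) * f m t ≤ f (m + (d + 1)) t := by
  rw [f_shift]
  have key : ((d:ℝ) + 1) ≤ Real.sqrt 2 ^ ((d+1 : ℕ) : ℤ) := by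
    have h1 : (d+1) ^ 2 ≤ 2 ^ (d+1) := nat_sq_le_two_pow (by omega)
    have h2 : Real.sqrt 2 ^ ((d+1:ℕ):ℤ) = Real.sqrt 2 ^ (d+1:ℕ) := by norm_cast
    rw [h2]
    have hpos : (0:ℝ) < Real.sqrt 2 ^ (d+1:ℕ) := pow_pos sqrt2_pos _
    have hsq : (Real.sqrt 2 ^ (d+1:ℕ)) ^ 2 = 2 ^ (d+1:ℕ) := by
      rw [← pow_mul, mul_comm, pow_mul, sqrt2_sq]
    have h3 : ((d:ℝ)+1) ^ 2 ≤ (2:ℝ) ^ (d+1:ℕ) := by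
      have := (by exact_mod_cast h1 : ((d+1:ℕ):ℝ) ^ 2 ≤ (2:ℝ) ^ (d+1:ℕ))
      push_cast at this; linarith
    nlinarith [h3, hpos, hsq, (by positivity : (0:ℝ) ≤ (d:ℝ)+1)]
  have := f_pos m t
  push_cast at key ⊢
  nlinarith

lemma f_three_branch {a b c : ℝ} (m t : ℕ)
    (ha : a ≤ f (m+1) t) (hb : b ≤ f (m+1) t) (hc : c ≤ f m t) :
    a + b + c ≤ f (m + 4) t := by
  have h1 : f (m+1) t = Real.sqrt 2 ^ ((1:ℕ):ℤ) * f m t := f_shift m 1 t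
  have h4 : f (m+4) t = Real.sqrt 2 ^ ((4:ℕ):ℤ) * f m t := f_shift m 4 t
  have hp := f_pos m t
  have e1 : Real.sqrt 2 ^ ((1:ℕ):ℤ) = Real.sqrt 2 := by norm_num
  have e4 : Real.sqrt 2 ^ ((4:ℕ):ℤ) = 4 := by
    have : Real.sqrt 2 ^ ((4:ℕ):ℤ) = Real.sqrt 2 ^ (4:ℕ) := by norm_cast
    rw [this]
    nlinarith [sqrt2_sq]
  rw [e1] at h1; rw [e4] at h4
  nlinarith [sqrt2_le, sqrt2_pos]

section Graph
variable {V : Type} [Fintype V] [DecidableEq V] (G : SimpleGraph V) [DecidableRel G.Adj]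

/-- maximal independent subset of `A` (within the graph induced on `A`),
    stated in "dominating" form. -/
def MaxIndepOn (A s : Finset V) : Prop :=
  s ⊆ A ∧ (∀ x ∈ s, ∀ y ∈ s, ¬ G.Adj x y) ∧ ∀ x ∈ A, x ∉ s → ∃ y ∈ s, G.Adj x y

open scoped Classical in
noncomputable def misF (A : Finset V) : Finset (Finset V) :=
  A.powerset.filter (fun s => MaxIndepOn G A s)

noncomputable def misOn (A : Finset V) : ℕ := (misF G A).card

def degOn (A : Finset V) (v : V) : ℕ := (A.filter (fun x => G.Adj v x)).card

/-- closed neighbourhood of `v` inside `A` -/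
def NclF (A : Finset V) (v : V) : Finset V := A.filter (fun x => x = v ∨ G.Adj v x)

def itmSet (A : Finset V) : Set ℕ :=
  {k | ∃ S : Finset V, S ⊆ A ∧ S.card = 3 * k ∧ IsInducedTriangleMatching G S}

noncomputable def itmOn (A : Finset V) : ℕ := sSup (itmSet G A)

variable {G}

lemma mem_misF {A s : Finset V} : s ∈ misF G A ↔ MaxIndepOn G A s := by
  classical
  simp only [misF, Finset.mem_filter, Finset.mem_powerset]
  exact ⟨fun h => h.2, fun h => ⟨h.1, h⟩⟩

lemma NclF_subset (A : Finset V) (v : V) : NclF G A v ⊆ A := Finset.filter_subset _ _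

lemma mem_NclF {A : Finset V} {v x : V} :
    x ∈ NclF G A v ↔ x ∈ A ∧ (x = v ∨ G.Adj v x) := Finset.mem_filter

lemma NclF_card {A : Finset V} {v : V} (hv : v ∈ A) :
    (NclF G A v).card = degOn G A v + 1 := by
  have h : NclF G A v = insert v (A.filter (fun x => G.Adj v x)) := by
    ext x
    simp only [mem_NclF, Finset.mem_insert, Finset.mem_filter]
    constructor
    · rintro ⟨hx, h | h⟩
      · exact Or.inl h
      · exact Or.inr ⟨hx, h⟩
    · rintro (rfl | ⟨hx, h⟩)
      · exact ⟨hv, Or.inl rfl⟩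
      · exact ⟨hx, Or.inr h⟩
  rw [h, Finset.card_insert_of_notMem (by simp [G.irrefl]), degOn]

lemma zero_mem_itmSet (A : Finset V) : 0 ∈ itmSet G A :=
  ⟨∅, by simp [IsInducedTriangleMatching]⟩

lemma itmSet_bddAbove (A : Finset V) : BddAbove (itmSet G A) := by
  refine ⟨A.card, fun k hk => ?_⟩
  obtain ⟨S, hS, hcard, -⟩ := hk
  have := Finset.card_le_card hS
  omega

lemma itmOn_mem (A : Finset V) : itmOn G A ∈ itmSet G A :=
  Nat.sSup_mem ⟨0, zero_mem_itmSet A⟩ (itmSet_bddAbove A)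

lemma three_itmOn_le (A : Finset V) : 3 * itmOn G A ≤ A.card := by
  obtain ⟨S, hS, hcard, -⟩ := itmOn_mem (G := G) A
  have := Finset.card_le_card hS
  omega

lemma itmOn_mono {A B : Finset V} (h : A ⊆ B) : itmOn G A ≤ itmOn G B := by
  apply csSup_le_csSup (itmSet_bddAbove B) ⟨0, zero_mem_itmSet A⟩
  rintro k ⟨S, hS, hcard, hitm⟩
  exact ⟨S, hS.trans h, hcard, hitm⟩

/-- every maximal independent set meets every closed neighbourhood -/
lemma MaxIndepOn.meets {A s : Finset V} (hs : MaxIndepOn G A s) {v : V} (hv : v ∈ A) :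
    ∃ u ∈ NclF G A v, u ∈ s := by
  by_cases hvs : v ∈ s
  · exact ⟨v, mem_NclF.mpr ⟨hv, Or.inl rfl⟩, hvs⟩
  · obtain ⟨y, hy, hadj⟩ := hs.2.2 v hv hvs
    exact ⟨y, mem_NclF.mpr ⟨hs.1 hy, Or.inr hadj⟩, hy⟩

/-- the key branching bound: maximal independent sets containing `a` and avoiding `B`
    are counted by `misOn` of `A` minus `N[a]` minus `B`. -/
lemma branch_card (A : Finset V) (a : V) (B : Finset V) :
    ((misF G A).filter (fun s => a ∈ s ∧ ∀ b ∈ B, b ∉ s)).card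
      ≤ misOn G ((A \ NclF G A a) \ B) := by
  classical
  apply Finset.card_le_card_of_injOn (fun s => s.erase a)
  · intro s hs
    simp only [Finset.coe_filter, Finset.mem_coe, Finset.mem_filter, Set.mem_setOf_eq] at hs ⊢
    obtain ⟨hsM, has, hB⟩ := hs
    have hM := mem_misF.mp hsM
    obtain ⟨hsub, hind, hdom⟩ := hM
    apply mem_misF.mpr
    refine ⟨?_, ?_, ?_⟩
    · intro x hx
      have hxa : x ≠ a := Finset.ne_of_mem_erase hx
      have hxs : x ∈ s := Finset.mem_of_mem_erase hx
      simp only [Finset.mem_sdiff, mem_NclF]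
      refine ⟨⟨hsub hxs, ?_⟩, fun hxB => hB x hxB hxs⟩
      rintro ⟨-, (h | h)⟩
      · exact hxa h
      · exact hind a has x hxs h
    · intro x hx y hy
      exact hind x (Finset.mem_of_mem_erase hx) y (Finset.mem_of_mem_erase hy)
    · intro x hx hxs
      simp only [Finset.mem_sdiff, mem_NclF] at hx
      obtain ⟨⟨hxA, hxN⟩, hxB⟩ := hx
      have hxa : x ≠ a := fun h => hxN ⟨hxA, Or.inl h⟩
      have hxs' : x ∉ s := fun h => hxs (Finset.mem_erase.mpr ⟨hxa, h⟩)
      obtain ⟨y, hy, hadj⟩ := hdom x hxA hxs'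
      have hya : y ≠ a := by
        rintro rfl
        exact hxN ⟨hxA, Or.inr (G.adj_symm hadj)⟩
      exact ⟨y, Finset.mem_erase.mpr ⟨hya, hy⟩, hadj⟩
  · intro s hs t ht hst
    simp only [Finset.coe_filter, Set.mem_setOf_eq] at hs ht
    have hst' : s.erase a = t.erase a := hst
    have : insert a (s.erase a) = insert a (t.erase a) := by rw [hst']
    rwa [Finset.insert_erase hs.2.1, Finset.insert_erase ht.2.1] at this

lemma branch_card' (A : Finset V) (a : V) :
    ((misF G A).filter (fun s => a ∈ s)).card ≤ misOn G (A \ NclF G A a) := by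
  classical
  have h := branch_card (G := G) A a ∅
  simp only [Finset.notMem_empty, false_implies, implies_true, and_true,
    Finset.sdiff_empty] at h
  exact h

/-- master counting inequality -/
lemma master (A : Finset V) {v : V} (hv : v ∈ A) :
    misOn G A ≤ ∑ u ∈ NclF G A v, misOn G (A \ NclF G A u) := by
  classical
  have hsub : misF G A ⊆ (NclF G A v).biUnion
      (fun u => (misF G A).filter (fun s => u ∈ s)) := by
    intro s hs
    obtain ⟨u, hu, hus⟩ := (mem_misF.mp hs).meets hv
    exact Finset.mem_biUnion.mpr ⟨u, hu, Finset.mem_filter.mpr ⟨hs, hus⟩⟩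
  calc misOn G A ≤ ((NclF G A v).biUnion
      (fun u => (misF G A).filter (fun s => u ∈ s))).card := Finset.card_le_card hsub
  _ ≤ ∑ u ∈ NclF G A v, ((misF G A).filter (fun s => u ∈ s)).card :=
      Finset.card_biUnion_le
  _ ≤ ∑ u ∈ NclF G A v, misOn G (A \ NclF G A u) :=
      Finset.sum_le_sum (fun u _ => branch_card' A u)

/-- adding an isolated triangle to an induced triangle matching -/
lemma itm_triangle (A : Finset V) {u v w : V} (hu : u ∈ A) (hv : v ∈ A) (hw : w ∈ A)
    (huv : G.Adj u v) (huw : G.Adj u w) (hvw : G.Adj v w)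
    (hNu : ∀ y ∈ A, G.Adj u y → y = v ∨ y = w)
    (hNv : ∀ y ∈ A, G.Adj v y → y = u ∨ y = w)
    (hNw : ∀ y ∈ A, G.Adj w y → y = u ∨ y = v) :
    itmOn G (A \ {u, v, w}) + 1 ≤ itmOn G A := by
  classical
  obtain ⟨S, hS, hcard, hitm⟩ := itmOn_mem (G := G) (A \ ({u, v, w} : Finset V))
  set T : Finset V := {u, v, w} with hT
  have hTcard : T.card = 3 := by
    rw [hT]
    rw [Finset.card_insert_of_notMem (by simp [huv.ne, huw.ne]),
        Finset.card_insert_of_notMem (by simp [hvw.ne])]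
    simp
  have hSA : S ⊆ A \ T := hS
  have hdisj : Disjoint S T := by
    rw [Finset.disjoint_left]
    intro x hx
    exact (Finset.mem_sdiff.mp (hSA hx)).2
  -- no adjacency between S and T
  have hnoadj : ∀ x ∈ S, ∀ t ∈ T, ¬ G.Adj x t := by
    intro x hx t ht hadj
    have hxA : x ∈ A := (Finset.mem_sdiff.mp (hSA hx)).1
    have hxT : x ∉ T := (Finset.mem_sdiff.mp (hSA hx)).2
    simp only [hT, Finset.mem_insert, Finset.mem_singleton] at ht hxT
    push_neg at hxT
    rcases ht with rfl | rfl | rfl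
    · rcases hNu x hxA (G.adj_symm hadj) with rfl | rfl
      · exact hxT.2.1 rfl
      · exact hxT.2.2 rfl
    · rcases hNv x hxA (G.adj_symm hadj) with rfl | rfl
      · exact hxT.1 rfl
      · exact hxT.2.2 rfl
    · rcases hNw x hxA (G.adj_symm hadj) with rfl | rfl
      · exact hxT.1 rfl
      · exact hxT.2.1 rfl
  have humem : u ∈ S ∪ T := by simp [hT]
  have hvmem : v ∈ S ∪ T := by simp [hT]
  have hwmem : w ∈ S ∪ T := by simp [hT]
  have hkey : (itmOn G (A \ T) + 1) ∈ itmSet G A := by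
    refine ⟨S ∪ T, ?_, ?_, ?_⟩
    · intro x hx
      rcases Finset.mem_union.mp hx with h | h
      · exact (Finset.mem_sdiff.mp (hSA h)).1
      · simp only [hT, Finset.mem_insert, Finset.mem_singleton] at h
        rcases h with rfl | rfl | rfl <;> assumption
    · rw [Finset.card_union_of_disjoint hdisj, hcard, hTcard]
      ring
    · intro x hx
      rcases Finset.mem_union.mp hx with hxS | hxT
      · obtain ⟨y, hy, z, hz, h1, h2, h3, h4⟩ := hitm x hxS
        refine ⟨y, Finset.mem_union_left _ hy, z, Finset.mem_union_left _ hz,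
          h1, h2, h3, ?_⟩
        intro w' hw' hadj
        rcases Finset.mem_union.mp hw' with h | h
        · exact h4 w' h hadj
        · exact absurd hadj (hnoadj x hxS w' h)
      · simp only [hT, Finset.mem_insert, Finset.mem_singleton] at hxT
        rcases hxT with rfl | rfl | rfl
        · refine ⟨v, hvmem, w, hwmem, huv, huw, hvw, ?_⟩
          intro w' hw' hadj
          rcases Finset.mem_union.mp hw' with h | h
          · exact absurd (G.adj_symm hadj) (hnoadj w' h x (by simp [hT]))
          · have hw'A : w' ∈ A := by
              simp only [hT, Finset.mem_insert, Finset.mem_singleton] at h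
              rcases h with rfl | rfl | rfl <;> assumption
            exact hNu w' hw'A hadj
        · refine ⟨u, humem, w, hwmem, G.adj_symm huv, hvw, huw, ?_⟩
          intro w' hw' hadj
          rcases Finset.mem_union.mp hw' with h | h
          · exact absurd (G.adj_symm hadj) (hnoadj w' h x (by simp [hT]))
          · have hw'A : w' ∈ A := by
              simp only [hT, Finset.mem_insert, Finset.mem_singleton] at h
              rcases h with rfl | rfl | rfl <;> assumption
            exact hNv w' hw'A hadj
        · refine ⟨u, humem, v, hvmem, G.adj_symm huw, G.adj_symm hvw, huv, ?_⟩
          intro w' hw' hadj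
          rcases Finset.mem_union.mp hw' with h | h
          · exact absurd (G.adj_symm hadj) (hnoadj w' h x (by simp [hT]))
          · have hw'A : w' ∈ A := by
              simp only [hT, Finset.mem_insert, Finset.mem_singleton] at h
              rcases h with rfl | rfl | rfl <;> assumption
            exact hNw w' hw'A hadj
  exact le_csSup (itmSet_bddAbove A) hkey

lemma sdiff_Ncl_card {A : Finset V} {a : V} (ha : a ∈ A) :
    (A \ NclF G A a).card + (degOn G A a + 1) = A.card := by
  have hsub := NclF_subset (G := G) A a
  have h1 := Finset.card_sdiff_of_subset hsub
  have h2 := Finset.card_le_card hsub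
  rw [NclF_card ha] at h1 h2
  omega

lemma card_cover3 {α : Type*} [DecidableEq α] (M : Finset α) (P Q R : α → Prop)
    [DecidablePred P] [DecidablePred Q] [DecidablePred R]
    (h : ∀ s ∈ M, P s ∨ Q s ∨ R s) :
    M.card ≤ (M.filter P).card + (M.filter Q).card + (M.filter R).card := by
  have hsub : M ⊆ (M.filter P ∪ M.filter Q) ∪ M.filter R := by
    intro s hs
    rcases h s hs with h | h | h
    · exact Finset.mem_union_left _ (Finset.mem_union_left _ (Finset.mem_filter.mpr ⟨hs, h⟩))
    · exact Finset.mem_union_left _ (Finset.mem_union_right _ (Finset.mem_filter.mpr ⟨hs, h⟩))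
    · exact Finset.mem_union_right _ (Finset.mem_filter.mpr ⟨hs, h⟩)
  calc M.card ≤ ((M.filter P ∪ M.filter Q) ∪ M.filter R).card := Finset.card_le_card hsub
  _ ≤ (M.filter P ∪ M.filter Q).card + (M.filter R).card := Finset.card_union_le _ _
  _ ≤ (M.filter P).card + (M.filter Q).card + (M.filter R).card := by
      have := Finset.card_union_le (M.filter P) (M.filter Q)
      omega

theorem main_bound : ∀ (n : ℕ) (A : Finset V), A.card = n →
    (misOn G A : ℝ) ≤ f A.card (itmOn G A) := by
  classical
  intro n
  induction n using Nat.strong_induction_on with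
  | _ n IH =>
  intro A hA
  set t := itmOn G A with ht
  have hIH : ∀ X : Finset V, X ⊆ A → X.card < A.card → (misOn G X : ℝ) ≤ f X.card t := by
    intro X hX hlt
    refine (IH X.card (hA ▸ hlt) X rfl).trans ?_
    exact f_mono_t _ (itmOn_mono hX)
  by_cases hAe : A = ∅
  · subst hAe
    have ht0 : t = 0 := by
      have := three_itmOn_le (G := G) (∅ : Finset V)
      simp at this
      omega
    have hm : misOn G (∅ : Finset V) ≤ 1 := by
      have : misF G (∅ : Finset V) ⊆ ({∅} : Finset (Finset V)) := by
        intro s hs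
        have := (mem_misF.mp hs).1
        simp only [Finset.mem_singleton, Finset.subset_empty] at this ⊢
        exact this
      have := Finset.card_le_card this
      simpa [misOn] using this
    rw [ht0]
    simp only [Finset.card_empty]
    rw [f_zero_zero]
    exact_mod_cast hm
  · obtain ⟨v, hv, hvmin⟩ := Finset.exists_min_image A (degOn G A)
      (Finset.nonempty_of_ne_empty hAe)
    set d := degOn G A v with hd
    by_cases hd2 : d = 2
    · -- minimum degree 2
      obtain ⟨u, w, huw, hfil⟩ := Finset.card_eq_two.mp (hd ▸ hd2 : degOn G A v = 2)
      have humem : u ∈ A.filter (fun x => G.Adj v x) := by rw [hfil]; simp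
      have hwmem : w ∈ A.filter (fun x => G.Adj v x) := by rw [hfil]; simp
      have huA : u ∈ A := (Finset.mem_filter.mp humem).1
      have hwA : w ∈ A := (Finset.mem_filter.mp hwmem).1
      have hvu : G.Adj v u := (Finset.mem_filter.mp humem).2
      have hvw : G.Adj v w := (Finset.mem_filter.mp hwmem).2
      have hvne_u : v ≠ u := fun h => G.irrefl (h ▸ hvu)
      have hvne_w : v ≠ w := fun h => G.irrefl (h ▸ hvw)
      have hNv_eq : NclF G A v = {v, u, w} := by
        ext x
        simp only [mem_NclF, Finset.mem_insert, Finset.mem_singleton]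
        constructor
        · rintro ⟨hxA, rfl | hadj⟩
          · exact Or.inl rfl
          · have : x ∈ A.filter (fun x => G.Adj v x) := Finset.mem_filter.mpr ⟨hxA, hadj⟩
            rw [hfil] at this
            simp only [Finset.mem_insert, Finset.mem_singleton] at this
            tauto
        · rintro (rfl | rfl | rfl)
          · exact ⟨hv, Or.inl rfl⟩
          · exact ⟨huA, Or.inr hvu⟩
          · exact ⟨hwA, Or.inr hvw⟩
      have hdegu : 2 ≤ degOn G A u := by have := hvmin u huA; omega
      have hdegw : 2 ≤ degOn G A w := by have := hvmin w hwA; omega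
      have hcv := sdiff_Ncl_card (G := G) hv
      have hcu := sdiff_Ncl_card (G := G) huA
      have hcw := sdiff_Ncl_card (G := G) hwA
      by_cases hadj : G.Adj u w
      · by_cases hbig : degOn G A u = 2 ∧ degOn G A w = 2
        · -- isolated triangle case
          have hfilu : A.filter (fun x => G.Adj u x) = {v, w} := by
            refine (Finset.eq_of_subset_of_card_le ?_ ?_).symm
            · intro x hx
              simp only [Finset.mem_insert, Finset.mem_singleton] at hx
              rcases hx with rfl | rfl
              · exact Finset.mem_filter.mpr ⟨hv, G.adj_symm hvu⟩
              · exact Finset.mem_filter.mpr ⟨hwA, hadj⟩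
            · rw [Finset.card_insert_of_notMem (by simp [hvne_w]), Finset.card_singleton]
              exact le_of_eq hbig.1
          have hfilw : A.filter (fun x => G.Adj w x) = {v, u} := by
            refine (Finset.eq_of_subset_of_card_le ?_ ?_).symm
            · intro x hx
              simp only [Finset.mem_insert, Finset.mem_singleton] at hx
              rcases hx with rfl | rfl
              · exact Finset.mem_filter.mpr ⟨hv, G.adj_symm hvw⟩
              · exact Finset.mem_filter.mpr ⟨huA, G.adj_symm hadj⟩
            · rw [Finset.card_insert_of_notMem (by simp [hvne_u]), Finset.card_singleton]
              exact le_of_eq hbig.2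
          set T : Finset V := {v, u, w} with hT
          have hNu_eq : NclF G A u = T := by
            ext x
            simp only [mem_NclF, hT, Finset.mem_insert, Finset.mem_singleton]
            constructor
            · rintro ⟨hxA, rfl | hadjx⟩
              · exact Or.inr (Or.inl rfl)
              · have : x ∈ A.filter (fun x => G.Adj u x) := Finset.mem_filter.mpr ⟨hxA, hadjx⟩
                rw [hfilu] at this
                simp only [Finset.mem_insert, Finset.mem_singleton] at this
                tauto
            · rintro (rfl | rfl | rfl)
              · exact ⟨hv, Or.inr (G.adj_symm hvu)⟩
              · exact ⟨huA, Or.inl rfl⟩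
              · exact ⟨hwA, Or.inr hadj⟩
          have hNw_eq : NclF G A w = T := by
            ext x
            simp only [mem_NclF, hT, Finset.mem_insert, Finset.mem_singleton]
            constructor
            · rintro ⟨hxA, rfl | hadjx⟩
              · exact Or.inr (Or.inr rfl)
              · have : x ∈ A.filter (fun x => G.Adj w x) := Finset.mem_filter.mpr ⟨hxA, hadjx⟩
                rw [hfilw] at this
                simp only [Finset.mem_insert, Finset.mem_singleton] at this
                tauto
            · rintro (rfl | rfl | rfl)
              · exact ⟨hv, Or.inr (G.adj_symm hvw)⟩
              · exact ⟨huA, Or.inr (G.adj_symm hadj)⟩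
              · exact ⟨hwA, Or.inl rfl⟩
          have hmaster := master (G := G) A hv
          rw [hNv_eq] at hmaster
          have hsum : ∑ x ∈ ({v, u, w} : Finset V), misOn G (A \ NclF G A x)
              = 3 * misOn G (A \ T) := by
            rw [Finset.sum_insert (by simp [hvne_u, hvne_w]),
                Finset.sum_insert (by simp [huw]), Finset.sum_singleton,
                hNv_eq, hNu_eq, hNw_eq]
            ring
          rw [hsum] at hmaster
          -- itm bound
          have hitm : itmOn G (A \ T) + 1 ≤ t := by
            have := itm_triangle (G := G) A hv huA hwA hvu hvw hadj
              (fun y hy hadjy => by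
                have : y ∈ A.filter (fun x => G.Adj v x) := Finset.mem_filter.mpr ⟨hy, hadjy⟩
                rw [hfil] at this
                simpa using this)
              (fun y hy hadjy => by
                have : y ∈ A.filter (fun x => G.Adj u x) := Finset.mem_filter.mpr ⟨hy, hadjy⟩
                rw [hfilu] at this
                simpa using this)
              (fun y hy hadjy => by
                have : y ∈ A.filter (fun x => G.Adj w x) := Finset.mem_filter.mpr ⟨hy, hadjy⟩
                rw [hfilw] at this
                simpa using this)
            exact this
          have hTsub : T ⊆ A := by
            intro x hx
            simp only [hT, Finset.mem_insert, Finset.mem_singleton] at hx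
            rcases hx with rfl | rfl | rfl <;> assumption
          have hTcard : T.card = 3 := by
            rw [hT, Finset.card_insert_of_notMem (by simp [hvne_u, hvne_w]),
              Finset.card_insert_of_notMem (by simp [huw]), Finset.card_singleton]
          have hcT : (A \ T).card + 3 = A.card := by
            rw [Finset.card_sdiff_of_subset hTsub, hTcard]
            have := Finset.card_le_card hTsub
            omega
          set m := (A \ T).card with hmdef
          have hlt : m < A.card := by omega
          have hIH3 : (misOn G (A \ T) : ℝ) ≤ f m (itmOn G (A \ T)) :=
            IH m (hA ▸ hlt) _ rfl
          calc (misOn G A : ℝ) ≤ 3 * (misOn G (A \ T) : ℝ) := by exact_mod_cast hmaster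
          _ ≤ 3 * f m (itmOn G (A \ T)) := by nlinarith [hIH3]
          _ = f (m + 3) (itmOn G (A \ T) + 1) := (f_triangle m _).symm
          _ ≤ f (m + 3) t := f_mono_t _ hitm
          _ = f A.card t := by rw [hcT]
        · -- triangle with an extra edge leaving: u or w has degree ≥ 3
          have hA4 : 4 ≤ A.card := by
            rcases (by omega : 3 ≤ degOn G A u ∨ 3 ≤ degOn G A w) with h | h <;> omega
          set m := A.card - 4 with hmdef
          have hm4 : m + 4 = A.card := by omega
          have hcover : misOn G A ≤ ((misF G A).filter (fun s => v ∈ s)).card +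
              ((misF G A).filter (fun s => u ∈ s)).card +
              ((misF G A).filter (fun s => w ∈ s)).card := by
            apply card_cover3
            intro s hs
            obtain ⟨x, hx, hxs⟩ := (mem_misF.mp hs).meets hv
            rw [hNv_eq] at hx
            simp only [Finset.mem_insert, Finset.mem_singleton] at hx
            rcases hx with rfl | rfl | rfl
            · exact Or.inl hxs
            · exact Or.inr (Or.inl hxs)
            · exact Or.inr (Or.inr hxs)
          have hb1 := branch_card' (G := G) A v
          have hb2 := branch_card' (G := G) A u
          have hb3 := branch_card' (G := G) A w
          have hX1 : (misOn G (A \ NclF G A v) : ℝ) ≤ f (m+1) t := by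
            refine (hIH _ Finset.sdiff_subset (by omega)).trans (f_mono_n (by omega) t)
          rcases (by omega : 3 ≤ degOn G A u ∨ 3 ≤ degOn G A w) with hdg | hdg
          · have hX2 : (misOn G (A \ NclF G A u) : ℝ) ≤ f m t :=
              (hIH _ Finset.sdiff_subset (by omega)).trans (f_mono_n (by omega) t)
            have hX3 : (misOn G (A \ NclF G A w) : ℝ) ≤ f (m+1) t :=
              (hIH _ Finset.sdiff_subset (by omega)).trans (f_mono_n (by omega) t)
            calc (misOn G A : ℝ) ≤ (misOn G (A \ NclF G A v) : ℝ) +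
                (misOn G (A \ NclF G A w) : ℝ) + (misOn G (A \ NclF G A u) : ℝ) := by
                  have : misOn G A ≤ misOn G (A \ NclF G A v) +
                    misOn G (A \ NclF G A w) + misOn G (A \ NclF G A u) := by omega
                  exact_mod_cast this
            _ ≤ f (m + 4) t := f_three_branch m t hX1 hX3 hX2
            _ = f A.card t := by rw [hm4]
          · have hX2 : (misOn G (A \ NclF G A u) : ℝ) ≤ f (m+1) t :=
              (hIH _ Finset.sdiff_subset (by omega)).trans (f_mono_n (by omega) t)
            have hX3 : (misOn G (A \ NclF G A w) : ℝ) ≤ f m t :=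
              (hIH _ Finset.sdiff_subset (by omega)).trans (f_mono_n (by omega) t)
            calc (misOn G A : ℝ) ≤ (misOn G (A \ NclF G A v) : ℝ) +
                (misOn G (A \ NclF G A u) : ℝ) + (misOn G (A \ NclF G A w) : ℝ) := by
                  have : misOn G A ≤ misOn G (A \ NclF G A v) +
                    misOn G (A \ NclF G A u) + misOn G (A \ NclF G A w) := by omega
                  exact_mod_cast this
            _ ≤ f (m + 4) t := f_three_branch m t hX1 hX2 hX3
            _ = f A.card t := by rw [hm4]
      · -- u and w not adjacent
        have huNw : u ∈ A \ NclF G A w := by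
          simp only [Finset.mem_sdiff, mem_NclF]
          refine ⟨huA, ?_⟩
          rintro ⟨-, (rfl | h)⟩
          · exact huw rfl
          · exact hadj (G.adj_symm h)
        have hX3c : ((A \ NclF G A w) \ {u}).card + 1 = (A \ NclF G A w).card := by
          rw [Finset.card_sdiff_of_subset (Finset.singleton_subset_iff.mpr huNw), Finset.card_singleton]
          have : 1 ≤ (A \ NclF G A w).card := Finset.card_pos.mpr ⟨u, huNw⟩
          omega
        have hA4 : 4 ≤ A.card := by omega
        set m := A.card - 4 with hmdef
        have hm4 : m + 4 = A.card := by omega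
        have hcover : misOn G A ≤ ((misF G A).filter (fun s => v ∈ s)).card +
            ((misF G A).filter (fun s => u ∈ s)).card +
            ((misF G A).filter (fun s => w ∈ s ∧ ∀ b ∈ ({u} : Finset V), b ∉ s)).card := by
          apply card_cover3
          intro s hs
          obtain ⟨x, hx, hxs⟩ := (mem_misF.mp hs).meets hv
          rw [hNv_eq] at hx
          simp only [Finset.mem_insert, Finset.mem_singleton] at hx
          by_cases hvs : v ∈ s
          · exact Or.inl hvs
          by_cases hus : u ∈ s
          · exact Or.inr (Or.inl hus)
          rcases hx with rfl | rfl | rfl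
          · exact absurd hxs hvs
          · exact absurd hxs hus
          · exact Or.inr (Or.inr ⟨hxs, by simpa using hus⟩)
        have hb1 := branch_card' (G := G) A v
        have hb2 := branch_card' (G := G) A u
        have hb3 := branch_card (G := G) A w {u}
        have hX1 : (misOn G (A \ NclF G A v) : ℝ) ≤ f (m+1) t :=
          (hIH _ Finset.sdiff_subset (by omega)).trans (f_mono_n (by omega) t)
        have hX2 : (misOn G (A \ NclF G A u) : ℝ) ≤ f (m+1) t :=
          (hIH _ Finset.sdiff_subset (by omega)).trans (f_mono_n (by omega) t)
        have hX3 : (misOn G ((A \ NclF G A w) \ {u}) : ℝ) ≤ f m t := by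
          refine (hIH _ (Finset.sdiff_subset.trans Finset.sdiff_subset) (by omega)).trans
            (f_mono_n (by omega) t)
        calc (misOn G A : ℝ) ≤ (misOn G (A \ NclF G A v) : ℝ) +
            (misOn G (A \ NclF G A u) : ℝ) + (misOn G ((A \ NclF G A w) \ {u}) : ℝ) := by
              have : misOn G A ≤ misOn G (A \ NclF G A v) +
                misOn G (A \ NclF G A u) + misOn G ((A \ NclF G A w) \ {u}) := by omega
              exact_mod_cast this
        _ ≤ f (m + 4) t := f_three_branch m t hX1 hX2 hX3
        _ = f A.card t := by rw [hm4]
    · -- minimum degree ≠ 2 : plain master bound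
      have hNvcard : (NclF G A v).card = d + 1 := NclF_card hv
      have hNvA : d + 1 ≤ A.card := hNvcard ▸ Finset.card_le_card (NclF_subset A v)
      set m := A.card - (d + 1) with hmdef
      have hm : m + (d + 1) = A.card := by omega
      have hbranch : ∀ x ∈ NclF G A v, (misOn G (A \ NclF G A x) : ℝ) ≤ f m t := by
        intro x hx
        have hxA : x ∈ A := NclF_subset A v hx
        have hcx := sdiff_Ncl_card (G := G) hxA
        have hdx := hvmin x hxA
        exact (hIH _ Finset.sdiff_subset (by omega)).trans (f_mono_n (by omega) t)
      have hmaster := master (G := G) A hv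
      calc (misOn G A : ℝ) ≤ ∑ x ∈ NclF G A v, (misOn G (A \ NclF G A x) : ℝ) := by
            exact_mod_cast hmaster
      _ ≤ ∑ x ∈ NclF G A v, f m t := Finset.sum_le_sum hbranch
      _ = ((d : ℝ) + 1) * f m t := by
            rw [Finset.sum_const, hNvcard]
            push_cast
            ring
      _ ≤ f (m + (d + 1)) t := f_branch hd2 m t
      _ = f A.card t := by rw [hm]

end Graph

section Bridge
variable {V : Type} [Fintype V] [DecidableEq V] (G : SimpleGraph V) [DecidableRel G.Adj]

lemma mis_le_misOn : mis G ≤ misOn G Finset.univ := by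
  classical
  have hinj : ∃ φ : {s : Set V // IsMaxIndepSet G s} → {s : Finset V // s ∈ misF G Finset.univ},
      Function.Injective φ := by
    refine ⟨fun p => ⟨(Set.toFinite p.1).toFinset, ?_⟩, ?_⟩
    · obtain ⟨s, hs⟩ := p
      apply mem_misF.mpr
      refine ⟨Finset.subset_univ _, ?_, ?_⟩
      · intro x hx y hy
        rw [Set.Finite.mem_toFinset] at hx hy
        exact hs.1 hx hy
      · intro x _ hxs
        rw [Set.Finite.mem_toFinset] at hxs
        by_contra hne
        push_neg at hne
        have hind : IsIndepSet G (insert x s) := by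
          intro a ha b hb
          rcases Set.mem_insert_iff.mp ha with rfl | ha' <;>
            rcases Set.mem_insert_iff.mp hb with rfl | hb'
          · exact fun h => G.irrefl h
          · intro h
            exact hne b (by rwa [Set.Finite.mem_toFinset] ) h
          · intro h
            exact hne a (by rwa [Set.Finite.mem_toFinset]) (G.adj_symm h)
          · exact hs.1 ha' hb'
        have hxs2 : x ∉ s := hxs
        have heq := hs.2 _ hind (Set.subset_insert x s)
        exact hxs2 (by rw [heq]; exact Set.mem_insert x s)
    · intro p q hpq
      ext1
      have : ((Set.toFinite p.1).toFinset : Set V) = ((Set.toFinite q.1).toFinset : Set V) := by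
        rw [Subtype.mk.injEq] at hpq
        rw [hpq]
      rwa [Set.Finite.coe_toFinset, Set.Finite.coe_toFinset] at this
  obtain ⟨φ, hφ⟩ := hinj
  have hle := Nat.card_le_card_of_injective φ hφ
  calc mis G = Nat.card {s : Set V // IsMaxIndepSet G s} := rfl
  _ ≤ Nat.card {s : Finset V // s ∈ misF G Finset.univ} := hle
  _ = (misF G Finset.univ).card := Nat.card_eq_finsetCard _
  _ = misOn G Finset.univ := rfl

lemma itm_eq_itmOn : itm G = itmOn G Finset.univ := by
  unfold itm itmOn itmSet
  congr 1
  ext k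
  constructor
  · rintro ⟨S, h1, h2⟩
    exact ⟨S, Finset.subset_univ S, h1, h2⟩
  · rintro ⟨S, _, h1, h2⟩
    exact ⟨S, h1, h2⟩

lemma mis_le_f : (mis G : ℝ) ≤ f (Fintype.card V) (itm G) := by
  have h1 := main_bound (G := G) Finset.univ.card Finset.univ rfl
  have h2 : (mis G : ℝ) ≤ (misOn G Finset.univ : ℝ) := by exact_mod_cast mis_le_misOn G
  rw [itm_eq_itmOn]
  rw [← Finset.card_univ]
  exact h2.trans h1

lemma three_itm_le : 3 * itm G ≤ Fintype.card V := by
  rw [itm_eq_itmOn, ← Finset.card_univ]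
  exact three_itmOn_le _

end Bridge

lemma logb_sqrt2 : Real.logb 2 (Real.sqrt 2) = 1/2 := by
  rw [Real.sqrt_eq_rpow]
  exact Real.logb_rpow (by norm_num) (by norm_num)

lemma logb_f {n t : ℕ} (h : 3 * t ≤ n) :
    Real.logb 2 (f n t) = t * Real.logb 2 3 + ((n:ℝ) - 3*t)/2 := by
  obtain ⟨m, hm⟩ : ∃ m, n = 3*t + m := ⟨n - 3*t, by omega⟩
  subst hm
  have hz : ((3*t+m : ℕ) : ℤ) - 3*t = (m:ℤ) := by push_cast; ring
  unfold f
  rw [hz, zpow_natCast]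
  rw [Real.logb_mul (by positivity) (by positivity), Real.logb_pow, Real.logb_pow, logb_sqrt2]
  push_cast
  ring

lemma logb2_3_gt : (3:ℝ)/2 < Real.logb 2 3 := by
  rw [Real.lt_logb_iff_rpow_lt (by norm_num) (by norm_num)]
  have ha : (0:ℝ) < (2:ℝ) ^ ((3:ℝ)/2) := Real.rpow_pos_of_pos (by norm_num) _
  have hsq : ((2:ℝ) ^ ((3:ℝ)/2)) ^ (2:ℕ) = 8 := by
    rw [← Real.rpow_natCast ((2:ℝ) ^ ((3:ℝ)/2)) 2, ← Real.rpow_mul (by norm_num : (0:ℝ) ≤ 2)]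
    rw [show (3:ℝ)/2 * ((2:ℕ):ℝ) = ((3:ℕ):ℝ) by push_cast; ring, Real.rpow_natCast]
    norm_num
  nlinarith

end StabAux

theorem stability_itm :
    ∃ c : ℝ, 0 < c ∧ ∀ ε : ℝ, 0 < ε → ∃ δ : ℝ, 0 < δ ∧ c * ε ≤ δ ∧
      ∀ (V : Type) [Fintype V] (G : SimpleGraph V),
        (itm G : ℝ) < (1 - ε) * (Fintype.card V : ℝ) / 3 →
        Real.logb 2 (mis G) < (Real.logb 2 3 / 3 - δ) * (Fintype.card V : ℝ) := by
  classical
  set L := Real.logb 2 3 with hLdef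
  have hL : (3:ℝ)/2 < L := StabAux.logb2_3_gt
  set c : ℝ := L/3 - 1/2 with hcdef
  have hc : 0 < c := by rw [hcdef]; linarith
  refine ⟨c, hc, ?_⟩
  intro ε hε
  refine ⟨c * ε, mul_pos hc hε, le_refl _, ?_⟩
  intro V _ G hyp
  classical
  set n := Fintype.card V with hndef
  set t := itm G with htdef
  have ht0 : (0:ℝ) ≤ (t:ℝ) := Nat.cast_nonneg t
  have hn0 : (0:ℝ) ≤ (n:ℝ) := Nat.cast_nonneg n
  have hpos : 0 < (1 - ε) * (n:ℝ) := by nlinarith [hyp]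
  have hn : 0 < (n:ℝ) := by
    rcases lt_or_eq_of_le hn0 with h | h
    · exact h
    · exfalso; rw [← h] at hpos; simp at hpos
  have hε1 : 0 < 1 - ε := by
    by_contra h
    push_neg at h
    nlinarith
  have hδlt : c * ε < c := by nlinarith
  have hcoef : 0 < L/3 - c * ε := by
    rw [hcdef] at hδlt ⊢
    linarith
  rcases Nat.eq_zero_or_pos (mis G) with h0 | hmis
  · rw [h0]
    simp only [Nat.cast_zero, Real.logb_zero]
    exact mul_pos hcoef hn
  · have h1 : (mis G : ℝ) ≤ StabAux.f n t := StabAux.mis_le_f G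
    have h2 : 3 * t ≤ n := StabAux.three_itm_le G
    have hlogb : Real.logb 2 (mis G) ≤ Real.logb 2 (StabAux.f n t) :=
      Real.logb_le_logb_of_le (by norm_num) (by exact_mod_cast hmis) h1
    rw [StabAux.logb_f h2] at hlogb
    have h3t : (3:ℝ) * (t:ℝ) ≤ (n:ℝ) := by exact_mod_cast h2
    -- t * L + (n - 3t)/2 < (L/3 - c ε) n
    have hstep : (t:ℝ) * L + ((n:ℝ) - 3*t)/2 < (L/3 - c * ε) * n := by
      have hyp' : (t:ℝ) < (1 - ε) * n / 3 := hyp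
      have hLpos : 0 < L - 3/2 := by linarith
      have : (t:ℝ) * (L - 3/2) < ((1 - ε) * n / 3) * (L - 3/2) := by
        exact mul_lt_mul_of_pos_right hyp' hLpos
      rw [hcdef]
      nlinarith
    calc Real.logb 2 (mis G) ≤ (t:ℝ) * L + ((n:ℝ) - 3*t)/2 := hlogb
    _ < (L/3 - c * ε) * n := hstep
end

section
/- For every ε > 0 there exists δ > 0 (which may be taken to be Ω(ε)) such that for every triangle-free graph G on n vertices: if im(G) < (1 − ε)·n/2, then log₂ mis(G) < (1/2 − δ)·n. -/
open Finset Real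
attribute [local instance] Classical.propDecidable
set_option linter.unusedSectionVars false
set_option linter.unusedVariables false
set_option maxHeartbeats 2000000

namespace Stab
variable {V : Type} [Fintype V] {G : SimpleGraph V}

noncomputable def Nb (G : SimpleGraph V) (A : Finset V) (u : V) : Finset V :=
  A.filter (fun w => G.Adj u w)

def MaxIn (G : SimpleGraph V) (A s : Finset V) : Prop :=
  s ⊆ A ∧ (∀ x ∈ s, ∀ y ∈ s, ¬ G.Adj x y) ∧ ∀ z ∈ A, z ∉ s → ∃ y ∈ s, G.Adj z y

noncomputable def cnt (P : Finset V → Prop) : ℕ :=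
  (Finset.univ.filter fun s => P s).card

noncomputable def misIn (G : SimpleGraph V) (A : Finset V) : ℕ :=
  cnt (fun s => MaxIn G A s)

noncomputable def imIn (G : SimpleGraph V) (A : Finset V) : ℕ :=
  sSup {k | ∃ S : Finset V, S ⊆ A ∧ S.card = 2 * k ∧ IsInducedMatching G S}

lemma mem_Nb {A : Finset V} {u w : V} : w ∈ Nb G A u ↔ w ∈ A ∧ G.Adj u w := by
  simp [Nb]

lemma cnt_mono {P Q : Finset V → Prop} (h : ∀ s, P s → Q s) : cnt P ≤ cnt (V := V) Q := by
  unfold cnt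
  apply card_le_card
  intro s hs
  rw [mem_filter] at hs ⊢
  exact ⟨hs.1, h s hs.2⟩

lemma cnt_split (P Q : Finset V → Prop) :
    cnt P = cnt (fun s => P s ∧ Q s) + cnt (fun s => P s ∧ ¬ Q s) := by
  unfold cnt
  rw [← card_union_of_disjoint (by
    rw [disjoint_left]
    intro a ha hb
    simp only [mem_filter] at ha hb
    exact hb.2.2 ha.2.2)]
  congr 1
  ext s
  simp only [mem_filter, mem_union, mem_univ, true_and]
  by_cases h : Q s <;> tauto

lemma cnt_le_sum {ι : Type} (t : Finset ι) (P : Finset V → Prop) (Q : ι → Finset V → Prop)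
    (h : ∀ s, P s → ∃ i ∈ t, Q i s) :
    cnt P ≤ ∑ i ∈ t, cnt (fun s => Q i s) := by
  unfold cnt
  calc (Finset.univ.filter fun s => P s).card
      ≤ (t.biUnion fun i => Finset.univ.filter fun s => Q i s).card := by
        apply card_le_card
        intro s hs
        rw [mem_filter] at hs
        rw [mem_biUnion]
        obtain ⟨i, hi, hq⟩ := h s hs.2
        exact ⟨i, hi, mem_filter.2 ⟨mem_univ _, hq⟩⟩
    _ ≤ _ := card_biUnion_le

lemma forced_mem {A s : Finset V} {v : V} (hv : v ∈ A) (h : MaxIn G A s)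
    (hnb : ∀ x ∈ Nb G A v, x ∉ s) : v ∈ s := by
  by_contra hvs
  obtain ⟨y, hys, hadj⟩ := h.2.2 v hv hvs
  exact hnb y (mem_Nb.2 ⟨h.1 hys, hadj⟩) hys

lemma branch_count (A : Finset V) (u : V) (F : Finset V) (hu : u ∈ A)
    (hF : ∀ f ∈ F, ¬ G.Adj u f ∧ f ≠ u) :
    cnt (fun s => MaxIn G A s ∧ u ∈ s ∧ ∀ f ∈ F, f ∉ s)
      ≤ misIn G (A \ (insert u (Nb G A u) ∪ F)) := by
  unfold misIn cnt
  apply Finset.card_le_card_of_injOn (fun s => s.erase u)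
  · intro s hs
    simp only [coe_filter, mem_coe, Set.mem_setOf_eq, mem_filter, mem_univ, true_and] at hs ⊢
    obtain ⟨⟨hsA, hind, hmax⟩, hus, hFs⟩ := hs
    refine ⟨?_, ?_, ?_⟩
    · intro x hx
      rw [mem_erase] at hx
      obtain ⟨hxu, hxs⟩ := hx
      rw [mem_sdiff]
      refine ⟨hsA hxs, ?_⟩
      intro hxX
      rcases mem_union.1 hxX with h | h
      · rcases mem_insert.1 h with h' | h'
        · exact hxu h'
        · exact hind u hus x hxs (mem_Nb.1 h').2
      · exact hFs x h hxs
    · intro x hx y hy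
      exact hind x (mem_erase.1 hx).2 y (mem_erase.1 hy).2
    · intro z hz hzs
      rw [mem_sdiff] at hz
      obtain ⟨hzA, hzX⟩ := hz
      have hzu : z ≠ u := by
        rintro rfl
        exact hzX (mem_union_left _ (mem_insert_self _ _))
      have hzs' : z ∉ s := fun h => hzs (mem_erase.2 ⟨hzu, h⟩)
      obtain ⟨y, hys, hadj⟩ := hmax z hzA hzs'
      have hyu : y ≠ u := by
        rintro rfl
        exact hzX (mem_union_left _ (mem_insert_of_mem (mem_Nb.2 ⟨hzA, hadj.symm⟩)))
      exact ⟨y, mem_erase.2 ⟨hyu, hys⟩, hadj⟩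
  · intro s₁ h₁ s₂ h₂ he
    simp only [coe_filter, Set.mem_setOf_eq, mem_univ, true_and] at h₁ h₂
    have e1 : insert u (s₁.erase u) = insert u (s₂.erase u) := by
      simp only at he; rw [he]
    rwa [Finset.insert_erase h₁.2.1, Finset.insert_erase h₂.2.1] at e1

lemma card_del {A X Y : Finset V} (hYA : Y ⊆ A) (hYX : Y ⊆ X) :
    (A \ X).card + Y.card ≤ A.card := by
  have h1 : A \ X ⊆ A \ Y := sdiff_subset_sdiff (Finset.Subset.refl A) hYX
  have h2 := card_le_card h1
  rw [card_sdiff_of_subset hYA] at h2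
  have := card_le_card hYA
  omega

lemma misIn_empty_le : misIn G (∅ : Finset V) ≤ 1 := by
  unfold misIn cnt
  apply le_trans (card_le_card (t := {∅}) ?_)
  · simp
  · intro s hs
    rw [mem_filter] at hs
    rw [mem_singleton]
    exact subset_empty.1 hs.2.1

lemma imSet_zero_mem (A : Finset V) :
    0 ∈ {k | ∃ S : Finset V, S ⊆ A ∧ S.card = 2 * k ∧ IsInducedMatching G S} :=
  ⟨∅, empty_subset _, by simp, fun x hx => absurd hx (notMem_empty x)⟩

lemma imSet_bdd (A : Finset V) :
    BddAbove {k | ∃ S : Finset V, S ⊆ A ∧ S.card = 2 * k ∧ IsInducedMatching G S} := by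
  refine ⟨Fintype.card V, fun k hk => ?_⟩
  obtain ⟨S, _, h2, _⟩ := hk
  have := S.card_le_univ
  omega

lemma le_imIn {A : Finset V} {k : ℕ} (S : Finset V) (hS : S ⊆ A) (hc : S.card = 2 * k)
    (him : IsInducedMatching G S) : k ≤ imIn G A :=
  le_csSup (imSet_bdd A) ⟨S, hS, hc, him⟩

lemma imIn_mono {A B : Finset V} (h : A ⊆ B) : imIn G A ≤ imIn G B :=
  csSup_le_csSup (imSet_bdd B) ⟨0, imSet_zero_mem A⟩
    (fun k ⟨S, hS, h1, h2⟩ => ⟨S, hS.trans h, h1, h2⟩)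

lemma imIn_witness (A : Finset V) :
    ∃ S : Finset V, S ⊆ A ∧ S.card = 2 * imIn G A ∧ IsInducedMatching G S :=
  Nat.sSup_mem ⟨0, imSet_zero_mem A⟩ (imSet_bdd A)

lemma imIn_univ_le_im (G : SimpleGraph V) : imIn G (univ : Finset V) ≤ im G := by
  apply csSup_le_csSup _ ⟨0, imSet_zero_mem univ⟩
  · rintro k ⟨S, _, h1, h2⟩
    exact ⟨S, h1, h2⟩
  · refine ⟨Fintype.card V, fun k hk => ?_⟩
    obtain ⟨S, h2, _⟩ := hk
    have := S.card_le_univ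
    omega

lemma nadj_of_common (hG : G.CliqueFree 3) {v a b : V} (ha : G.Adj v a) (hb : G.Adj v b) :
    ¬ G.Adj a b := by
  intro h
  exact hG {v, a, b} (SimpleGraph.is3Clique_triple_iff.2 ⟨ha, hb, h⟩)

lemma iso_edge_drop {A : Finset V} {u v : V} (hu : u ∈ A) (hv : v ∈ A)
    (hNu : Nb G A u = {v}) (hNv : Nb G A v = {u}) :
    imIn G (A \ ({u, v} : Finset V)) + 1 ≤ imIn G A := by
  have huv : G.Adj u v := (mem_Nb.1 (hNu ▸ mem_singleton_self v)).2
  have hne : u ≠ v := huv.ne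
  obtain ⟨S, hSA, hcard, him⟩ := imIn_witness (G := G) (A \ ({u, v} : Finset V))
  have hSsub : S ⊆ A := hSA.trans (sdiff_subset)
  have huS : u ∉ S := fun h => (mem_sdiff.1 (hSA h)).2 (by simp)
  have hvS : v ∉ S := fun h => (mem_sdiff.1 (hSA h)).2 (by simp)
  have hadjU : ∀ x ∈ S, ¬ G.Adj u x := by
    intro x hx hadj
    have : x ∈ Nb G A u := mem_Nb.2 ⟨hSsub hx, hadj⟩
    rw [hNu, mem_singleton] at this
    exact hvS (this ▸ hx)
  have hadjV : ∀ x ∈ S, ¬ G.Adj v x := by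
    intro x hx hadj
    have : x ∈ Nb G A v := mem_Nb.2 ⟨hSsub hx, hadj⟩
    rw [hNv, mem_singleton] at this
    exact huS (this ▸ hx)
  apply le_imIn (insert u (insert v S)) ?_ ?_ ?_
  · intro x hx
    rcases mem_insert.1 hx with rfl | hx
    · exact hu
    · rcases mem_insert.1 hx with rfl | hx
      · exact hv
      · exact hSsub hx
  · rw [card_insert_of_notMem (by simp [hne, huS]), card_insert_of_notMem hvS, hcard]
    ring
  · intro x hx
    rcases mem_insert.1 hx with rfl | hx'
    · refine ⟨v, by simp, huv, ?_⟩
      intro z hz hadj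
      rcases mem_insert.1 hz with rfl | hz'
      · exact absurd hadj (G.irrefl)
      · rcases mem_insert.1 hz' with rfl | hz''
        · rfl
        · exact absurd hadj (hadjU z hz'')
    · rcases mem_insert.1 hx' with rfl | hx''
      · refine ⟨u, by simp, huv.symm, ?_⟩
        intro z hz hadj
        rcases mem_insert.1 hz with rfl | hz'
        · rfl
        · rcases mem_insert.1 hz' with rfl | hz''
          · exact absurd hadj (G.irrefl)
          · exact absurd hadj (hadjV z hz'')
      · obtain ⟨y, hyS, hadj, huniq⟩ := him x hx''
        refine ⟨y, by simp [hyS], hadj, ?_⟩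
        intro z hz hadjz
        rcases mem_insert.1 hz with rfl | hz'
        · exact absurd hadjz.symm (hadjU x hx'')
        · rcases mem_insert.1 hz' with rfl | hz''
          · exact absurd hadjz.symm (hadjV x hx'')
          · exact huniq z hz'' hadjz

lemma r_le_q : (2:ℝ) ^ (-(49/100) : ℝ) ≤ 713/1000 := by
  have h0 : (0:ℝ) ≤ 713/1000 := by norm_num
  apply le_of_pow_le_pow_left₀ (n := 100) (by norm_num) h0
  have e1 : ((2:ℝ) ^ (-(49/100) : ℝ)) ^ (100:ℕ) = (2:ℝ) ^ ((-(49/100) : ℝ) * 100) := by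
    rw [← Real.rpow_natCast ((2:ℝ) ^ (-(49/100) : ℝ)) 100, ← Real.rpow_mul (by norm_num)]
    norm_num
  rw [e1]
  have e2 : ((-(49/100) : ℝ) * 100) = ((-49 : ℤ) : ℝ) := by norm_num
  rw [e2, Real.rpow_intCast]
  have e3 : (2:ℝ) ^ (-49 : ℤ) = ((2:ℝ) ^ (49:ℕ))⁻¹ := by
    rw [zpow_neg]
    norm_num
  rw [e3]
  rw [inv_le_iff_one_le_mul₀ (by positivity)]
  norm_num

lemma kqk : ∀ k : ℕ, 5 ≤ k → (k:ℝ) * (713/1000)^k ≤ 1 := by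
  intro k hk
  induction k, hk using Nat.le_induction with
  | base => norm_num
  | succ k hk ih =>
    have hq : (0:ℝ) ≤ (713/1000:ℝ)^k := by positivity
    have h1 : ((k:ℝ)+1) * (713/1000) ≤ k := by
      have : (5:ℝ) ≤ k := by exact_mod_cast hk
      nlinarith
    have e : ((k+1:ℕ):ℝ) * (713/1000)^(k+1) = (((k:ℝ)+1) * (713/1000)) * (713/1000)^k := by
      push_cast; ring
    rw [e]
    calc (((k:ℝ)+1) * (713/1000)) * (713/1000)^k ≤ (k:ℝ) * (713/1000)^k :=
          mul_le_mul_of_nonneg_right h1 hq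
      _ ≤ 1 := ih

lemma phi_step {c' c i' i : ℝ} (k : ℕ) (hc : c' + k ≤ c) (hi : i' ≤ i) :
    (2:ℝ) ^ ((49/100) * c' + (1/50) * i') ≤ 2 ^ ((49/100) * c + (1/50) * i) * (713/1000)^k := by
  have h1 : (2:ℝ) ^ ((49/100) * c' + (1/50) * i')
      ≤ 2 ^ (((49/100) * c + (1/50) * i) + (-(49/100)) * k) := by
    apply Real.rpow_le_rpow_of_exponent_le (by norm_num)
    linarith
  have h2 : (2:ℝ) ^ (((49/100) * c + (1/50) * i) + (-(49/100)) * (k:ℝ))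
      = 2 ^ ((49/100) * c + (1/50) * i) * ((2:ℝ) ^ (-(49/100):ℝ)) ^ (k:ℕ) := by
    rw [Real.rpow_add (by norm_num)]
    congr 1
    rw [← Real.rpow_natCast ((2:ℝ) ^ (-(49/100):ℝ)) k, ← Real.rpow_mul (by norm_num)]
  rw [h2] at h1
  apply h1.trans
  apply mul_le_mul_of_nonneg_left _ (by positivity)
  exact pow_le_pow_left₀ (by positivity) r_le_q k

lemma phi_drop {c' c i' i : ℝ} (hc : c' + 2 ≤ c) (hi : i' + 1 ≤ i) :
    (2:ℝ) ^ ((49/100) * c' + (1/50) * i') ≤ 2 ^ ((49/100) * c + (1/50) * i) * (1/2) := by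
  have h1 : (2:ℝ) ^ ((49/100) * c' + (1/50) * i')
      ≤ 2 ^ (((49/100) * c + (1/50) * i) + (-1)) := by
    apply Real.rpow_le_rpow_of_exponent_le (by norm_num)
    linarith
  apply h1.trans
  rw [Real.rpow_add (by norm_num), Real.rpow_neg_one]
  norm_num


theorem main_bound (G : SimpleGraph V) (hG : G.CliqueFree 3) :
    ∀ (n : ℕ) (A : Finset V), A.card ≤ n →
      (misIn G A : ℝ) ≤ 2 ^ ((49/100 : ℝ) * A.card + (1/50) * imIn G A) := by
  intro n
  induction n with
  | zero =>
    intro A hA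
    have hA0 : A = ∅ := card_eq_zero.1 (by omega)
    subst hA0
    have h1 : (misIn G (∅ : Finset V) : ℝ) ≤ 1 := by exact_mod_cast misIn_empty_le
    apply h1.trans
    have e : (1:ℝ) = 2 ^ (0:ℝ) := by rw [Real.rpow_zero]
    rw [e]
    apply Real.rpow_le_rpow_of_exponent_le (by norm_num)
    positivity
  | succ n IH =>
    intro A hA
    rcases Nat.lt_or_ge A.card (n+1) with hlt | hge
    · exact IH A (by omega)
    have hcard : A.card = n + 1 := by omega
    have hAne : A.Nonempty := card_pos.1 (by omega)
    obtain ⟨v, hvA, hvmin⟩ := exists_min_image A (fun x => (Nb G A x).card) hAne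
    set d := (Nb G A v).card with hd
    set EA := ((49/100 : ℝ) * A.card + (1/50) * imIn G A) with hEA
    have hEApos : (0:ℝ) < 2 ^ EA := Real.rpow_pos_of_pos (by norm_num) _
    have branch_bound : ∀ (u : V) (F : Finset V), u ∈ A → F ⊆ A →
        (∀ f ∈ F, ¬ G.Adj u f ∧ f ≠ u) → ∀ k : ℕ, 1 ≤ k →
        k ≤ 1 + (Nb G A u).card + F.card →
        (cnt (fun s => MaxIn G A s ∧ u ∈ s ∧ ∀ f ∈ F, f ∉ s) : ℝ)
          ≤ 2 ^ EA * (713/1000)^k := by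
      intro u F huA hFA hF k hk1 hk
      set X := insert u (Nb G A u) ∪ F with hX
      have hXA : X ⊆ A := by
        intro x hx
        rcases mem_union.1 hx with h | h
        · rcases mem_insert.1 h with rfl | h
          · exact huA
          · exact (mem_Nb.1 h).1
        · exact hFA h
      have huNb : u ∉ Nb G A u := fun h => G.irrefl (mem_Nb.1 h).2
      have hdisj : Disjoint (insert u (Nb G A u)) F := by
        rw [disjoint_right]
        intro f hf hfi
        rcases mem_insert.1 hfi with rfl | h
        · exact (hF f hf).2 rfl
        · exact (hF f hf).1 (mem_Nb.1 h).2
      have hcX : X.card = 1 + (Nb G A u).card + F.card := by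
        rw [hX, card_union_of_disjoint hdisj, card_insert_of_notMem huNb]
        omega
      have hdel := card_del (hYA := hXA) (hYX := Finset.Subset.refl X)
      have hsz : (A \ X).card + k ≤ A.card := by omega
      have hc := branch_count A u F huA hF
      have hIH : (misIn G (A \ X) : ℝ)
          ≤ 2 ^ ((49/100:ℝ) * (A \ X).card + (1/50) * imIn G (A \ X)) := IH _ (by omega)
      calc (cnt (fun s => MaxIn G A s ∧ u ∈ s ∧ ∀ f ∈ F, f ∉ s) : ℝ)
          ≤ (misIn G (A \ X) : ℝ) := by exact_mod_cast hc
        _ ≤ 2 ^ ((49/100:ℝ) * (A \ X).card + (1/50) * imIn G (A \ X)) := hIH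
        _ ≤ 2 ^ EA * (713/1000)^k := by
            apply phi_step k
            · exact_mod_cast hsz
            · exact_mod_cast imIn_mono (sdiff_subset : A \ X ⊆ A)
    have vclass_bound : ∀ k : ℕ, 1 ≤ k → k ≤ 1 + d →
        (cnt (fun s => MaxIn G A s ∧ ∀ x ∈ Nb G A v, x ∉ s) : ℝ)
          ≤ 2 ^ EA * (713/1000)^k := by
      intro k hk1 hkd
      have h1 : (cnt (fun s => MaxIn G A s ∧ ∀ x ∈ Nb G A v, x ∉ s) : ℝ)
          ≤ (cnt (fun s => MaxIn G A s ∧ v ∈ s ∧ ∀ f ∈ (∅ : Finset V), f ∉ s) : ℝ) := by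
        apply Nat.cast_le.2
        apply cnt_mono
        intro s hs
        exact ⟨hs.1, forced_mem hvA hs.1 hs.2, by simp⟩
      apply h1.trans
      apply branch_bound v ∅ hvA (empty_subset _) (by simp) k hk1
      simp only [card_empty]
      omega
    have hcases : d = 0 ∨ d = 1 ∨ d = 2 ∨ d = 3 ∨ 4 ≤ d := by omega
    rcases hcases with hd0 | hd1 | hd2 | hd3 | hd4
    · -- d = 0
      have hNb0 : Nb G A v = ∅ := card_eq_zero.1 hd0
      have h1 : (misIn G A : ℝ)
          ≤ (cnt (fun s => MaxIn G A s ∧ ∀ x ∈ Nb G A v, x ∉ s) : ℝ) := by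
        apply Nat.cast_le.2
        apply cnt_mono
        intro s hs
        exact ⟨hs, by rw [hNb0]; simp⟩
      have h2 := vclass_bound 1 (by norm_num) (by omega)
      have hq : (713/1000:ℝ)^1 ≤ 1 := by norm_num
      nlinarith
    · -- d = 1
      obtain ⟨u, hNbv⟩ := card_eq_one.1 hd1
      have huNb : u ∈ Nb G A v := by rw [hNbv]; simp
      have huA : u ∈ A := (mem_Nb.1 huNb).1
      have hvu : G.Adj v u := (mem_Nb.1 huNb).2
      have hvNbu : v ∈ Nb G A u := mem_Nb.2 ⟨hvA, hvu.symm⟩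
      have hsplit : misIn G A = cnt (fun s => MaxIn G A s ∧ u ∈ s)
          + cnt (fun s => MaxIn G A s ∧ ¬ u ∈ s) :=
        cnt_split (fun s => MaxIn G A s) (fun s => u ∈ s)
      have hC2mono : cnt (fun s => MaxIn G A s ∧ ¬ u ∈ s)
          ≤ cnt (fun s => MaxIn G A s ∧ ∀ x ∈ Nb G A v, x ∉ s) := by
        apply cnt_mono
        intro s hs
        refine ⟨hs.1, fun x hx => ?_⟩
        rw [hNbv, mem_singleton] at hx
        subst hx
        exact hs.2
      by_cases hdu : 2 ≤ (Nb G A u).card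
      · -- pendant into a vertex of degree ≥ 2
        have hb1 : (cnt (fun s => MaxIn G A s ∧ u ∈ s) : ℝ)
            ≤ 2 ^ EA * (713/1000)^3 := by
          have h1 : (cnt (fun s => MaxIn G A s ∧ u ∈ s) : ℝ)
              ≤ (cnt (fun s => MaxIn G A s ∧ u ∈ s ∧ ∀ f ∈ (∅ : Finset V), f ∉ s) : ℝ) := by
            apply Nat.cast_le.2
            apply cnt_mono
            intro s hs
            exact ⟨hs.1, hs.2, by simp⟩
          apply h1.trans
          apply branch_bound u ∅ huA (empty_subset _) (by simp) 3 (by norm_num)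
          simp only [card_empty]
          omega
        have hb2 : (cnt (fun s => MaxIn G A s ∧ ¬ u ∈ s) : ℝ)
            ≤ 2 ^ EA * (713/1000)^2 :=
          le_trans (by exact_mod_cast hC2mono) (vclass_bound 2 (by norm_num) (by omega))
        have hcast : (misIn G A : ℝ) = (cnt (fun s => MaxIn G A s ∧ u ∈ s) : ℝ)
            + (cnt (fun s => MaxIn G A s ∧ ¬ u ∈ s) : ℝ) := by
          exact_mod_cast hsplit
        have hq : (713/1000:ℝ)^3 + (713/1000)^2 ≤ 1 := by norm_num
        nlinarith
      · -- isolated edge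
        have hNu : Nb G A u = {v} := by
          apply Finset.eq_singleton_iff_unique_mem.2 ⟨hvNbu, ?_⟩
          intro x hx
          exact Finset.card_le_one.1 (by omega) x hx v hvNbu
        have hvne : u ≠ v := hvu.ne.symm
        have hpair : ({u, v} : Finset V) ⊆ A := by
          intro x hx
          rcases mem_insert.1 hx with rfl | hx
          · exact huA
          · rw [mem_singleton] at hx; subst hx; exact hvA
        have hpaircard : ({u, v} : Finset V).card = 2 := card_pair hvne
        have hdrop := iso_edge_drop huA hvA hNu hNbv
        have hdel := card_del (hYA := hpair) (hYX := Finset.Subset.refl _)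
        have key2 : (misIn G (A \ ({u, v} : Finset V)) : ℝ) ≤ 2 ^ EA * (1/2) := by
          have hIH : (misIn G (A \ ({u, v} : Finset V)) : ℝ)
              ≤ 2 ^ ((49/100:ℝ) * (A \ ({u, v} : Finset V)).card
                  + (1/50) * imIn G (A \ ({u, v} : Finset V))) := IH _ (by omega)
          apply hIH.trans
          apply phi_drop
          · have h2 : (A \ ({u, v} : Finset V)).card + 2 ≤ A.card := by omega
            push_cast
            exact_mod_cast h2
          · exact_mod_cast hdrop
        have hb1 : (cnt (fun s => MaxIn G A s ∧ u ∈ s) : ℝ) ≤ 2 ^ EA * (1/2) := by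
          have h1 : cnt (fun s => MaxIn G A s ∧ u ∈ s)
              ≤ misIn G (A \ (insert u (Nb G A u) ∪ ∅)) := by
            apply le_trans _ (branch_count A u ∅ huA (by simp))
            apply cnt_mono
            exact fun s hs => ⟨hs.1, hs.2, by simp⟩
          rw [union_empty, hNu] at h1
          exact (by exact_mod_cast h1 : (cnt (fun s => MaxIn G A s ∧ u ∈ s) : ℝ)
            ≤ (misIn G (A \ ({u, v} : Finset V)) : ℝ)).trans key2
        have hb2 : (cnt (fun s => MaxIn G A s ∧ ¬ u ∈ s) : ℝ) ≤ 2 ^ EA * (1/2) := by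
          have h1 : cnt (fun s => MaxIn G A s ∧ ¬ u ∈ s)
              ≤ misIn G (A \ (insert v (Nb G A v) ∪ ∅)) := by
            apply le_trans _ (branch_count A v ∅ hvA (by simp))
            apply cnt_mono
            intro s hs
            refine ⟨hs.1, forced_mem hvA hs.1 ?_, by simp⟩
            intro x hx
            rw [hNbv, mem_singleton] at hx
            subst hx
            exact hs.2
          rw [union_empty, hNbv] at h1
          have hps : ({v, u} : Finset V) = ({u, v} : Finset V) := pair_comm v u
          rw [hps] at h1
          exact (by exact_mod_cast h1 : (cnt (fun s => MaxIn G A s ∧ ¬ u ∈ s) : ℝ)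
            ≤ (misIn G (A \ ({u, v} : Finset V)) : ℝ)).trans key2
        have hcast : (misIn G A : ℝ) = (cnt (fun s => MaxIn G A s ∧ u ∈ s) : ℝ)
            + (cnt (fun s => MaxIn G A s ∧ ¬ u ∈ s) : ℝ) := by
          exact_mod_cast hsplit
        linarith
    · -- d = 2
      obtain ⟨u, w, huw, hNbv⟩ := card_eq_two.1 hd2
      have huNb : u ∈ Nb G A v := by rw [hNbv]; simp
      have hwNb : w ∈ Nb G A v := by rw [hNbv]; simp
      have huA : u ∈ A := (mem_Nb.1 huNb).1
      have hwA : w ∈ A := (mem_Nb.1 hwNb).1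
      have hvu : G.Adj v u := (mem_Nb.1 huNb).2
      have hvw : G.Adj v w := (mem_Nb.1 hwNb).2
      have hnwu : ¬ G.Adj w u := nadj_of_common hG hvw hvu
      have hdu : d ≤ (Nb G A u).card := hvmin u huA
      have hdw : d ≤ (Nb G A w).card := hvmin w hwA
      have hsplit1 : misIn G A = cnt (fun s => MaxIn G A s ∧ u ∈ s)
          + cnt (fun s => MaxIn G A s ∧ ¬ u ∈ s) :=
        cnt_split (fun s => MaxIn G A s) (fun s => u ∈ s)
      have hsplit2 := cnt_split (fun s => MaxIn G A s ∧ ¬ u ∈ s) (fun s => w ∈ s)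
      have hb1 : (cnt (fun s => MaxIn G A s ∧ u ∈ s) : ℝ) ≤ 2 ^ EA * (713/1000)^3 := by
        have h1 : (cnt (fun s => MaxIn G A s ∧ u ∈ s) : ℝ)
            ≤ (cnt (fun s => MaxIn G A s ∧ u ∈ s ∧ ∀ f ∈ (∅ : Finset V), f ∉ s) : ℝ) := by
          apply Nat.cast_le.2
          apply cnt_mono
          intro s hs
          exact ⟨hs.1, hs.2, by simp⟩
        apply h1.trans
        apply branch_bound u ∅ huA (empty_subset _) (by simp) 3 (by norm_num)
        simp only [card_empty]
        omega
      have hb2 : (cnt (fun s => (MaxIn G A s ∧ ¬ u ∈ s) ∧ w ∈ s) : ℝ)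
          ≤ 2 ^ EA * (713/1000)^4 := by
        have h1 : (cnt (fun s => (MaxIn G A s ∧ ¬ u ∈ s) ∧ w ∈ s) : ℝ)
            ≤ (cnt (fun s => MaxIn G A s ∧ w ∈ s ∧ ∀ f ∈ ({u} : Finset V), f ∉ s) : ℝ) := by
          apply Nat.cast_le.2
          apply cnt_mono
          intro s hs
          refine ⟨hs.1.1, hs.2, fun f hf => ?_⟩
          rw [mem_singleton] at hf
          subst hf
          exact hs.1.2
        apply h1.trans
        apply branch_bound w {u} hwA (by simp [huA]) ?_ 4 (by norm_num) ?_
        · intro f hf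
          rw [mem_singleton] at hf
          subst hf
          exact ⟨hnwu, huw⟩
        · simp only [card_singleton]
          omega
      have hb3 : (cnt (fun s => (MaxIn G A s ∧ ¬ u ∈ s) ∧ ¬ w ∈ s) : ℝ)
          ≤ 2 ^ EA * (713/1000)^3 := by
        have h1 : (cnt (fun s => (MaxIn G A s ∧ ¬ u ∈ s) ∧ ¬ w ∈ s) : ℝ)
            ≤ (cnt (fun s => MaxIn G A s ∧ ∀ x ∈ Nb G A v, x ∉ s) : ℝ) := by
          apply Nat.cast_le.2
          apply cnt_mono
          intro s hs
          refine ⟨hs.1.1, fun x hx => ?_⟩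
          rw [hNbv] at hx
          rcases mem_insert.1 hx with rfl | hx
          · exact hs.1.2
          · rw [mem_singleton] at hx; subst hx; exact hs.2
        exact h1.trans (vclass_bound 3 (by norm_num) (by omega))
      have hcast : (misIn G A : ℝ) = (cnt (fun s => MaxIn G A s ∧ u ∈ s) : ℝ)
          + ((cnt (fun s => (MaxIn G A s ∧ ¬ u ∈ s) ∧ w ∈ s) : ℝ)
          + (cnt (fun s => (MaxIn G A s ∧ ¬ u ∈ s) ∧ ¬ w ∈ s) : ℝ)) := by
        rw [hsplit2] at hsplit1
        exact_mod_cast hsplit1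
      have hq : (713/1000:ℝ)^3 + (713/1000)^4 + (713/1000)^3 ≤ 1 := by norm_num
      nlinarith
    · -- d = 3
      obtain ⟨u, w, x, huw, hux, hwx, hNbv⟩ := card_eq_three.1 hd3
      have huNb : u ∈ Nb G A v := by rw [hNbv]; simp
      have hwNb : w ∈ Nb G A v := by rw [hNbv]; simp
      have hxNb : x ∈ Nb G A v := by rw [hNbv]; simp
      have huA : u ∈ A := (mem_Nb.1 huNb).1
      have hwA : w ∈ A := (mem_Nb.1 hwNb).1
      have hxA : x ∈ A := (mem_Nb.1 hxNb).1
      have hvu : G.Adj v u := (mem_Nb.1 huNb).2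
      have hvw : G.Adj v w := (mem_Nb.1 hwNb).2
      have hvx : G.Adj v x := (mem_Nb.1 hxNb).2
      have hnwu : ¬ G.Adj w u := nadj_of_common hG hvw hvu
      have hnxu : ¬ G.Adj x u := nadj_of_common hG hvx hvu
      have hnxw : ¬ G.Adj x w := nadj_of_common hG hvx hvw
      have hdu : d ≤ (Nb G A u).card := hvmin u huA
      have hdw : d ≤ (Nb G A w).card := hvmin w hwA
      have hdx : d ≤ (Nb G A x).card := hvmin x hxA
      have hsplit1 : misIn G A = cnt (fun s => MaxIn G A s ∧ u ∈ s)
          + cnt (fun s => MaxIn G A s ∧ ¬ u ∈ s) :=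
        cnt_split (fun s => MaxIn G A s) (fun s => u ∈ s)
      have hsplit2 := cnt_split (fun s => MaxIn G A s ∧ ¬ u ∈ s) (fun s => w ∈ s)
      have hsplit3 := cnt_split (fun s => (MaxIn G A s ∧ ¬ u ∈ s) ∧ ¬ w ∈ s)
        (fun s => x ∈ s)
      have hb1 : (cnt (fun s => MaxIn G A s ∧ u ∈ s) : ℝ) ≤ 2 ^ EA * (713/1000)^4 := by
        have h1 : (cnt (fun s => MaxIn G A s ∧ u ∈ s) : ℝ)
            ≤ (cnt (fun s => MaxIn G A s ∧ u ∈ s ∧ ∀ f ∈ (∅ : Finset V), f ∉ s) : ℝ) := by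
          apply Nat.cast_le.2
          apply cnt_mono
          intro s hs
          exact ⟨hs.1, hs.2, by simp⟩
        apply h1.trans
        apply branch_bound u ∅ huA (empty_subset _) (by simp) 4 (by norm_num)
        simp only [card_empty]
        omega
      have hb2 : (cnt (fun s => (MaxIn G A s ∧ ¬ u ∈ s) ∧ w ∈ s) : ℝ)
          ≤ 2 ^ EA * (713/1000)^5 := by
        have h1 : (cnt (fun s => (MaxIn G A s ∧ ¬ u ∈ s) ∧ w ∈ s) : ℝ)
            ≤ (cnt (fun s => MaxIn G A s ∧ w ∈ s ∧ ∀ f ∈ ({u} : Finset V), f ∉ s) : ℝ) := by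
          apply Nat.cast_le.2
          apply cnt_mono
          intro s hs
          refine ⟨hs.1.1, hs.2, fun f hf => ?_⟩
          rw [mem_singleton] at hf
          subst hf
          exact hs.1.2
        apply h1.trans
        apply branch_bound w {u} hwA (by simp [huA]) ?_ 5 (by norm_num) ?_
        · intro f hf
          rw [mem_singleton] at hf
          subst hf
          exact ⟨hnwu, huw⟩
        · simp only [card_singleton]
          omega
      have hb3 : (cnt (fun s => ((MaxIn G A s ∧ ¬ u ∈ s) ∧ ¬ w ∈ s) ∧ x ∈ s) : ℝ)
          ≤ 2 ^ EA * (713/1000)^6 := by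
        have h1 : (cnt (fun s => ((MaxIn G A s ∧ ¬ u ∈ s) ∧ ¬ w ∈ s) ∧ x ∈ s) : ℝ)
            ≤ (cnt (fun s =>
                MaxIn G A s ∧ x ∈ s ∧ ∀ f ∈ ({u, w} : Finset V), f ∉ s) : ℝ) := by
          apply Nat.cast_le.2
          apply cnt_mono
          intro s hs
          refine ⟨hs.1.1.1, hs.2, fun f hf => ?_⟩
          rcases mem_insert.1 hf with rfl | hf
          · exact hs.1.1.2
          · rw [mem_singleton] at hf; subst hf; exact hs.1.2
        apply h1.trans
        apply branch_bound x {u, w} hxA ?_ ?_ 6 (by norm_num) ?_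
        · intro f hf
          rcases mem_insert.1 hf with rfl | hf
          · exact huA
          · rw [mem_singleton] at hf; subst hf; exact hwA
        · intro f hf
          rcases mem_insert.1 hf with rfl | hf
          · exact ⟨hnxu, hux⟩
          · rw [mem_singleton] at hf; subst hf; exact ⟨hnxw, hwx⟩
        · have hc2 : ({u, w} : Finset V).card = 2 := card_pair huw
          omega
      have hb4 : (cnt (fun s => ((MaxIn G A s ∧ ¬ u ∈ s) ∧ ¬ w ∈ s) ∧ ¬ x ∈ s) : ℝ)
          ≤ 2 ^ EA * (713/1000)^4 := by
        have h1 : (cnt (fun s => ((MaxIn G A s ∧ ¬ u ∈ s) ∧ ¬ w ∈ s) ∧ ¬ x ∈ s) : ℝ)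
            ≤ (cnt (fun s => MaxIn G A s ∧ ∀ y ∈ Nb G A v, y ∉ s) : ℝ) := by
          apply Nat.cast_le.2
          apply cnt_mono
          intro s hs
          refine ⟨hs.1.1.1, fun y hy => ?_⟩
          rw [hNbv] at hy
          rcases mem_insert.1 hy with rfl | hy
          · exact hs.1.1.2
          · rcases mem_insert.1 hy with rfl | hy
            · exact hs.1.2
            · rw [mem_singleton] at hy; subst hy; exact hs.2
        exact h1.trans (vclass_bound 4 (by norm_num) (by omega))
      have hcast : (misIn G A : ℝ) = (cnt (fun s => MaxIn G A s ∧ u ∈ s) : ℝ)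
          + ((cnt (fun s => (MaxIn G A s ∧ ¬ u ∈ s) ∧ w ∈ s) : ℝ)
          + ((cnt (fun s => ((MaxIn G A s ∧ ¬ u ∈ s) ∧ ¬ w ∈ s) ∧ x ∈ s) : ℝ)
          + (cnt (fun s => ((MaxIn G A s ∧ ¬ u ∈ s) ∧ ¬ w ∈ s) ∧ ¬ x ∈ s) : ℝ))) := by
        rw [hsplit3] at hsplit2
        rw [hsplit2] at hsplit1
        exact_mod_cast hsplit1
      have hq : (713/1000:ℝ)^4 + (713/1000)^5 + (713/1000)^6 + (713/1000)^4 ≤ 1 := by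
        norm_num
      nlinarith
    · -- d ≥ 4
      have hub : misIn G A ≤ ∑ u' ∈ insert v (Nb G A v),
          cnt (fun s => MaxIn G A s ∧ u' ∈ s) := by
        apply cnt_le_sum
        intro s hs
        by_cases hx : ∃ x ∈ Nb G A v, x ∈ s
        · obtain ⟨x, hx1, hx2⟩ := hx
          exact ⟨x, mem_insert_of_mem hx1, hs, hx2⟩
        · push_neg at hx
          exact ⟨v, mem_insert_self _ _, hs, forced_mem hvA hs hx⟩
      have hbound : ∀ u' ∈ insert v (Nb G A v),
          (cnt (fun s => MaxIn G A s ∧ u' ∈ s) : ℝ) ≤ 2 ^ EA * (713/1000)^(d+1) := by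
        intro u' hu'
        have hu'A : u' ∈ A := by
          rcases mem_insert.1 hu' with rfl | h
          · exact hvA
          · exact (mem_Nb.1 h).1
        have hdeg : d ≤ (Nb G A u').card := by
          rcases mem_insert.1 hu' with rfl | h
          · exact le_refl _
          · exact hvmin u' (mem_Nb.1 h).1
        have h1 : (cnt (fun s => MaxIn G A s ∧ u' ∈ s) : ℝ)
            ≤ (cnt (fun s => MaxIn G A s ∧ u' ∈ s ∧ ∀ f ∈ (∅ : Finset V), f ∉ s) : ℝ) := by
          apply Nat.cast_le.2
          apply cnt_mono
          intro s hs
          exact ⟨hs.1, hs.2, by simp⟩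
        apply h1.trans
        apply branch_bound u' ∅ hu'A (empty_subset _) (by simp) (d+1) (by omega)
        simp only [card_empty]
        omega
      have hvNb : v ∉ Nb G A v := fun h => G.irrefl (mem_Nb.1 h).2
      have hcardins : (insert v (Nb G A v)).card = d + 1 := by
        rw [card_insert_of_notMem hvNb]
      have h1 : (misIn G A : ℝ) ≤ ∑ u' ∈ insert v (Nb G A v),
          (cnt (fun s => MaxIn G A s ∧ u' ∈ s) : ℝ) := by
        calc (misIn G A : ℝ) ≤ ((∑ u' ∈ insert v (Nb G A v),
            cnt (fun s => MaxIn G A s ∧ u' ∈ s) : ℕ) : ℝ) := by exact_mod_cast hub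
          _ = _ := by push_cast; rfl
      have h2 : ∑ u' ∈ insert v (Nb G A v),
          (cnt (fun s => MaxIn G A s ∧ u' ∈ s) : ℝ)
          ≤ (insert v (Nb G A v)).card • (2 ^ EA * (713/1000)^(d+1)) :=
        Finset.sum_le_card_nsmul _ _ _ hbound
      rw [hcardins, nsmul_eq_mul] at h2
      have hkq := kqk (d+1) (by omega)
      have h3 : ((d+1 : ℕ):ℝ) * (2 ^ EA * (713/1000)^(d+1)) ≤ 2 ^ EA := by
        have hmm := mul_le_mul_of_nonneg_left hkq (le_of_lt hEApos)
        push_cast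
        push_cast at hmm
        nlinarith
      calc (misIn G A : ℝ) ≤ _ := h1
        _ ≤ ((d+1 : ℕ):ℝ) * (2 ^ EA * (713/1000)^(d+1)) := by
            push_cast
            push_cast at h2
            linarith
        _ ≤ 2 ^ EA := h3


lemma maxIn_of_isMax {s : Set V} (hs : IsMaxIndepSet G s) :
    MaxIn G (univ : Finset V) (Set.toFinite s).toFinset := by
  refine ⟨subset_univ _, ?_, ?_⟩
  · intro x hx y hy
    rw [Set.Finite.mem_toFinset] at hx hy
    exact hs.1 hx hy
  · intro z _ hz
    by_contra hno
    push_neg at hno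
    have hzs : z ∉ s := fun h => hz ((Set.toFinite s).mem_toFinset.2 h)
    have hind : IsIndepSet G (s ∪ {z}) := by
      intro x hx y hy
      rcases hx with hx | hx
      · rcases hy with hy | hy
        · exact hs.1 hx hy
        · rw [Set.mem_singleton_iff] at hy
          subst hy
          intro hadj
          exact hno x ((Set.toFinite s).mem_toFinset.2 hx) hadj.symm
      · rw [Set.mem_singleton_iff] at hx
        subst hx
        rcases hy with hy | hy
        · intro hadj
          exact hno y ((Set.toFinite s).mem_toFinset.2 hy) hadj
        · rw [Set.mem_singleton_iff] at hy
          subst hy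
          exact G.irrefl
    have heq := hs.2 (s ∪ {z}) hind Set.subset_union_left
    have hz2 : z ∈ s := by
      rw [heq]
      exact Set.mem_union_right _ rfl
    exact hzs hz2

lemma mis_le_misIn_univ (G : SimpleGraph V) : mis G ≤ misIn G (univ : Finset V) := by
  have h1 : mis G ≤ Nat.card {t : Finset V // MaxIn G (univ : Finset V) t} := by
    unfold mis
    apply Nat.card_le_card_of_injective (fun p : {s : Set V // IsMaxIndepSet G s} =>
      (⟨(Set.toFinite p.1).toFinset, maxIn_of_isMax p.2⟩ :
        {t : Finset V // MaxIn G (univ : Finset V) t}))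
    intro p q hpq
    simp only [Subtype.mk.injEq] at hpq
    apply Subtype.ext
    rwa [Set.Finite.toFinset_inj] at hpq
  have h2 : Nat.card {t : Finset V // MaxIn G (univ : Finset V) t} = misIn G univ := by
    unfold misIn cnt
    rw [Nat.card_eq_fintype_card, Fintype.card_subtype]
  omega

end Stab

theorem stability_im :
    ∃ c : ℝ, 0 < c ∧ ∀ ε : ℝ, 0 < ε → ∃ δ : ℝ, 0 < δ ∧ c * ε ≤ δ ∧
      ∀ (V : Type) [Fintype V] (G : SimpleGraph V), G.CliqueFree 3 →
        (im G : ℝ) < (1 - ε) * (Fintype.card V : ℝ) / 2 →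
        Real.logb 2 (mis G) < (1 / 2 - δ) * (Fintype.card V : ℝ) := by
  refine ⟨1/100, by norm_num, fun ε hε => ⟨ε/100, by positivity, by linarith, ?_⟩⟩
  intro V _ G hG him
  set n := Fintype.card V with hn
  have him0 : (0:ℝ) ≤ (im G : ℝ) := Nat.cast_nonneg _
  have hn0 : (0:ℝ) ≤ (n : ℝ) := Nat.cast_nonneg _
  by_cases hvac : (1 - ε) * (n : ℝ) / 2 ≤ 0
  · exact absurd him (by linarith)
  push_neg at hvac
  have hnpos : (0:ℝ) < n := by nlinarith
  have hε1 : ε < 1 := by nlinarith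
  -- main bound
  have hmain := Stab.main_bound G hG n (univ : Finset V) (by rw [card_univ])
  rw [card_univ, ← hn] at hmain
  have hm1 : (mis G : ℝ) ≤ (Stab.misIn G (univ : Finset V) : ℝ) := by
    exact_mod_cast Stab.mis_le_misIn_univ G
  have hm2 : (Stab.imIn G (univ : Finset V) : ℝ) ≤ (im G : ℝ) := by
    exact_mod_cast Stab.imIn_univ_le_im G
  have hchain : (mis G : ℝ) ≤ 2 ^ ((49/100:ℝ) * n + (1/50) * (im G : ℝ)) := by
    apply hm1.trans
    apply hmain.trans
    apply Real.rpow_le_rpow_of_exponent_le (by norm_num)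
    linarith
  have hfinal : (49/100:ℝ) * n + (1/50) * (im G : ℝ) < (1/2 - ε/100) * n := by
    nlinarith
  by_cases hmis : mis G = 0
  · rw [hmis]
    push_cast
    rw [Real.logb_zero]
    nlinarith
  · have hpos : (0:ℝ) < (mis G : ℝ) := by
      have : 0 < mis G := Nat.pos_of_ne_zero hmis
      exact_mod_cast this
    have hlog : Real.logb 2 (mis G) ≤ (49/100:ℝ) * n + (1/50) * (im G : ℝ) :=
      (Real.logb_le_iff_le_rpow (by norm_num) hpos).2 hchain
    linarith
end

section
/- For every bipartite graph G with parts X and Y, the number of maximal independent sets of G is at most the number of irredundant subsets of X; that is, mis(G) ≤ irr(G). -/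
lemma nbhd_mono {V : Type*} (G : SimpleGraph V) {A B : Set V} (h : A ⊆ B) :
    nbhd G A ⊆ nbhd G B := by
  rintro z ⟨x, hx, hadj⟩; exact ⟨x, h hx, hadj⟩

theorem mis_le_irr {V : Type*} [Fintype V] (G : SimpleGraph V) (X Y : Finset V)
    (hdisj : Disjoint X Y) (hcover : ∀ v : V, v ∈ X ∨ v ∈ Y)
    (hbip : ∀ a b : V, G.Adj a b → (a ∈ X ∧ b ∈ Y) ∨ (a ∈ Y ∧ b ∈ X)) :
    mis G ≤ irr G ↑X := by
  classical
  have hdis : ∀ v : V, v ∈ X → v ∈ Y → False := by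
    intro v hvX hvY
    exact (Finset.disjoint_left.mp hdisj hvX hvY)
  let recov : Set V → Set V := fun J =>
    {x | x ∈ (↑X : Set V) ∧ ∀ y ∈ ((↑Y : Set V) \ nbhd G J), ¬ G.Adj x y}
      ∪ ((↑Y : Set V) \ nbhd G J)
  have key : ∀ S : Set V, IsMaxIndepSet G S →
      ∃ J : Set V, (J ⊆ (↑X : Set V) ∧ Irredundant G J) ∧ S = recov J := by
    intro S hS
    obtain ⟨hSind, hSmax⟩ := hS
    set A := S ∩ (↑X : Set V) with hAdef
    have hne : {k | ∃ J : Set V, (J ⊆ A ∧ nbhd G J = nbhd G A) ∧ J.ncard = k}.Nonempty :=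
      ⟨A.ncard, A, ⟨subset_rfl, rfl⟩, rfl⟩
    obtain ⟨J, ⟨hJA, hJn⟩, hJcard⟩ := Nat.sInf_mem hne
    have hJX : J ⊆ (↑X : Set V) := fun x hx => (hJA hx).2
    -- Irredundance of J
    have hirr : Irredundant G J := by
      intro x hx hsub
      have heq : nbhd G (J \ {x}) = nbhd G J := by
        apply Set.Subset.antisymm (nbhd_mono G Set.diff_subset)
        rintro z ⟨x', hx', hadj⟩
        by_cases hxx : x' = x
        · subst hxx
          exact hsub hadj
        · exact ⟨x', ⟨hx', hxx⟩, hadj⟩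
      have hmem : (J \ {x}).ncard ∈
          {k | ∃ J' : Set V, (J' ⊆ A ∧ nbhd G J' = nbhd G A) ∧ J'.ncard = k} :=
        ⟨J \ {x}, ⟨Set.diff_subset.trans hJA, heq.trans hJn⟩, rfl⟩
      have hlt : (J \ {x}).ncard < J.ncard :=
        Set.ncard_diff_singleton_lt_of_mem hx (Set.toFinite J)
      have := Nat.sInf_le hmem
      omega
    -- S ∩ Y = Y \ nbhd G A
    have hSY : S ∩ (↑Y : Set V) = (↑Y : Set V) \ nbhd G A := by
      ext y
      constructor
      · rintro ⟨hyS, hyY⟩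
        refine ⟨hyY, ?_⟩
        rintro ⟨x, hxA, hadj⟩
        exact hSind hxA.1 hyS hadj
      · rintro ⟨hyY, hynb⟩
        have hind : IsIndepSet G (insert y S) := by
          intro a ha b hb hadj
          rcases ha with rfl | haS
          · rcases hb with rfl | hbS
            · exact G.loopless.irrefl _ hadj
            · rcases hbip a b hadj with ⟨haX, _⟩ | ⟨_, hbX⟩
              · exact hdis a haX hyY
              · exact hynb ⟨b, ⟨hbS, hbX⟩, hadj.symm⟩
          · rcases hb with rfl | hbS
            · rcases hbip a b hadj with ⟨haX, hbY⟩ | ⟨haY, _⟩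
              · exact hynb ⟨a, ⟨haS, haX⟩, hadj⟩
              · rcases hcover a with haX | haY'
                · exact hdis a haX haY
                · rcases hbip a b hadj with ⟨haX, _⟩ | ⟨_, hbX⟩
                  · exact hdis a haX haY
                  · exact hdis b hbX hyY
            · exact hSind haS hbS hadj
        have := hSmax _ hind (Set.subset_insert y S)
        constructor
        · rw [this]; exact Set.mem_insert y S
        · exact hyY
    -- S = recov J
    refine ⟨J, ⟨hJX, hirr⟩, ?_⟩
    have hYnb : ((↑Y : Set V) \ nbhd G J) = S ∩ (↑Y : Set V) := by
      rw [hSY, hJn]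
    ext v
    constructor
    · intro hvS
      rcases hcover v with hvX | hvY
      · left
        refine ⟨hvX, ?_⟩
        intro y hy hadj
        rw [hYnb] at hy
        exact hSind hvS hy.1 hadj
      · right
        rw [hYnb]
        exact ⟨hvS, hvY⟩
    · rintro (⟨hvX, hv2⟩ | hv)
      · -- show v ∈ S by maximality
        have hind : IsIndepSet G (insert v S) := by
          intro a ha b hb hadj
          rcases ha with rfl | haS
          · rcases hb with rfl | hbS
            · exact G.loopless.irrefl _ hadj
            · rcases hbip a b hadj with ⟨_, hbY⟩ | ⟨haY, _⟩
              · refine hv2 b ?_ hadj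
                rw [hYnb]; exact ⟨hbS, hbY⟩
              · exact hdis a hvX haY
          · rcases hb with rfl | hbS
            · rcases hbip a b hadj with ⟨haX, hbY⟩ | ⟨haY, hbX⟩
              · exact hdis b hvX hbY
              · refine hv2 a ?_ hadj.symm
                rw [hYnb]
                exact ⟨haS, haY⟩
            · exact hSind haS hbS hadj
        have := hSmax _ hind (Set.subset_insert v S)
        rw [this]; exact Set.mem_insert v S
      · rw [hYnb] at hv
        exact hv.1
  -- build injection
  let f : {s : Set V // IsMaxIndepSet G s} →
      {J : Set V // J ⊆ (↑X : Set V) ∧ Irredundant G J} :=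
    fun s => ⟨(key s.1 s.2).choose, (key s.1 s.2).choose_spec.1⟩
  have hinj : Function.Injective f := by
    intro s₁ s₂ hf
    have h1 := (key s₁.1 s₁.2).choose_spec.2
    have h2 := (key s₂.1 s₂.2).choose_spec.2
    have : (key s₁.1 s₁.2).choose = (key s₂.1 s₂.2).choose := congrArg Subtype.val hf
    apply Subtype.ext
    rw [h1, h2, this]
  exact Nat.card_le_card_of_injective f hinj
end

section
/- Let G be a bipartite graph with parts X and Y, and let I be a maximal independent set of G. Then there exists an irredundant set J ⊆ I ∩ X with N(J) = N(I ∩ X); in fact, any J ⊆ I ∩ X that is minimal subject to N(J) = N(I ∩ X) is irredundant. Moreover, for any maximal independent set I, N(I ∩ X) = Y \ I. -/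
theorem maxIndep_irredundant_subset {V : Type*} [Fintype V] (G : SimpleGraph V)
    (X Y : Finset V)
    (hdisj : Disjoint X Y) (hcover : ∀ v : V, v ∈ X ∨ v ∈ Y)
    (hbip : ∀ a b : V, G.Adj a b → (a ∈ X ∧ b ∈ Y) ∨ (a ∈ Y ∧ b ∈ X))
    (I : Set V) (hI : IsMaxIndepSet G I) :
    (∃ J ⊆ I ∩ ↑X, Irredundant G J ∧ nbhd G J = nbhd G (I ∩ ↑X)) ∧
    (∀ J ⊆ I ∩ ↑X, nbhd G J = nbhd G (I ∩ ↑X) →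
      (∀ J' ⊆ J, nbhd G J' = nbhd G (I ∩ ↑X) → J' = J) → Irredundant G J) ∧
    nbhd G (I ∩ ↑X) = ↑Y \ I := by

  -- Part 2 as a key fact
  have part2 : ∀ J ⊆ I ∩ ↑X, nbhd G J = nbhd G (I ∩ ↑X) →
      (∀ J' ⊆ J, nbhd G J' = nbhd G (I ∩ ↑X) → J' = J) → Irredundant G J := by
    intro J hJ hN hmin x hx hsub
    have key : nbhd G (J \ {x}) = nbhd G J := by
      ext y
      constructor
      · rintro ⟨a, ha, hadj⟩
        exact ⟨a, ha.1, hadj⟩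
      · rintro ⟨a, ha, hadj⟩
        by_cases hax : a = x
        · exact hsub (by rw [← hax]; exact hadj)
        · exact ⟨a, ⟨ha, hax⟩, hadj⟩
    have heq := hmin (J \ {x}) Set.diff_subset (by rw [key, hN])
    rw [← heq] at hx
    exact hx.2 rfl
  refine ⟨?_, part2, ?_⟩
  · -- existence: pick a minimal J
    have hwf : WellFoundedLT (Set V) := Finite.to_wellFoundedLT
    obtain ⟨J, hJS, hJmin⟩ := hwf.wf.has_min
      {J | J ⊆ I ∩ ↑X ∧ nbhd G J = nbhd G (I ∩ ↑X)}
      ⟨I ∩ ↑X, le_refl _, rfl⟩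
    refine ⟨J, hJS.1, ?_, hJS.2⟩
    apply part2 J hJS.1 hJS.2
    intro J' hJ' hN'
    by_contra hne
    exact hJmin J' ⟨hJ'.trans hJS.1, hN'⟩ (lt_of_le_of_ne hJ' hne)
  · -- part 3
    ext y
    constructor
    · rintro ⟨a, ⟨haI, haX⟩, hadj⟩
      have hyY : y ∈ Y := by
        rcases hbip a y hadj with ⟨_, h⟩ | ⟨h, _⟩
        · exact h
        · exact absurd haX (Finset.disjoint_left.mp hdisj.symm h)
      refine ⟨hyY, fun hyI => hI.1 haI hyI hadj⟩
    · rintro ⟨hyY, hyI⟩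
      -- I ∪ {y} not independent
      have hni : ¬ IsIndepSet G (I ∪ {y}) := by
        intro hind
        have := hI.2 (I ∪ {y}) hind Set.subset_union_left
        exact hyI (this ▸ Set.mem_union_right I rfl)
      unfold IsIndepSet at hni
      push_neg at hni
      obtain ⟨a, ha, b, hb, hadj⟩ := hni
      have hadj' : ∃ x ∈ I, G.Adj x y := by
        rcases ha with ha | ha
        · rcases hb with hb | hb
          · exact absurd hadj (hI.1 ha hb)
          · exact ⟨a, ha, hb ▸ hadj⟩
        · rcases hb with hb | hb
          · exact ⟨b, hb, (ha ▸ hadj).symm⟩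
          · subst ha; subst hb; exact absurd hadj G.irrefl
      obtain ⟨x, hxI, hxy⟩ := hadj'
      have hxX : x ∈ X := by
        rcases hbip x y hxy with ⟨h, _⟩ | ⟨_, h⟩
        · exact h
        · exact absurd hyY (Finset.disjoint_left.mp hdisj h)
      exact ⟨x, ⟨hxI, hxX⟩, hxy⟩
end

section
/- Let γ be the unique real solution of 1 + γ = γ³ (γ ≈ 1.325). If R is a triangle-free graph on r vertices with maximum degree at most 2 in which no connected component is a single edge (so R is a vertex-disjoint union of isolated vertices, cycles with at least 4 vertices, and paths with at least 3 vertices), then mis(R) ≤ (3γ)^{r/4}. -/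
namespace MisAux

variable {V : Type*}

def K2set (G : SimpleGraph V) : Set V :=
  {v | ∃ u, G.Adj v u ∧ (∀ z, G.Adj v z → z = u) ∧ (∀ z, G.Adj u z → z = v)}


variable {V : Type*}

lemma mis_eq_ncard (G : SimpleGraph V) : mis G = {S : Set V | IsMaxIndepSet G S}.ncard := by
  rw [mis, ← Nat.card_coe_set_eq]
  rfl

lemma exists_adj_of_max {G : SimpleGraph V} {S : Set V} (hS : IsMaxIndepSet G S) {x : V}
    (hx : x ∉ S) : ∃ y ∈ S, G.Adj x y := by
  by_contra h
  push_neg at h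
  have hind : IsIndepSet G (insert x S) := by
    intro a ha b hb hab
    rcases ha with rfl | ha
    · rcases hb with rfl | hb
      · exact G.irrefl hab
      · exact h b hb hab
    · rcases hb with rfl | hb
      · exact h a ha hab.symm
      · exact hS.1 ha hb hab
  have := hS.2 _ hind (Set.subset_insert _ _)
  exact hx (this ▸ Set.mem_insert x S)

/-- restriction of a MIS to the complement of `D` is a MIS of the induced graph,
provided every neighbour of a vertex of `S ∩ D` lies in `D`. -/
lemma restrict_MIS {G : SimpleGraph V} {D S : Set V} (hS : IsMaxIndepSet G S)
    (hnbr : ∀ y ∈ S ∩ D, ∀ z, G.Adj y z → z ∈ D) :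
    IsMaxIndepSet (G.induce Dᶜ) {x : ↥Dᶜ | ↑x ∈ S} := by
  constructor
  · intro x hx y hy hadj
    exact hS.1 hx hy hadj
  · intro t ht hsub
    refine Set.Subset.antisymm hsub (fun x hxt => ?_)
    show ↑x ∈ S
    by_contra hxS
    have hind : IsIndepSet G (insert (↑x) S) := by
      intro a ha b hb hab
      rcases ha with rfl | ha
      · rcases hb with rfl | hb
        · exact G.irrefl hab
        · -- a = ↑x, b ∈ S
          by_cases hbD : b ∈ D
          · exact x.2 (hnbr b ⟨hb, hbD⟩ _ hab.symm)
          · have hbt : (⟨b, hbD⟩ : ↥Dᶜ) ∈ t := hsub hb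
            exact ht hbt hxt (by exact hab.symm)
      · rcases hb with rfl | hb
        · by_cases haD : a ∈ D
          · exact x.2 (hnbr a ⟨ha, haD⟩ _ hab)
          · have hat : (⟨a, haD⟩ : ↥Dᶜ) ∈ t := hsub ha
            exact ht hat hxt (by exact hab)
        · exact hS.1 ha hb hab
    have := hS.2 _ hind (Set.subset_insert _ _)
    exact hxS (this ▸ Set.mem_insert _ S)

lemma class_card_le [Finite V] (G : SimpleGraph V) (D A : Set V)
    (hnbr : ∀ y ∈ A, ∀ z, G.Adj y z → z ∈ D) :
    {S : Set V | IsMaxIndepSet G S ∧ S ∩ D = A}.ncard ≤ mis (G.induce Dᶜ) := by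
  rw [mis_eq_ncard]
  refine Set.ncard_le_ncard_of_injOn (fun S => {x : ↥Dᶜ | ↑x ∈ S}) ?_ ?_ (Set.toFinite _)
  · rintro S ⟨hS, hSA⟩
    refine restrict_MIS hS ?_
    rw [hSA] at *
    exact fun y hy z hz => hnbr y (hSA ▸ hy) z hz
  · rintro S₁ ⟨hS₁, hA₁⟩ S₂ ⟨hS₂, hA₂⟩ heq
    ext x
    by_cases hxD : x ∈ D
    · constructor
      · intro hx
        have : x ∈ A := hA₁ ▸ ⟨hx, hxD⟩
        exact ((hA₂ ▸ this : x ∈ S₂ ∩ D)).1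
      · intro hx
        have : x ∈ A := hA₂ ▸ ⟨hx, hxD⟩
        exact ((hA₁ ▸ this : x ∈ S₁ ∩ D)).1
    · have := Set.ext_iff.mp heq ⟨x, hxD⟩
      exact this

lemma mis_le_two [Finite V] (G : SimpleGraph V) (D₁ A₁ D₂ A₂ : Set V)
    (hn₁ : ∀ y ∈ A₁, ∀ z, G.Adj y z → z ∈ D₁)
    (hn₂ : ∀ y ∈ A₂, ∀ z, G.Adj y z → z ∈ D₂)
    (hcov : ∀ S : Set V, IsMaxIndepSet G S → S ∩ D₁ = A₁ ∨ S ∩ D₂ = A₂) :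
    mis G ≤ mis (G.induce D₁ᶜ) + mis (G.induce D₂ᶜ) := by
  rw [mis_eq_ncard]
  have hsub : {S : Set V | IsMaxIndepSet G S} ⊆
      {S : Set V | IsMaxIndepSet G S ∧ S ∩ D₁ = A₁} ∪
      {S : Set V | IsMaxIndepSet G S ∧ S ∩ D₂ = A₂} := by
    intro S hS
    rcases hcov S hS with h | h
    · exact Or.inl ⟨hS, h⟩
    · exact Or.inr ⟨hS, h⟩
  calc {S : Set V | IsMaxIndepSet G S}.ncard ≤ _ := Set.ncard_le_ncard hsub (Set.toFinite _)
    _ ≤ _ := Set.ncard_union_le _ _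
    _ ≤ _ := Nat.add_le_add (class_card_le G D₁ A₁ hn₁) (class_card_le G D₂ A₂ hn₂)

lemma mis_le_three [Finite V] (G : SimpleGraph V) (D₁ A₁ D₂ A₂ D₃ A₃ : Set V)
    (hn₁ : ∀ y ∈ A₁, ∀ z, G.Adj y z → z ∈ D₁)
    (hn₂ : ∀ y ∈ A₂, ∀ z, G.Adj y z → z ∈ D₂)
    (hn₃ : ∀ y ∈ A₃, ∀ z, G.Adj y z → z ∈ D₃)
    (hcov : ∀ S : Set V, IsMaxIndepSet G S → S ∩ D₁ = A₁ ∨ S ∩ D₂ = A₂ ∨ S ∩ D₃ = A₃) :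
    mis G ≤ mis (G.induce D₁ᶜ) + mis (G.induce D₂ᶜ) + mis (G.induce D₃ᶜ) := by
  rw [mis_eq_ncard]
  have hsub : {S : Set V | IsMaxIndepSet G S} ⊆
      {S : Set V | IsMaxIndepSet G S ∧ S ∩ D₁ = A₁} ∪
      {S : Set V | IsMaxIndepSet G S ∧ S ∩ D₂ = A₂} ∪
      {S : Set V | IsMaxIndepSet G S ∧ S ∩ D₃ = A₃} := by
    intro S hS
    rcases hcov S hS with h | h | h
    · exact Or.inl (Or.inl ⟨hS, h⟩)
    · exact Or.inl (Or.inr ⟨hS, h⟩)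
    · exact Or.inr ⟨hS, h⟩
  calc {S : Set V | IsMaxIndepSet G S}.ncard ≤ _ := Set.ncard_le_ncard hsub (Set.toFinite _)
    _ ≤ _ + {S : Set V | IsMaxIndepSet G S ∧ S ∩ D₃ = A₃}.ncard := Set.ncard_union_le _ _
    _ ≤ _ := by
        have h12 := Set.ncard_union_le {S : Set V | IsMaxIndepSet G S ∧ S ∩ D₁ = A₁}
          {S : Set V | IsMaxIndepSet G S ∧ S ∩ D₂ = A₂}
        have h1 := class_card_le G D₁ A₁ hn₁
        have h2 := class_card_le G D₂ A₂ hn₂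
        have h3 := class_card_le G D₃ A₃ hn₃
        omega

lemma mis_le_one [Finite V] (G : SimpleGraph V) (D₁ A₁ : Set V)
    (hn₁ : ∀ y ∈ A₁, ∀ z, G.Adj y z → z ∈ D₁)
    (hcov : ∀ S : Set V, IsMaxIndepSet G S → S ∩ D₁ = A₁) :
    mis G ≤ mis (G.induce D₁ᶜ) := by
  rw [mis_eq_ncard]
  have hsub : {S : Set V | IsMaxIndepSet G S} ⊆
      {S : Set V | IsMaxIndepSet G S ∧ S ∩ D₁ = A₁} := fun S hS => ⟨hS, hcov S hS⟩
  exact le_trans (Set.ncard_le_ncard hsub (Set.toFinite _)) (class_card_le G D₁ A₁ hn₁)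

lemma K2_case1 [Finite V] (G : SimpleGraph V) (v u : V) (hvu : G.Adj v u)
    (hv : ∀ z, G.Adj v z → z = u) (hu : ∀ z, G.Adj u z → z = v) :
    (K2set (G.induce ({v, u} : Set V)ᶜ)).ncard + 2 ≤ (K2set G).ncard := by
  set D : Set V := {v, u} with hD
  have hnadj : ∀ (a : ↥Dᶜ) (z : V), z ∈ D → ¬ G.Adj ↑a z := by
    intro a z hz hadj
    rcases hz with rfl | rfl
    · exact a.2 (Set.mem_insert_iff.mpr (Or.inr (hv _ hadj.symm)))
    · exact a.2 (Set.mem_insert_iff.mpr (Or.inl (hu _ hadj.symm)))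
  have hval : Subtype.val '' K2set (G.induce Dᶜ) ⊆ K2set G \ D := by
    rintro _ ⟨x, hx, rfl⟩
    obtain ⟨y, hxy, hxuniq, hyuniq⟩ := hx
    refine ⟨⟨↑y, hxy, ?_, ?_⟩, x.2⟩
    · intro z hz
      by_cases hzD : z ∈ D
      · exact absurd hz (hnadj x z hzD)
      · exact congrArg Subtype.val (hxuniq ⟨z, hzD⟩ hz)
    · intro z hz
      by_cases hzD : z ∈ D
      · exact absurd hz (hnadj y z hzD)
      · exact congrArg Subtype.val (hyuniq ⟨z, hzD⟩ hz)
  have hDsub : D ⊆ K2set G := by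
    rintro z (rfl | rfl)
    · exact ⟨u, hvu, hv, hu⟩
    · exact ⟨v, hvu.symm, hu, hv⟩
  have h1 : (K2set (G.induce Dᶜ)).ncard = (Subtype.val '' K2set (G.induce Dᶜ)).ncard :=
    (Set.ncard_image_of_injective _ Subtype.val_injective).symm
  have h2 : (Subtype.val '' K2set (G.induce Dᶜ)).ncard ≤ (K2set G \ D).ncard :=
    Set.ncard_le_ncard hval (Set.toFinite _)
  have h3 : (K2set G \ D).ncard = (K2set G).ncard - D.ncard := Set.ncard_diff hDsub
  have h4 : D.ncard = 2 := Set.ncard_pair (G.ne_of_adj hvu)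
  have h5 : D.ncard ≤ (K2set G).ncard := Set.ncard_le_ncard hDsub (Set.toFinite _)
  omega

/-- transfer lemma: if nobody outside `D` is `G`-adjacent to `D`, the `K2set` of the
induced graph embeds into that of `G`. -/
lemma K2_transfer (G : SimpleGraph V) (D : Set V)
    (hnadj : ∀ (a : V) (z : V), a ∉ D → z ∈ D → ¬ G.Adj a z)
    {x : ↥Dᶜ} (hx : x ∈ K2set (G.induce Dᶜ)) : ↑x ∈ K2set G := by
  obtain ⟨y, hxy, hxuniq, hyuniq⟩ := hx
  refine ⟨↑y, hxy, ?_, ?_⟩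
  · intro z hz
    by_cases hzD : z ∈ D
    · exact absurd hz (hnadj ↑x z x.2 hzD)
    · exact congrArg Subtype.val (hxuniq ⟨z, hzD⟩ hz)
  · intro z hz
    by_cases hzD : z ∈ D
    · exact absurd hz (hnadj ↑y z y.2 hzD)
    · exact congrArg Subtype.val (hyuniq ⟨z, hzD⟩ hz)

lemma K2_iso (G : SimpleGraph V) (hK2 : K2set G = ∅) (v : V) (hv : ∀ z, ¬ G.Adj v z) :
    K2set (G.induce ({v} : Set V)ᶜ) = ∅ := by
  ext x
  simp only [Set.mem_empty_iff_false, iff_false]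
  intro hx
  have : ↑x ∈ K2set G := by
    refine K2_transfer G {v} ?_ hx
    rintro a z ha rfl hadj
    exact hv a hadj.symm
  rw [hK2] at this
  exact this

lemma m2_le_two [Finite V] (G : SimpleGraph V) (hK2 : K2set G = ∅) (D : Set V) (c : V)
    (H : ∀ x z, x ∉ D → z ∈ D → G.Adj x z → x = c) :
    (K2set (G.induce Dᶜ)).ncard ≤ 2 := by
  set G' := G.induce Dᶜ with hG'
  set s := K2set G' with hs
  have claim : ∀ x ∈ s, ↑x = c ∨
      ∃ y : ↥Dᶜ, G'.Adj y x ∧ (∀ z, G'.Adj y z → z = x) ∧ ↑y = c := by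
    intro x hx
    obtain ⟨y, hxy, hxuniq, hyuniq⟩ := hx
    by_cases h1 : (↑x : V) = c
    · exact Or.inl h1
    by_cases h2 : (↑y : V) = c
    · exact Or.inr ⟨y, hxy.symm, hyuniq, h2⟩
    exfalso
    have : (↑x : V) ∈ K2set G := by
      refine ⟨↑y, hxy, ?_, ?_⟩
      · intro z hz
        by_cases hzD : z ∈ D
        · exact absurd (H ↑x z x.2 hzD hz) h1
        · exact congrArg Subtype.val (hxuniq ⟨z, hzD⟩ hz)
      · intro z hz
        by_cases hzD : z ∈ D
        · exact absurd (H ↑y z y.2 hzD hz) h2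
        · exact congrArg Subtype.val (hyuniq ⟨z, hzD⟩ hz)
    rw [hK2] at this
    exact this
  by_cases hcD : c ∈ D
  · have : s = ∅ := by
      ext x
      simp only [Set.mem_empty_iff_false, iff_false]
      intro hx
      rcases claim x hx with h | ⟨y, _, _, h⟩
      · exact x.2 (h ▸ hcD)
      · exact y.2 (h ▸ hcD)
    simp [this]
  · set a : ↥Dᶜ := ⟨c, hcD⟩ with ha
    by_cases hE : ∃ z, G'.Adj a z
    · have hsub : s ⊆ {a, hE.choose} := by
        intro x hx
        rcases claim x hx with h | ⟨y, hadj, huniq, hyc⟩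
        · exact Or.inl (Subtype.ext h)
        · have hya : y = a := Subtype.ext hyc
          subst hya
          exact Or.inr (huniq _ hE.choose_spec).symm
      calc s.ncard ≤ ({a, hE.choose} : Set ↥Dᶜ).ncard := Set.ncard_le_ncard hsub (Set.toFinite _)
        _ ≤ ({hE.choose} : Set ↥Dᶜ).ncard + 1 := Set.ncard_insert_le _ _
        _ ≤ 2 := by rw [Set.ncard_singleton]
    · have hsub : s ⊆ {a} := by
        intro x hx
        rcases claim x hx with h | ⟨y, hadj, huniq, hyc⟩
        · exact Subtype.ext h
        · have hya : y = a := Subtype.ext hyc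
          exact absurd ⟨x, hya ▸ hadj⟩ hE
      calc s.ncard ≤ ({a} : Set ↥Dᶜ).ncard := Set.ncard_le_ncard hsub (Set.toFinite _)
        _ ≤ 2 := by rw [Set.ncard_singleton]; omega

lemma m2_le_two' [Finite V] (G : SimpleGraph V) (D : Set V) (c₁ c₂ : V)
    (hdeg2 : ∀ x : V, x ∉ D → ∃ a b, G.Adj x a ∧ G.Adj x b ∧ a ≠ b)
    (H : ∀ x z, x ∉ D → z ∈ D → G.Adj x z → x = c₁ ∨ x = c₂) :
    (K2set (G.induce Dᶜ)).ncard ≤ 2 := by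
  set G' := G.induce Dᶜ with hG'
  have hval : Subtype.val '' K2set G' ⊆ {c₁, c₂} := by
    rintro _ ⟨x, hx, rfl⟩
    obtain ⟨y, hxy, hxuniq, hyuniq⟩ := hx
    obtain ⟨a, b, hxa, hxb, hab⟩ := hdeg2 ↑x x.2
    by_cases haD : a ∈ D
    · exact H ↑x a x.2 haD hxa
    by_cases hbD : b ∈ D
    · exact H ↑x b x.2 hbD hxb
    exfalso
    have h1 : (⟨a, haD⟩ : ↥Dᶜ) = y := hxuniq _ hxa
    have h2 : (⟨b, hbD⟩ : ↥Dᶜ) = y := hxuniq _ hxb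
    exact hab (congrArg Subtype.val (h1.trans h2.symm))
  calc (K2set G').ncard = (Subtype.val '' K2set G').ncard :=
        (Set.ncard_image_of_injective _ Subtype.val_injective).symm
    _ ≤ ({c₁, c₂} : Set V).ncard := Set.ncard_le_ncard hval (Set.toFinite _)
    _ ≤ ({c₂} : Set V).ncard + 1 := Set.ncard_insert_le _ _
    _ ≤ 2 := by rw [Set.ncard_singleton]

lemma bound_of_empty [Finite V] (G : SimpleGraph V) (h : Nat.card V = 0) :
    mis G = 1 ∧ (K2set G).ncard = 0 := by
  have hE : IsEmpty V := by
    rcases Nat.card_eq_zero.mp h with h | h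
    · exact h
    · exact absurd ‹Finite V› h.not_finite
  have hall : ∀ s : Set V, s = ∅ := fun s => by
    ext z; exact isEmptyElim z
  have hmax : IsMaxIndepSet G ∅ := by
    constructor
    · intro x hx; exact absurd hx (Set.notMem_empty x)
    · intro t _ _; rw [hall t]
  constructor
  · rw [mis]
    haveI : Nonempty {s : Set V // IsMaxIndepSet G s} := ⟨⟨∅, hmax⟩⟩
    haveI : Subsingleton {s : Set V // IsMaxIndepSet G s} :=
      ⟨fun a b => Subtype.ext ((hall a.1).trans (hall b.1).symm)⟩
    exact Nat.card_unique
  · rw [hall (K2set G), Set.ncard_empty]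

universe u

lemma main_ind (lam rho : ℝ) (hlam1 : 1 ≤ lam) (hrho1 : 1 ≤ rho)
    (hlr : lam ^ 2 * rho ^ 2 = 2)
    (h2b : rho ^ 2 * (lam + 1) ≤ lam ^ 3)
    (h2c : rho ^ 2 * (2 * lam + 1) ≤ lam ^ 4) :
    ∀ n : ℕ, ∀ (V : Type u) [Finite V] (G : SimpleGraph V), Nat.card V ≤ n →
    (∀ a b c : V, G.Adj a b → G.Adj a c → G.Adj b c → False) →
    (∀ v a b c : V, G.Adj v a → G.Adj v b → G.Adj v c → a = b ∨ a = c ∨ b = c) →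
    (mis G : ℝ) ≤ lam ^ Nat.card V * rho ^ (K2set G).ncard := by
  have hlam0 : (0:ℝ) < lam := lt_of_lt_of_le one_pos hlam1
  have hrho0 : (0:ℝ) < rho := lt_of_lt_of_le one_pos hrho1
  intro n
  induction n with
  | zero =>
    intro V _ G hcard _ _
    obtain ⟨h1, h2⟩ := bound_of_empty G (Nat.le_zero.mp hcard)
    rw [h1, h2, Nat.le_zero.mp hcard]
    norm_num
  | succ n ih =>
    intro V _ G hcard htf hdeg
    by_cases hV0 : Nat.card V = 0
    · obtain ⟨h1, h2⟩ := bound_of_empty G hV0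
      rw [h1, h2, hV0]
      norm_num
    have hne : Nonempty V := (Nat.card_pos_iff.mp (Nat.pos_of_ne_zero hV0)).1
    have hcompl : ∀ D : Set V, Nat.card ↥Dᶜ + D.ncard = Nat.card V := by
      intro D
      rw [Nat.card_coe_set_eq]
      have := Set.ncard_add_ncard_compl D
      omega
    have hIHD : ∀ D : Set V, 1 ≤ D.ncard →
        (mis (G.induce Dᶜ) : ℝ) ≤ lam ^ (Nat.card ↥Dᶜ) * rho ^ (K2set (G.induce Dᶜ)).ncard := by
      intro D hD
      have := hcompl D
      exact ih ↥Dᶜ (G.induce Dᶜ) (by omega)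
        (fun a b c hab hac hbc => htf ↑a ↑b ↑c hab hac hbc)
        (fun a b c d hab hac had => by
          rcases hdeg ↑a ↑b ↑c ↑d hab hac had with h | h | h
          · exact Or.inl (Subtype.ext h)
          · exact Or.inr (Or.inl (Subtype.ext h))
          · exact Or.inr (Or.inr (Subtype.ext h)))
    by_cases hK2 : ∃ v u, G.Adj v u ∧ (∀ z, G.Adj v z → z = u) ∧ (∀ z, G.Adj u z → z = v)
    · -- Case 1 : a K₂ component
      obtain ⟨v, u, hvu, hv, hu⟩ := hK2
      have hvu' : v ≠ u := G.ne_of_adj hvu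
      have hn₁ : ∀ y ∈ ({v} : Set V), ∀ z, G.Adj y z → z ∈ ({v, u} : Set V) := by
        rintro y rfl z hz
        rw [hv z hz]; simp
      have hn₂ : ∀ y ∈ ({u} : Set V), ∀ z, G.Adj y z → z ∈ ({v, u} : Set V) := by
        rintro y rfl z hz
        rw [hu z hz]; simp
      have hcov : ∀ S : Set V, IsMaxIndepSet G S →
          S ∩ {v, u} = {v} ∨ S ∩ {v, u} = {u} := by
        intro S hS
        by_cases hvS : v ∈ S
        · left
          ext z
          simp only [Set.mem_inter_iff, Set.mem_insert_iff, Set.mem_singleton_iff]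
          constructor
          · rintro ⟨hzS, rfl | rfl⟩
            · rfl
            · exact absurd hvu (hS.1 hvS hzS)
          · rintro rfl
            exact ⟨hvS, Or.inl rfl⟩
        · right
          obtain ⟨y, hyS, hady⟩ := exists_adj_of_max hS hvS
          have hyu : y = u := hv y hady
          subst hyu
          ext z
          simp only [Set.mem_inter_iff, Set.mem_insert_iff, Set.mem_singleton_iff]
          constructor
          · rintro ⟨hzS, rfl | rfl⟩
            · exact absurd hzS hvS
            · rfl
          · rintro rfl
            exact ⟨hyS, Or.inr rfl⟩
      have hmis := mis_le_two G {v, u} {v} {v, u} {u} hn₁ hn₂ hcov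
      have hK2c := K2_case1 G v u hvu hv hu
      have hDc : ({v, u} : Set V).ncard = 2 := Set.ncard_pair hvu'
      have hk := hcompl {v, u}
      have hIH := hIHD {v, u} (by omega)
      set k' := Nat.card ↥(({v, u} : Set V)ᶜ) with hk'
      set m' := (K2set (G.induce ({v, u} : Set V)ᶜ)).ncard with hm'
      have hcast : (mis G : ℝ) ≤ 2 * (lam ^ k' * rho ^ m') := by
        have h2' : (mis G : ℝ) ≤ (mis (G.induce ({v, u} : Set V)ᶜ) : ℝ) +
            (mis (G.induce ({v, u} : Set V)ᶜ) : ℝ) := by exact_mod_cast hmis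
        linarith
      have hkk : Nat.card V = k' + 2 := by omega
      rw [hkk]
      calc (mis G : ℝ) ≤ 2 * (lam ^ k' * rho ^ m') := hcast
        _ = lam ^ (k' + 2) * rho ^ (m' + 2) := by rw [pow_add, pow_add, ← hlr]; ring
        _ ≤ lam ^ (k' + 2) * rho ^ (K2set G).ncard := by
            refine mul_le_mul_of_nonneg_left (pow_le_pow_right₀ hrho1 ?_)
              (pow_nonneg hlam0.le _)
            omega
    · have hK2emp : K2set G = ∅ := by
        rw [Set.eq_empty_iff_forall_notMem]
        rintro v ⟨w, h1, h2, h3⟩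
        exact hK2 ⟨v, w, h1, h2, h3⟩
      rw [hK2emp, Set.ncard_empty, pow_zero, mul_one]
      by_cases hiso : ∃ v, ∀ z, ¬ G.Adj v z
      · -- Case 2a : isolated vertex
        obtain ⟨v, hv⟩ := hiso
        have hn₁ : ∀ y ∈ ({v} : Set V), ∀ z, G.Adj y z → z ∈ ({v} : Set V) := by
          rintro y rfl z hz
          exact absurd hz (hv z)
        have hcov : ∀ S : Set V, IsMaxIndepSet G S → S ∩ {v} = {v} := by
          intro S hS
          by_cases hvS : v ∈ S
          · ext z
            simp only [Set.mem_inter_iff, Set.mem_singleton_iff]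
            constructor
            · rintro ⟨_, rfl⟩; rfl
            · rintro rfl; exact ⟨hvS, rfl⟩
          · obtain ⟨y, _, hady⟩ := exists_adj_of_max hS hvS
            exact absurd hady (hv y)
        have hmis := mis_le_one G {v} {v} hn₁ hcov
        have hK2' := K2_iso G hK2emp v hv
        have hk := hcompl {v}
        have hDc : ({v} : Set V).ncard = 1 := Set.ncard_singleton v
        have hIH := hIHD {v} (by omega)
        rw [hK2', Set.ncard_empty, pow_zero, mul_one] at hIH
        have hcast : (mis G : ℝ) ≤ (mis (G.induce ({v} : Set V)ᶜ) : ℝ) := by exact_mod_cast hmis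
        calc (mis G : ℝ) ≤ lam ^ (Nat.card ↥(({v} : Set V)ᶜ)) := le_trans hcast hIH
          _ ≤ lam ^ (Nat.card V) := pow_le_pow_right₀ hlam1 (by omega)
      by_cases hdeg1 : ∃ v u, G.Adj v u ∧ ∀ z, G.Adj v z → z = u
      · -- Case 2b : vertex of degree 1
        obtain ⟨v, u, hvu, hv⟩ := hdeg1
        have hw : ∃ w, G.Adj u w ∧ w ≠ v := by
          by_contra h
          push_neg at h
          exact hK2 ⟨v, u, hvu, hv, h⟩
        obtain ⟨w, huw, hwv⟩ := hw
        have hvu' : v ≠ u := G.ne_of_adj hvu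
        have huw' : u ≠ w := G.ne_of_adj huw
        have hunbrs : ∀ z, G.Adj u z → z = v ∨ z = w := by
          intro z hz
          rcases hdeg u v w z hvu.symm huw hz with h | h | h
          · exact absurd h.symm hwv
          · exact Or.inl h.symm
          · exact Or.inr h.symm
        have hn₁ : ∀ y ∈ ({v} : Set V), ∀ z, G.Adj y z → z ∈ ({v, u} : Set V) := by
          rintro y rfl z hz
          rw [hv z hz]; simp
        have hn₂ : ∀ y ∈ ({u} : Set V), ∀ z, G.Adj y z → z ∈ ({v, u, w} : Set V) := by
          rintro y rfl z hz
          rcases hunbrs z hz with rfl | rfl <;> simp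
        have hcov : ∀ S : Set V, IsMaxIndepSet G S →
            S ∩ {v, u} = {v} ∨ S ∩ {v, u, w} = {u} := by
          intro S hS
          by_cases hvS : v ∈ S
          · left
            ext z
            simp only [Set.mem_inter_iff, Set.mem_insert_iff, Set.mem_singleton_iff]
            constructor
            · rintro ⟨hzS, rfl | rfl⟩
              · rfl
              · exact absurd hvu (hS.1 hvS hzS)
            · rintro rfl
              exact ⟨hvS, Or.inl rfl⟩
          · obtain ⟨y, hyS, hady⟩ := exists_adj_of_max hS hvS
            have hyu : y = u := hv y hady
            subst hyu
            right
            ext z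
            simp only [Set.mem_inter_iff, Set.mem_insert_iff, Set.mem_singleton_iff]
            constructor
            · rintro ⟨hzS, rfl | rfl | rfl⟩
              · exact absurd hzS hvS
              · rfl
              · exact absurd huw (hS.1 hyS hzS)
            · rintro rfl
              exact ⟨hyS, Or.inr (Or.inl rfl)⟩
        have hmis := mis_le_two G {v, u} {v} {v, u, w} {u} hn₁ hn₂ hcov
        have hm₁ : (K2set (G.induce ({v, u} : Set V)ᶜ)).ncard ≤ 2 := by
          refine m2_le_two G hK2emp {v, u} w ?_
          intro x z hxD hzD hadj
          simp only [Set.mem_insert_iff, Set.mem_singleton_iff] at hzD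
          rcases hzD with rfl | rfl
          · exact absurd (show x ∈ ({z, u} : Set V) by rw [hv x hadj.symm]; simp) hxD
          · rcases hunbrs x hadj.symm with h | h
            · subst h; exact absurd (show x ∈ ({x, z} : Set V) by simp) hxD
            · exact h
        have hm₂ : (K2set (G.induce ({v, u, w} : Set V)ᶜ)).ncard ≤ 2 := by
          by_cases hw2 : ∃ w₂, G.Adj w w₂ ∧ w₂ ≠ u
          · obtain ⟨w₂, hww₂, hw₂u⟩ := hw2
            have hwnbrs : ∀ z, G.Adj w z → z = u ∨ z = w₂ := by
              intro z hz
              rcases hdeg w u w₂ z huw.symm hww₂ hz with h | h | h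
              · exact absurd h.symm hw₂u
              · exact Or.inl h.symm
              · exact Or.inr h.symm
            refine m2_le_two G hK2emp {v, u, w} w₂ ?_
            intro x z hxD hzD hadj
            simp only [Set.mem_insert_iff, Set.mem_singleton_iff] at hzD
            rcases hzD with rfl | rfl | rfl
            · exact absurd (show x ∈ ({z, u, w} : Set V) by rw [hv x hadj.symm]; simp) hxD
            · rcases hunbrs x hadj.symm with h | h
              · exact absurd (show x ∈ ({v, z, w} : Set V) by rw [h]; simp) hxD
              · exact absurd (show x ∈ ({v, z, w} : Set V) by rw [h]; simp) hxD
            · rcases hwnbrs x hadj.symm with h | h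
              · exact absurd (show x ∈ ({v, u, z} : Set V) by rw [h]; simp) hxD
              · exact h
          · push_neg at hw2
            refine m2_le_two G hK2emp {v, u, w} v ?_
            intro x z hxD hzD hadj
            simp only [Set.mem_insert_iff, Set.mem_singleton_iff] at hzD
            rcases hzD with rfl | rfl | rfl
            · exact absurd (show x ∈ ({z, u, w} : Set V) by rw [hv x hadj.symm]; simp) hxD
            · rcases hunbrs x hadj.symm with h | h
              · exact absurd (show x ∈ ({v, z, w} : Set V) by rw [h]; simp) hxD
              · exact absurd (show x ∈ ({v, z, w} : Set V) by rw [h]; simp) hxD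
            · exact absurd (show x ∈ ({v, u, z} : Set V) by rw [hw2 x hadj.symm]; simp) hxD
        have hD₁c : ({v, u} : Set V).ncard = 2 := Set.ncard_pair hvu'
        have hD₂c : ({v, u, w} : Set V).ncard = 3 := by
          rw [show ({v, u, w} : Set V) = insert v {u, w} from rfl,
            Set.ncard_insert_of_notMem (by
              simp only [Set.mem_insert_iff, Set.mem_singleton_iff]
              rintro (rfl | rfl)
              · exact hvu' rfl
              · exact hwv rfl) (Set.toFinite _), Set.ncard_pair huw']
        have hk₁ := hcompl {v, u}
        have hk₂ := hcompl {v, u, w}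
        have hIH₁ := hIHD {v, u} (by omega)
        have hIH₂ := hIHD {v, u, w} (by omega)
        set k₁ := Nat.card ↥(({v, u} : Set V)ᶜ) with hk₁'
        set k₂ := Nat.card ↥(({v, u, w} : Set V)ᶜ) with hk₂'
        have hb₁ : (mis (G.induce ({v, u} : Set V)ᶜ) : ℝ) ≤ lam ^ k₁ * rho ^ 2 :=
          le_trans hIH₁ (mul_le_mul_of_nonneg_left (pow_le_pow_right₀ hrho1 hm₁)
            (pow_nonneg hlam0.le _))
        have hb₂ : (mis (G.induce ({v, u, w} : Set V)ᶜ) : ℝ) ≤ lam ^ k₂ * rho ^ 2 :=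
          le_trans hIH₂ (mul_le_mul_of_nonneg_left (pow_le_pow_right₀ hrho1 hm₂)
            (pow_nonneg hlam0.le _))
        have hcast : (mis G : ℝ) ≤ (mis (G.induce ({v, u} : Set V)ᶜ) : ℝ) +
            (mis (G.induce ({v, u, w} : Set V)ᶜ) : ℝ) := by exact_mod_cast hmis
        have hkeq : Nat.card V = k₂ + 3 := by omega
        have hk₁eq : k₁ = k₂ + 1 := by omega
        have hlk : (0:ℝ) ≤ lam ^ k₂ := pow_nonneg hlam0.le _
        rw [hk₁eq] at hb₁
        rw [hkeq]
        calc (mis G : ℝ) ≤ lam ^ (k₂ + 1) * rho ^ 2 + lam ^ k₂ * rho ^ 2 := by linarith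
          _ = rho ^ 2 * (lam + 1) * lam ^ k₂ := by ring
          _ ≤ lam ^ 3 * lam ^ k₂ := mul_le_mul_of_nonneg_right h2b hlk
          _ = lam ^ (k₂ + 3) := by ring
      · -- Case 2c : all degrees equal 2
        push_neg at hiso hdeg1
        have hall2 : ∀ x : V, ∃ a b, G.Adj x a ∧ G.Adj x b ∧ a ≠ b := by
          intro x
          obtain ⟨a, ha⟩ := hiso x
          obtain ⟨b, hxb, hba⟩ := hdeg1 x a ha
          exact ⟨a, b, ha, hxb, hba.symm⟩
        obtain ⟨v⟩ := hne
        obtain ⟨u, hvu⟩ := hiso v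
        obtain ⟨w, hvw, hwu⟩ := hdeg1 v u hvu
        obtain ⟨u', huu', hu'v⟩ := hdeg1 u v hvu.symm
        obtain ⟨w', hww', hw'v⟩ := hdeg1 w v hvw.symm
        obtain ⟨u'', hu'u'', hu''u⟩ := hdeg1 u' u huu'.symm
        obtain ⟨w'', hw'w'', hw''w⟩ := hdeg1 w' w hww'.symm
        have hvu' : v ≠ u := G.ne_of_adj hvu
        have hvw' : v ≠ w := G.ne_of_adj hvw
        have hUW : u ≠ w := fun h => hwu h.symm
        have huu'' : u ≠ u' := G.ne_of_adj huu'
        have hu'w : u' ≠ w := fun h => htf v u w hvu hvw (h ▸ huu')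
        have hww'' : w ≠ w' := G.ne_of_adj hww'
        have hw'u : w' ≠ u := fun h => htf v u w hvu hvw (G.adj_symm (h ▸ hww'))
        have hvnbrs : ∀ z, G.Adj v z → z = u ∨ z = w := by
          intro z hz
          rcases hdeg v u w z hvu hvw hz with h | h | h
          · exact absurd h hUW
          · exact Or.inl h.symm
          · exact Or.inr h.symm
        have hunbrs : ∀ z, G.Adj u z → z = v ∨ z = u' := by
          intro z hz
          rcases hdeg u v u' z hvu.symm huu' hz with h | h | h
          · exact absurd h.symm hu'v
          · exact Or.inl h.symm
          · exact Or.inr h.symm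
        have hwnbrs : ∀ z, G.Adj w z → z = v ∨ z = w' := by
          intro z hz
          rcases hdeg w v w' z hvw.symm hww' hz with h | h | h
          · exact absurd h.symm hw'v
          · exact Or.inl h.symm
          · exact Or.inr h.symm
        have hu'nbrs : ∀ z, G.Adj u' z → z = u ∨ z = u'' := by
          intro z hz
          rcases hdeg u' u u'' z huu'.symm hu'u'' hz with h | h | h
          · exact absurd h.symm hu''u
          · exact Or.inl h.symm
          · exact Or.inr h.symm
        have hw'nbrs : ∀ z, G.Adj w' z → z = w ∨ z = w'' := by
          intro z hz
          rcases hdeg w' w w'' z hww'.symm hw'w'' hz with h | h | h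
          · exact absurd h.symm hw''w
          · exact Or.inl h.symm
          · exact Or.inr h.symm
        have hn₁ : ∀ y ∈ ({v} : Set V), ∀ z, G.Adj y z → z ∈ ({v, u, w} : Set V) := by
          rintro y rfl z hz
          rcases hvnbrs z hz with rfl | rfl <;> simp
        have hn₂ : ∀ y ∈ ({u} : Set V), ∀ z, G.Adj y z → z ∈ ({v, u, u'} : Set V) := by
          rintro y rfl z hz
          rcases hunbrs z hz with rfl | rfl <;> simp
        have hn₃ : ∀ y ∈ ({w} : Set V), ∀ z, G.Adj y z → z ∈ ({v, u, w, w'} : Set V) := by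
          rintro y rfl z hz
          rcases hwnbrs z hz with rfl | rfl <;> simp
        have hcov : ∀ S : Set V, IsMaxIndepSet G S → S ∩ {v, u, w} = {v} ∨
            S ∩ {v, u, u'} = {u} ∨ S ∩ {v, u, w, w'} = {w} := by
          intro S hS
          by_cases hvS : v ∈ S
          · left
            ext z
            simp only [Set.mem_inter_iff, Set.mem_insert_iff, Set.mem_singleton_iff]
            constructor
            · rintro ⟨hzS, rfl | rfl | rfl⟩
              · rfl
              · exact absurd hvu (hS.1 hvS hzS)
              · exact absurd hvw (hS.1 hvS hzS)
            · rintro rfl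
              exact ⟨hvS, Or.inl rfl⟩
          by_cases huS : u ∈ S
          · right; left
            ext z
            simp only [Set.mem_inter_iff, Set.mem_insert_iff, Set.mem_singleton_iff]
            constructor
            · rintro ⟨hzS, rfl | rfl | rfl⟩
              · exact absurd hzS hvS
              · rfl
              · exact absurd huu' (hS.1 huS hzS)
            · rintro rfl
              exact ⟨huS, Or.inr (Or.inl rfl)⟩
          by_cases hwS : w ∈ S
          · right; right
            ext z
            simp only [Set.mem_inter_iff, Set.mem_insert_iff, Set.mem_singleton_iff]
            constructor
            · rintro ⟨hzS, rfl | rfl | rfl | rfl⟩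
              · exact absurd hzS hvS
              · exact absurd hzS huS
              · rfl
              · exact absurd hww' (hS.1 hwS hzS)
            · rintro rfl
              exact ⟨hwS, Or.inr (Or.inr (Or.inl rfl))⟩
          · exfalso
            obtain ⟨y, hyS, hady⟩ := exists_adj_of_max hS hvS
            rcases hvnbrs y hady with rfl | rfl
            · exact huS hyS
            · exact hwS hyS
        have hmis := mis_le_three G {v, u, w} {v} {v, u, u'} {u} {v, u, w, w'} {w} hn₁ hn₂ hn₃ hcov
        have hall2' : ∀ (D : Set V) (x : V), x ∉ D → ∃ a b, G.Adj x a ∧ G.Adj x b ∧ a ≠ b :=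
          fun _ x _ => hall2 x
        have hm₁ : (K2set (G.induce ({v, u, w} : Set V)ᶜ)).ncard ≤ 2 := by
          refine m2_le_two' G {v, u, w} u' w' (hall2' _) ?_
          intro x z hxD hzD hadj
          simp only [Set.mem_insert_iff, Set.mem_singleton_iff] at hzD
          rcases hzD with rfl | rfl | rfl
          · rcases hvnbrs x hadj.symm with h | h
            · exact absurd (show x ∈ ({z, u, w} : Set V) by rw [h]; simp) hxD
            · exact absurd (show x ∈ ({z, u, w} : Set V) by rw [h]; simp) hxD
          · rcases hunbrs x hadj.symm with h | h
            · exact absurd (show x ∈ ({v, z, w} : Set V) by rw [h]; simp) hxD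
            · exact Or.inl h
          · rcases hwnbrs x hadj.symm with h | h
            · exact absurd (show x ∈ ({v, u, z} : Set V) by rw [h]; simp) hxD
            · exact Or.inr h
        have hm₂ : (K2set (G.induce ({v, u, u'} : Set V)ᶜ)).ncard ≤ 2 := by
          refine m2_le_two' G {v, u, u'} w u'' (hall2' _) ?_
          intro x z hxD hzD hadj
          simp only [Set.mem_insert_iff, Set.mem_singleton_iff] at hzD
          rcases hzD with rfl | rfl | rfl
          · rcases hvnbrs x hadj.symm with h | h
            · exact absurd (show x ∈ ({z, u, u'} : Set V) by rw [h]; simp) hxD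
            · exact Or.inl h
          · rcases hunbrs x hadj.symm with h | h
            · exact absurd (show x ∈ ({v, z, u'} : Set V) by rw [h]; simp) hxD
            · exact absurd (show x ∈ ({v, z, u'} : Set V) by rw [h]; simp) hxD
          · rcases hu'nbrs x hadj.symm with h | h
            · exact absurd (show x ∈ ({v, u, z} : Set V) by rw [h]; simp) hxD
            · exact Or.inr h
        have hm₃ : (K2set (G.induce ({v, u, w, w'} : Set V)ᶜ)).ncard ≤ 2 := by
          refine m2_le_two' G {v, u, w, w'} u' w'' (hall2' _) ?_
          intro x z hxD hzD hadj
          simp only [Set.mem_insert_iff, Set.mem_singleton_iff] at hzD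
          rcases hzD with rfl | rfl | rfl | rfl
          · rcases hvnbrs x hadj.symm with h | h
            · exact absurd (show x ∈ ({z, u, w, w'} : Set V) by rw [h]; simp) hxD
            · exact absurd (show x ∈ ({z, u, w, w'} : Set V) by rw [h]; simp) hxD
          · rcases hunbrs x hadj.symm with h | h
            · exact absurd (show x ∈ ({v, z, w, w'} : Set V) by rw [h]; simp) hxD
            · exact Or.inl h
          · rcases hwnbrs x hadj.symm with h | h
            · exact absurd (show x ∈ ({v, u, z, w'} : Set V) by rw [h]; simp) hxD
            · exact absurd (show x ∈ ({v, u, z, w'} : Set V) by rw [h]; simp) hxD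
          · rcases hw'nbrs x hadj.symm with h | h
            · exact absurd (show x ∈ ({v, u, w, z} : Set V) by rw [h]; simp) hxD
            · exact Or.inr h
        have hD₁c : ({v, u, w} : Set V).ncard = 3 := by
          rw [show ({v, u, w} : Set V) = insert v {u, w} from rfl,
            Set.ncard_insert_of_notMem (by
              simp only [Set.mem_insert_iff, Set.mem_singleton_iff]
              rintro (h | h)
              · exact hvu' h
              · exact hvw' h) (Set.toFinite _), Set.ncard_pair hUW]
        have hD₂c : ({v, u, u'} : Set V).ncard = 3 := by
          rw [show ({v, u, u'} : Set V) = insert v {u, u'} from rfl,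
            Set.ncard_insert_of_notMem (by
              simp only [Set.mem_insert_iff, Set.mem_singleton_iff]
              rintro (h | h)
              · exact hvu' h
              · exact hu'v h.symm) (Set.toFinite _), Set.ncard_pair huu'']
        have hD₃c : ({v, u, w, w'} : Set V).ncard = 4 := by
          rw [show ({v, u, w, w'} : Set V) = insert v (insert u {w, w'}) from rfl,
            Set.ncard_insert_of_notMem (by
              simp only [Set.mem_insert_iff, Set.mem_singleton_iff]
              rintro (h | h | h)
              · exact hvu' h
              · exact hvw' h
              · exact hw'v h.symm) (Set.toFinite _),
            Set.ncard_insert_of_notMem (by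
              simp only [Set.mem_insert_iff, Set.mem_singleton_iff]
              rintro (h | h)
              · exact hUW h
              · exact hw'u h.symm) (Set.toFinite _), Set.ncard_pair hww'']
        have hk₁ := hcompl {v, u, w}
        have hk₂ := hcompl {v, u, u'}
        have hk₃ := hcompl {v, u, w, w'}
        have hIH₁ := hIHD {v, u, w} (by omega)
        have hIH₂ := hIHD {v, u, u'} (by omega)
        have hIH₃ := hIHD {v, u, w, w'} (by omega)
        set k₁ := Nat.card ↥(({v, u, w} : Set V)ᶜ) with hk₁'
        set k₂ := Nat.card ↥(({v, u, u'} : Set V)ᶜ) with hk₂'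
        set k₃ := Nat.card ↥(({v, u, w, w'} : Set V)ᶜ) with hk₃'
        have hb₁ : (mis (G.induce ({v, u, w} : Set V)ᶜ) : ℝ) ≤ lam ^ k₁ * rho ^ 2 :=
          le_trans hIH₁ (mul_le_mul_of_nonneg_left (pow_le_pow_right₀ hrho1 hm₁)
            (pow_nonneg hlam0.le _))
        have hb₂ : (mis (G.induce ({v, u, u'} : Set V)ᶜ) : ℝ) ≤ lam ^ k₂ * rho ^ 2 :=
          le_trans hIH₂ (mul_le_mul_of_nonneg_left (pow_le_pow_right₀ hrho1 hm₂)
            (pow_nonneg hlam0.le _))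
        have hb₃ : (mis (G.induce ({v, u, w, w'} : Set V)ᶜ) : ℝ) ≤ lam ^ k₃ * rho ^ 2 :=
          le_trans hIH₃ (mul_le_mul_of_nonneg_left (pow_le_pow_right₀ hrho1 hm₃)
            (pow_nonneg hlam0.le _))
        have hcast : (mis G : ℝ) ≤ (mis (G.induce ({v, u, w} : Set V)ᶜ) : ℝ) +
            (mis (G.induce ({v, u, u'} : Set V)ᶜ) : ℝ) +
            (mis (G.induce ({v, u, w, w'} : Set V)ᶜ) : ℝ) := by exact_mod_cast hmis
        have hkeq : Nat.card V = k₃ + 4 := by omega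
        have hk₁eq : k₁ = k₃ + 1 := by omega
        have hk₂eq : k₂ = k₃ + 1 := by omega
        have hlk : (0:ℝ) ≤ lam ^ k₃ := pow_nonneg hlam0.le _
        rw [hk₁eq] at hb₁
        rw [hk₂eq] at hb₂
        rw [hkeq]
        calc (mis G : ℝ) ≤ lam ^ (k₃ + 1) * rho ^ 2 + lam ^ (k₃ + 1) * rho ^ 2 +
              lam ^ k₃ * rho ^ 2 := by linarith
          _ = rho ^ 2 * (2 * lam + 1) * lam ^ k₃ := by ring
          _ ≤ lam ^ 4 * lam ^ k₃ := mul_le_mul_of_nonneg_right h2c hlk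
          _ = lam ^ (k₃ + 4) := by ring


end MisAux

theorem mis_le_of_max_degree_two (γ : ℝ) (hγ : 1 + γ = γ ^ 3)
    (V : Type*) [Fintype V] (R : SimpleGraph V) [DecidableRel R.Adj]
    (htf : R.CliqueFree 3) (hdeg : ∀ v : V, R.degree v ≤ 2)
    (hnoedge : ∀ x y : V, R.Adj x y →
      ∃ z : V, (R.Adj x z ∧ z ≠ y) ∨ (R.Adj y z ∧ z ≠ x)) :
    (mis R : ℝ) ≤ (3 * γ) ^ ((Fintype.card V : ℝ) / 4) := by
  classical
  -- numeric bounds on γ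
  have hγl : (1.32 : ℝ) < γ := by nlinarith [sq_nonneg (γ + 0.66), sq_nonneg γ, sq_nonneg (γ - 1.32)]
  have hγu : γ < (1.33 : ℝ) := by nlinarith [sq_nonneg (γ + 0.66), sq_nonneg γ, sq_nonneg (γ - 1.33)]
  have h3γpos : (0:ℝ) < 3 * γ := by linarith
  set lam : ℝ := (3 * γ) ^ ((1:ℝ)/4) with hlamdef
  have hlampos : 0 < lam := Real.rpow_pos_of_pos h3γpos _
  have hlam4 : lam ^ (4:ℕ) = 3 * γ := by
    rw [hlamdef, ← Real.rpow_natCast ((3*γ) ^ ((1:ℝ)/4)) 4, ← Real.rpow_mul h3γpos.le]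
    norm_num
  have hlam_lb : (1.41 : ℝ) ≤ lam := by
    have h1 : (((1.41:ℝ) ^ (4:ℕ)) : ℝ) ^ ((1:ℝ)/4) ≤ (3 * γ) ^ ((1:ℝ)/4) :=
      Real.rpow_le_rpow (by positivity) (by nlinarith) (by norm_num)
    have h2 : (((1.41:ℝ) ^ (4:ℕ)) : ℝ) ^ ((1:ℝ)/4) = 1.41 := by
      rw [← Real.rpow_natCast (1.41:ℝ) 4, ← Real.rpow_mul (by norm_num)]
      norm_num
    rw [h2] at h1
    exact h1
  have hlam_ub : lam ≤ (1.42 : ℝ) := by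
    have h1 : (3 * γ) ^ ((1:ℝ)/4) ≤ (((1.42:ℝ) ^ (4:ℕ)) : ℝ) ^ ((1:ℝ)/4) :=
      Real.rpow_le_rpow (by positivity) (by nlinarith) (by norm_num)
    have h2 : (((1.42:ℝ) ^ (4:ℕ)) : ℝ) ^ ((1:ℝ)/4) = 1.42 := by
      rw [← Real.rpow_natCast (1.42:ℝ) 4, ← Real.rpow_mul (by norm_num)]
      norm_num
    rw [h2] at h1
    exact h1
  have hlam1 : (1:ℝ) ≤ lam := by linarith
  set s2 : ℝ := Real.sqrt 2 with hs2def
  have hs2sq : s2 ^ 2 = 2 := Real.sq_sqrt (by norm_num)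
  have hs2pos : 0 < s2 := Real.sqrt_pos.mpr (by norm_num)
  have hlam_le_s2 : lam ≤ s2 := by
    have hp : (0:ℝ) < lam ^ 2 + 2 := by positivity
    have h2 : lam ^ 2 ≤ 2 := by nlinarith [hlam4, hγu]
    nlinarith [hs2sq, hs2pos, hlampos]
  set rho : ℝ := s2 / lam with hrhodef
  have hrho1 : (1:ℝ) ≤ rho := (one_le_div hlampos).mpr hlam_le_s2
  have hlr : lam ^ 2 * rho ^ 2 = 2 := by
    rw [hrhodef, div_pow]
    rw [mul_div_assoc']
    rw [mul_comm, mul_div_assoc]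
    rw [div_self (by positivity : (lam:ℝ) ^ 2 ≠ 0), mul_one, hs2sq]
  have hlam5 : lam ^ 5 = 3 * γ * lam := by
    rw [show lam ^ 5 = lam ^ (4:ℕ) * lam by ring, hlam4]
  have hlam6 : lam ^ 6 = 3 * γ * lam ^ 2 := by
    rw [show lam ^ 6 = lam ^ (4:ℕ) * lam ^ 2 by ring, hlam4]
  have hrho2 : rho ^ 2 = 2 / lam ^ 2 := by
    rw [hrhodef, div_pow, hs2sq]
  have h2b : rho ^ 2 * (lam + 1) ≤ lam ^ 3 := by
    rw [hrho2, div_mul_eq_mul_div, div_le_iff₀ (by positivity)]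
    have key : 2 * (lam + 1) ≤ 3 * γ * lam := by nlinarith
    nlinarith [hlam5]
  have h2c : rho ^ 2 * (2 * lam + 1) ≤ lam ^ 4 := by
    rw [hrho2, div_mul_eq_mul_div, div_le_iff₀ (by positivity)]
    have hl2 : (1.9881 : ℝ) ≤ lam ^ 2 := by nlinarith
    have key : 2 * (2 * lam + 1) ≤ 3 * γ * lam ^ 2 := by nlinarith
    nlinarith [hlam6]
  -- hypothesis conversion
  have htf' : ∀ a b c : V, R.Adj a b → R.Adj a c → R.Adj b c → False := by
    intro a b c hab hac hbc
    exact htf {a, b, c} (SimpleGraph.is3Clique_triple_iff.mpr ⟨hab, hac, hbc⟩)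
  have hdeg' : ∀ v a b c : V, R.Adj v a → R.Adj v b → R.Adj v c →
      a = b ∨ a = c ∨ b = c := by
    intro v a b c ha hb hc
    by_contra h
    push_neg at h
    obtain ⟨hab, hac, hbc⟩ := h
    have hsub : ({a, b, c} : Finset V) ⊆ R.neighborFinset v := by
      intro x hx
      simp only [Finset.mem_insert, Finset.mem_singleton] at hx
      rw [SimpleGraph.mem_neighborFinset]
      rcases hx with rfl | rfl | rfl
      · exact ha
      · exact hb
      · exact hc
    have hcard3 : ({a, b, c} : Finset V).card = 3 := by
      rw [Finset.card_insert_of_notMem (by simp [hab, hac]),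
        Finset.card_insert_of_notMem (by simp [hbc]), Finset.card_singleton]
    have hle := Finset.card_le_card hsub
    rw [hcard3] at hle
    have hd := hdeg v
    rw [SimpleGraph.degree] at hd
    omega
  have hK2top : MisAux.K2set R = ∅ := by
    rw [Set.eq_empty_iff_forall_notMem]
    rintro v ⟨u, h1, h2, h3⟩
    obtain ⟨z, hz⟩ := hnoedge v u h1
    rcases hz with ⟨hvz, hzu⟩ | ⟨huz, hzv⟩
    · exact hzu (h2 z hvz)
    · exact hzv (h3 z huz)
  have hmain := MisAux.main_ind lam rho hlam1 hrho1 hlr h2b h2c (Nat.card V) V R le_rfl htf' hdeg'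
  rw [hK2top, Set.ncard_empty, pow_zero, mul_one] at hmain
  have hcards : Nat.card V = Fintype.card V := Nat.card_eq_fintype_card
  have hrw : (3 * γ) ^ ((Fintype.card V : ℝ) / 4) = lam ^ (Fintype.card V) := by
    rw [show (Fintype.card V : ℝ) / 4 = (1/4) * (Fintype.card V : ℝ) by ring,
      Real.rpow_mul h3γpos.le, Real.rpow_natCast]
  rw [hrw, ← hcards]
  exact hmain
end

section
/- Let γ be the unique real solution of 1 + γ = γ³. For every n ≥ 2, the path P_n on n vertices satisfies mis(P_n) ≤ 2·γ^{n−2}. -/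
open SimpleGraph

lemma maxIndep_iff {V : Type*} (G : SimpleGraph V) (s : Set V) :
    IsMaxIndepSet G s ↔ _root_.IsIndepSet G s ∧ ∀ v ∉ s, ∃ u ∈ s, G.Adj u v := by
  constructor
  · rintro ⟨hi, hmax⟩
    refine ⟨hi, fun v hv => ?_⟩
    by_contra h
    push_neg at h
    have hind : _root_.IsIndepSet G (insert v s) := by
      intro x hx y hy hxy
      rcases Set.mem_insert_iff.mp hx with hxv | hxs <;>
        rcases Set.mem_insert_iff.mp hy with hyv | hys
      · rw [hxv, hyv] at hxy; exact G.irrefl hxy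
      · rw [hxv] at hxy; exact h y hys hxy.symm
      · rw [hyv] at hxy; exact h x hxs hxy
      · exact hi hxs hys hxy
    have heq := hmax _ hind (Set.subset_insert v s)
    exact hv (by rw [heq]; exact Set.mem_insert v s)
  · rintro ⟨hi, hd⟩
    refine ⟨hi, fun t hti hst => ?_⟩
    refine Set.Subset.antisymm hst fun x hx => ?_
    by_contra hxs
    obtain ⟨u, hu, hadj⟩ := hd x hxs
    exact hti (hst hu) hx hadj

instance pathAdjDec (n : ℕ) : DecidableRel (SimpleGraph.pathGraph n).Adj :=
  fun _ _ => decidable_of_iff _ SimpleGraph.pathGraph_adj.symm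

lemma mis_eq_finsetCard {V : Type*} [Fintype V] [DecidableEq V] (G : SimpleGraph V)
    [DecidableRel G.Adj] :
    mis G = Fintype.card {t : Finset V //
      (∀ x ∈ t, ∀ y ∈ t, ¬ G.Adj x y) ∧ ∀ v, v ∉ t → ∃ u ∈ t, G.Adj u v} := by
  rw [mis, ← Nat.card_eq_fintype_card]
  apply Nat.card_congr
  refine (Equiv.subtypeEquivRight fun s => maxIndep_iff G s).trans ?_
  refine ((Fintype.finsetEquivSet).subtypeEquiv fun t => ?_).symm
  simp [_root_.IsIndepSet]

lemma mis_path2 : mis (SimpleGraph.pathGraph 2) = 2 := by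
  rw [mis_eq_finsetCard]; decide

lemma mis_path3 : mis (SimpleGraph.pathGraph 3) = 2 := by
  rw [mis_eq_finsetCard]; decide

lemma mis_path4 : mis (SimpleGraph.pathGraph 4) = 3 := by
  rw [mis_eq_finsetCard]; decide

lemma notmem_n1 (n : ℕ) (s : Set (Fin (n+3)))
    (hs : IsMaxIndepSet (SimpleGraph.pathGraph (n+3)) s)
    (h2 : (⟨n+2, by omega⟩ : Fin (n+3)) ∈ s) :
    (⟨n+1, by omega⟩ : Fin (n+3)) ∉ s := fun h =>
  hs.1 h h2 (by rw [pathGraph_adj]; left; rfl)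

lemma mem_n1 (n : ℕ) (s : Set (Fin (n+3)))
    (hs : IsMaxIndepSet (SimpleGraph.pathGraph (n+3)) s)
    (h2 : (⟨n+2, by omega⟩ : Fin (n+3)) ∉ s) :
    (⟨n+1, by omega⟩ : Fin (n+3)) ∈ s := by
  obtain ⟨hi, hd⟩ := (maxIndep_iff _ _).mp hs
  obtain ⟨u, hu, hadj⟩ := hd _ h2
  rw [pathGraph_adj] at hadj
  have hadj' : u.val + 1 = n + 2 ∨ n + 2 + 1 = u.val := hadj
  have hult := u.isLt
  have : u = ⟨n+1, by omega⟩ := Fin.ext (show u.val = n + 1 by omega)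
  exact this ▸ hu

lemma notmem_n (n : ℕ) (s : Set (Fin (n+3)))
    (hs : IsMaxIndepSet (SimpleGraph.pathGraph (n+3)) s)
    (h1 : (⟨n+1, by omega⟩ : Fin (n+3)) ∈ s) :
    (⟨n, by omega⟩ : Fin (n+3)) ∉ s := fun h =>
  hs.1 h h1 (by rw [pathGraph_adj]; left; rfl)

lemma restr1_max (n : ℕ) (s : Set (Fin (n+3)))
    (hs : IsMaxIndepSet (SimpleGraph.pathGraph (n+3)) s)
    (h2 : (⟨n+2, by omega⟩ : Fin (n+3)) ∈ s) :
    IsMaxIndepSet (SimpleGraph.pathGraph (n+1))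
      {v : Fin (n+1) | (⟨v.val, by omega⟩ : Fin (n+3)) ∈ s} := by
  obtain ⟨hi, hd⟩ := (maxIndep_iff _ _).mp hs
  rw [maxIndep_iff]
  constructor
  · intro x hx y hy hadj
    rw [pathGraph_adj] at hadj
    exact hi hx hy (by rw [pathGraph_adj]; exact hadj)
  · intro v hv
    obtain ⟨u, hu, hadj⟩ := hd ⟨v.val, by omega⟩ hv
    rw [pathGraph_adj] at hadj
    have hadj' : u.val + 1 = v.val ∨ v.val + 1 = u.val := hadj
    have hvlt := v.isLt
    have hult3 := u.isLt
    have hun1 : u.val ≠ n + 1 := by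
      intro h
      exact notmem_n1 n s hs h2
        (by rwa [show (⟨n+1, by omega⟩ : Fin (n+3)) = u from Fin.ext h.symm])
    have hult : u.val < n + 1 := by rcases hadj' with h | h <;> omega
    exact ⟨⟨u.val, hult⟩, hu,
      by rw [pathGraph_adj]; exact hadj'⟩

lemma restr2_max (n : ℕ) (s : Set (Fin (n+3)))
    (hs : IsMaxIndepSet (SimpleGraph.pathGraph (n+3)) s)
    (h2 : (⟨n+2, by omega⟩ : Fin (n+3)) ∉ s) :
    IsMaxIndepSet (SimpleGraph.pathGraph n)
      {v : Fin n | (⟨v.val, by omega⟩ : Fin (n+3)) ∈ s} := by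
  have h1 : (⟨n+1, by omega⟩ : Fin (n+3)) ∈ s := mem_n1 n s hs h2
  have h0 : (⟨n, by omega⟩ : Fin (n+3)) ∉ s := notmem_n n s hs h1
  obtain ⟨hi, hd⟩ := (maxIndep_iff _ _).mp hs
  rw [maxIndep_iff]
  constructor
  · intro x hx y hy hadj
    rw [pathGraph_adj] at hadj
    exact hi hx hy (by rw [pathGraph_adj]; exact hadj)
  · intro v hv
    obtain ⟨u, hu, hadj⟩ := hd ⟨v.val, by omega⟩ hv
    rw [pathGraph_adj] at hadj
    have hadj' : u.val + 1 = v.val ∨ v.val + 1 = u.val := hadj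
    have hvlt := v.isLt
    have hult3 := u.isLt
    have hun : u.val ≠ n := by
      intro h
      exact h0 (by rwa [show (⟨n, by omega⟩ : Fin (n+3)) = u from Fin.ext h.symm])
    have hult : u.val < n := by rcases hadj' with h | h <;> omega
    exact ⟨⟨u.val, hult⟩, hu,
      by rw [pathGraph_adj]; exact hadj'⟩

lemma mis_rec (n : ℕ) :
    mis (SimpleGraph.pathGraph (n+3)) ≤
      mis (SimpleGraph.pathGraph (n+1)) + mis (SimpleGraph.pathGraph n) := by
  classical
  let F : {s : Set (Fin (n+3)) // IsMaxIndepSet (pathGraph (n+3)) s} →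
      {s : Set (Fin (n+1)) // IsMaxIndepSet (pathGraph (n+1)) s} ⊕
      {s : Set (Fin n) // IsMaxIndepSet (pathGraph n) s} :=
    fun s =>
      if h : (⟨n+2, by omega⟩ : Fin (n+3)) ∈ s.val then
        Sum.inl ⟨_, restr1_max n s.val s.prop h⟩
      else
        Sum.inr ⟨_, restr2_max n s.val s.prop h⟩
  have hinj : Function.Injective F := by
    intro s t hst
    by_cases h2s : (⟨n+2, by omega⟩ : Fin (n+3)) ∈ s.val <;>
      by_cases h2t : (⟨n+2, by omega⟩ : Fin (n+3)) ∈ t.val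
    · simp only [F, dif_pos h2s, dif_pos h2t, Sum.inl.injEq, Subtype.mk.injEq] at hst
      apply Subtype.ext
      ext v
      have hvlt := v.isLt
      by_cases hv1 : v.val < n + 1
      · exact Set.ext_iff.mp hst ⟨v.val, hv1⟩
      · by_cases hv2 : v.val = n + 1
        · have hvv : v = ⟨n+1, by omega⟩ := Fin.ext hv2
          rw [hvv]
          exact iff_of_false (notmem_n1 n s.val s.prop h2s) (notmem_n1 n t.val t.prop h2t)
        · have hvv : v = ⟨n+2, by omega⟩ := Fin.ext (show v.val = n+2 by omega)
          rw [hvv]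
          exact iff_of_true h2s h2t
    · simp [F, dif_pos h2s, dif_neg h2t] at hst
    · simp [F, dif_neg h2s, dif_pos h2t] at hst
    · simp only [F, dif_neg h2s, dif_neg h2t, Sum.inr.injEq, Subtype.mk.injEq] at hst
      have h1s := mem_n1 n s.val s.prop h2s
      have h1t := mem_n1 n t.val t.prop h2t
      apply Subtype.ext
      ext v
      have hvlt := v.isLt
      by_cases hv1 : v.val < n
      · exact Set.ext_iff.mp hst ⟨v.val, hv1⟩
      · by_cases hv2 : v.val = n
        · have hvv : v = ⟨n, by omega⟩ := Fin.ext hv2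
          rw [hvv]
          exact iff_of_false (notmem_n n s.val s.prop h1s) (notmem_n n t.val t.prop h1t)
        · by_cases hv3 : v.val = n + 1
          · have hvv : v = ⟨n+1, by omega⟩ := Fin.ext hv3
            rw [hvv]
            exact iff_of_true h1s h1t
          · have hvv : v = ⟨n+2, by omega⟩ := Fin.ext (show v.val = n+2 by omega)
            rw [hvv]
            exact iff_of_false h2s h2t
  have hle := Nat.card_le_card_of_injective F hinj
  rwa [Nat.card_sum] at hle

theorem mis_pathGraph_le (γ : ℝ) (hγ : 1 + γ = γ ^ 3) (n : ℕ) (hn : 2 ≤ n) :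
    (mis (SimpleGraph.pathGraph n) : ℝ) ≤ 2 * γ ^ (n - 2) := by
  have hγ54 : (5/4 : ℝ) ≤ γ := by nlinarith [sq_nonneg (γ + 5/8), sq_nonneg γ]
  have key : ∀ n : ℕ, 2 ≤ n → (mis (SimpleGraph.pathGraph n) : ℝ) ≤ 2 * γ ^ (n - 2) := by
    intro n
    induction n using Nat.strong_induction_on with
    | _ n ih =>
      intro hn
      rcases n with _ | _ | _ | _ | _ | m
      · omega
      · omega
      · show (mis (SimpleGraph.pathGraph 2) : ℝ) ≤ 2 * γ ^ 0
        rw [mis_path2]; norm_num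
      · show (mis (SimpleGraph.pathGraph 3) : ℝ) ≤ 2 * γ ^ 1
        rw [mis_path3]; push_cast; nlinarith
      · show (mis (SimpleGraph.pathGraph 4) : ℝ) ≤ 2 * γ ^ 2
        rw [mis_path4]; push_cast; nlinarith
      · show (mis (SimpleGraph.pathGraph (m+5)) : ℝ) ≤ 2 * γ ^ (m+3)
        have hrec := mis_rec (m+2)
        have h1 := ih (m+3) (by omega) (by omega)
        have h2 := ih (m+2) (by omega) (by omega)
        have e1 : m + 3 - 2 = m + 1 := rfl
        have e2 : m + 2 - 2 = m := rfl
        rw [e1] at h1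
        rw [e2] at h2
        calc (mis (SimpleGraph.pathGraph (m+5)) : ℝ)
            ≤ (mis (SimpleGraph.pathGraph (m+3)) : ℝ) +
              (mis (SimpleGraph.pathGraph (m+2)) : ℝ) := by exact_mod_cast hrec
          _ ≤ 2 * γ ^ (m+1) + 2 * γ ^ m := add_le_add h1 h2
          _ = 2 * γ ^ (m+3) := by
              have e3 : γ ^ (m+3) = γ ^ m * (1 + γ) := by rw [hγ]; ring
              rw [e3]; ring
  exact key n hn
end

section
/- Let γ be the unique real solution of 1 + γ = γ³. For every n ≥ 3, the cycle C_n on n vertices satisfies mis(C_n) ≤ 3·γ^{n−3}. -/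
/-! ### Auxiliary machinery: counting maximal independent sets of cycles -/

/-- Linear validity of a 0/1-string: starts with `1`, ends with `0`,
no `11` and no `000` factors. These are exactly concatenations of blocks
`10` and `100`. -/
def LinOK {m : ℕ} (f : Fin m → Bool) : Prop :=
  (∀ i : Fin m, (i : ℕ) = 0 → f i = true) ∧
  (∀ i : Fin m, (i : ℕ) = m - 1 → f i = false) ∧
  (∀ i j : Fin m, (j : ℕ) = (i : ℕ) + 1 → ¬(f i = true ∧ f j = true)) ∧
  (∀ i j k : Fin m, (j : ℕ) = (i : ℕ) + 1 → (k : ℕ) = (i : ℕ) + 2 →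
    (f i = true ∨ f j = true ∨ f k = true))

instance {m : ℕ} : DecidablePred (@LinOK m) := fun _ => by unfold LinOK; infer_instance

/-- The number of linearly valid strings of length `m`. -/
def Lcard (m : ℕ) : ℕ := Fintype.card {f : Fin m → Bool // LinOK f}

lemma linok_one {m : ℕ} (f : Fin (m+2) → Bool) (hf : LinOK f) :
    f ⟨1, by omega⟩ = false := by
  have h0 : f ⟨0, by omega⟩ = true := hf.1 _ rfl
  have h := hf.2.2.1 ⟨0, by omega⟩ ⟨1, by omega⟩ (show (1:ℕ) = 0 + 1 by omega)
  simp only [h0, true_and, Bool.not_eq_true] at h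
  exact h

lemma Lcard_rec (m : ℕ) : Lcard (m+5) ≤ Lcard (m+3) + Lcard (m+2) := by
  classical
  have key : Lcard (m+3) + Lcard (m+2)
      = Fintype.card ({f : Fin (m+3) → Bool // LinOK f} ⊕ {f : Fin (m+2) → Bool // LinOK f}) := by
    simp [Lcard]
  rw [Lcard, key]
  have wdl : ∀ (f : Fin (m+5) → Bool), LinOK f → f ⟨2, by omega⟩ = true →
      LinOK (fun i : Fin (m+3) => f ⟨i.1 + 2, by omega⟩) := by
    intro f hf h2
    obtain ⟨h0, hl, h11, h000⟩ := hf
    refine ⟨?_, ?_, ?_, ?_⟩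
    · intro i hi
      show f ⟨i.1 + 2, by omega⟩ = true
      have : (⟨i.1 + 2, by omega⟩ : Fin (m+5)) = ⟨2, by omega⟩ :=
        Fin.val_injective (show i.1 + 2 = 2 by omega)
      rw [this]; exact h2
    · intro i hi
      exact hl ⟨i.1+2, by omega⟩ (show i.1 + 2 = m + 5 - 1 by omega)
    · intro i j hj
      exact h11 ⟨i.1+2, by omega⟩ ⟨j.1+2, by omega⟩ (show j.1+2 = i.1+2+1 by omega)
    · intro i j k hj hk
      exact h000 ⟨i.1+2, by omega⟩ ⟨j.1+2, by omega⟩ ⟨k.1+2, by omega⟩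
        (show j.1+2 = i.1+2+1 by omega) (show k.1+2 = i.1+2+2 by omega)
  have wdr : ∀ (f : Fin (m+5) → Bool), LinOK f → f ⟨2, by omega⟩ = false →
      LinOK (fun i : Fin (m+2) => f ⟨i.1 + 3, by omega⟩) := by
    intro f hf h2
    obtain ⟨h0, hl, h11, h000⟩ := hf
    refine ⟨?_, ?_, ?_, ?_⟩
    · intro i hi
      show f ⟨i.1 + 3, by omega⟩ = true
      have hf1 : f ⟨1, by omega⟩ = false := linok_one (m := m+3) f ⟨h0, hl, h11, h000⟩
      have h3 := h000 ⟨1, by omega⟩ ⟨2, by omega⟩ ⟨3, by omega⟩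
        (show (2:ℕ) = 1 + 1 by omega) (show (3:ℕ) = 1 + 2 by omega)
      simp only [hf1, h2, Bool.false_eq_true, false_or] at h3
      have : (⟨i.1 + 3, by omega⟩ : Fin (m+5)) = ⟨3, by omega⟩ :=
        Fin.val_injective (show i.1 + 3 = 3 by omega)
      rw [this]; exact h3
    · intro i hi
      exact hl ⟨i.1+3, by omega⟩ (show i.1 + 3 = m + 5 - 1 by omega)
    · intro i j hj
      exact h11 ⟨i.1+3, by omega⟩ ⟨j.1+3, by omega⟩ (show j.1+3 = i.1+3+1 by omega)
    · intro i j k hj hk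
      exact h000 ⟨i.1+3, by omega⟩ ⟨j.1+3, by omega⟩ ⟨k.1+3, by omega⟩
        (show j.1+3 = i.1+3+1 by omega) (show k.1+3 = i.1+3+2 by omega)
  apply Fintype.card_le_of_injective
    (fun F => if h2 : F.1 ⟨2, by omega⟩ = true then
      Sum.inl ⟨fun i => F.1 ⟨i.1 + 2, by omega⟩, wdl F.1 F.2 h2⟩
    else
      Sum.inr ⟨fun i => F.1 ⟨i.1 + 3, by omega⟩, wdr F.1 F.2 (by
        rcases Bool.eq_false_or_eq_true (F.1 ⟨2, by omega⟩) with h|h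
        · exact absurd h h2
        · exact h)⟩)
  rintro ⟨f, hf⟩ ⟨g, hg⟩ h
  by_cases hf2 : f ⟨2, by omega⟩ = true <;> by_cases hg2 : g ⟨2, by omega⟩ = true <;>
    simp only [hf2, hg2, dif_pos, dif_neg, Bool.true_eq_false, Bool.false_eq_true,
      not_false_iff, Bool.not_eq_true] at h
  · -- both left
    simp only [Sum.inl.injEq, Subtype.mk.injEq] at h
    have hfun : ∀ a : Fin (m+3), f ⟨a.1 + 2, by omega⟩ = g ⟨a.1 + 2, by omega⟩ :=
      fun a => congrFun h a
    refine Subtype.ext ?_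
    show f = g
    funext i
    rcases lt_or_ge i.1 2 with hi | hi
    · rcases (show i.1 = 0 ∨ i.1 = 1 by omega) with h' | h'
      · rw [hf.1 i h', hg.1 i h']
      · have : i = ⟨1, by omega⟩ := Fin.val_injective h'
        rw [this, linok_one (m := m+3) f hf, linok_one (m := m+3) g hg]
    · have e := hfun ⟨i.1 - 2, by omega⟩
      have : (⟨(i.1 - 2) + 2, by omega⟩ : Fin (m+5)) = i :=
        Fin.val_injective (show i.1 - 2 + 2 = i.1 by omega)
      rwa [this] at e
  · exact absurd h (by simp)
  · exact absurd h (by simp)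
  · -- both right
    simp only [Sum.inr.injEq, Subtype.mk.injEq] at h
    have hfun : ∀ a : Fin (m+2), f ⟨a.1 + 3, by omega⟩ = g ⟨a.1 + 3, by omega⟩ :=
      fun a => congrFun h a
    refine Subtype.ext ?_
    show f = g
    funext i
    rcases lt_or_ge i.1 3 with hi | hi
    · interval_cases h' : i.1
      · rw [hf.1 i h', hg.1 i h']
      · have : i = ⟨1, by omega⟩ := Fin.val_injective h'
        rw [this, linok_one (m := m+3) f hf, linok_one (m := m+3) g hg]
      · have : i = ⟨2, by omega⟩ := Fin.val_injective h'
        rw [Bool.not_eq_true] at hf2 hg2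
        rw [this, hf2, hg2]
    · have e := hfun ⟨i.1 - 3, by omega⟩
      have : (⟨(i.1 - 3) + 3, by omega⟩ : Fin (m+5)) = i :=
        Fin.val_injective (show i.1 - 3 + 3 = i.1 by omega)
      rwa [this] at e

/-! ### Cyclic strings -/

/-- Cyclic validity: no `11`, no `000` cyclically. Characteristic strings of
maximal independent sets of the cycle. -/
def CycOK (k : ℕ) (f : Fin (k+3) → Bool) : Prop :=
  (∀ i : Fin (k+3), ¬(f i = true ∧ f (i+1) = true)) ∧
  (∀ i : Fin (k+3), f i = true ∨ f (i+1) = true ∨ f (i+2) = true)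

lemma fin3_one_eq {k : ℕ} : (1 : Fin (k+3)) = ⟨1, by omega⟩ := by
  apply Fin.val_injective; show _ = 1; simp [Fin.val_one]
lemma fin3_two_eq {k : ℕ} : (2 : Fin (k+3)) = ⟨2, by omega⟩ := by
  apply Fin.val_injective; show _ = 2; simp

lemma fin3_add_one_val {k : ℕ} (i : Fin (k+3)) : (i+1 : Fin (k+3)).1 = (i.1 + 1) % (k+3) := by
  rw [Fin.val_add, fin3_one_eq]

lemma fin3_add_two_val {k : ℕ} (i : Fin (k+3)) : (i+2 : Fin (k+3)).1 = (i.1 + 2) % (k+3) := by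
  rw [Fin.val_add, fin3_two_eq]

open Fin.CommRing

open SimpleGraph in
lemma cycle_adj_iff {k : ℕ} (u v : Fin (k+3)) :
    (SimpleGraph.cycleGraph (k+3)).Adj u v ↔ u - v = 1 ∨ v - u = 1 :=
  cycleGraph_adj (n := k+1)

lemma cycle_adj_succ {k : ℕ} (i : Fin (k+3)) : (SimpleGraph.cycleGraph (k+3)).Adj i (i+1) := by
  rw [cycle_adj_iff]
  right
  ring

lemma cycle_adj_char {k : ℕ} {u v : Fin (k+3)} (h : (SimpleGraph.cycleGraph (k+3)).Adj u v) :
    v = u + 1 ∨ v = u - 1 := by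
  rw [cycle_adj_iff] at h
  rcases h with h | h
  · right; rw [← h]; ring
  · left; rw [← h]; ring

/-- Characteristic function of a set of vertices. -/
noncomputable def chi {n : ℕ} (S : Set (Fin n)) : Fin n → Bool :=
  fun i => @decide (i ∈ S) (Classical.propDecidable _)

lemma chi_eq {n : ℕ} (S : Set (Fin n)) (i : Fin n) : chi S i = true ↔ i ∈ S := by
  simp [chi]

lemma chi_inj {n : ℕ} {S T : Set (Fin n)} (h : chi S = chi T) : S = T := by
  ext i
  rw [← chi_eq, ← chi_eq, h]

lemma mis_cycok {k : ℕ} (S : Set (Fin (k+3)))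
    (hS : IsMaxIndepSet (SimpleGraph.cycleGraph (k+3)) S) :
    CycOK k (chi S) := by
  constructor
  · rintro i ⟨h1, h2⟩
    rw [chi_eq] at h1 h2
    exact hS.1 h1 h2 (cycle_adj_succ i)
  · intro i
    by_contra hcon
    push_neg at hcon
    obtain ⟨c0, c1, c2⟩ := hcon
    have c0 : i ∉ S := fun h => c0 ((chi_eq S i).mpr h)
    have c1 : i + 1 ∉ S := fun h => c1 ((chi_eq S _).mpr h)
    have c2 : i + 2 ∉ S := fun h => c2 ((chi_eq S _).mpr h)
    have hind : IsIndepSet (SimpleGraph.cycleGraph (k+3)) (S ∪ {i+1}) := by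
      rintro x hx y hy hadj
      rcases hx with hx | hx <;> rcases hy with hy | hy
      · exact hS.1 hx hy hadj
      · rw [Set.mem_singleton_iff] at hy
        subst hy
        rcases cycle_adj_char hadj.symm with h | h
        · rw [show i + 1 + 1 = i + 2 by ring] at h; exact c2 (h ▸ hx)
        · rw [show i + 1 - 1 = i by ring] at h; exact c0 (h ▸ hx)
      · rw [Set.mem_singleton_iff] at hx
        subst hx
        rcases cycle_adj_char hadj with h | h
        · rw [show i + 1 + 1 = i + 2 by ring] at h; exact c2 (h ▸ hy)
        · rw [show i + 1 - 1 = i by ring] at h; exact c0 (h ▸ hy)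
      · rw [Set.mem_singleton_iff] at hx hy
        subst hx; subst hy
        exact (SimpleGraph.cycleGraph (k+3)).irrefl hadj
    have := hS.2 _ hind Set.subset_union_left
    exact c1 (this ▸ Set.mem_union_right _ rfl)

/-- The position of the first `true`, which is among `{0,1,2}`. -/
def jf {k : ℕ} (f : Fin (k+3) → Bool) : Fin (k+3) :=
  if f 0 = true then 0 else if f 1 = true then 1 else 2

/-- Rotation of `f` so that it starts at the first `true`. -/
def rotf {k : ℕ} (f : Fin (k+3) → Bool) : Fin (k+3) → Bool :=
  fun i => f (jf f + i)

lemma jf_spec {k : ℕ} (f : Fin (k+3) → Bool) (hc : CycOK k f) :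
    (jf f = 0 ∧ f 0 = true) ∨ (jf f = 1 ∧ f 0 = false ∧ f 1 = true) ∨
    (jf f = 2 ∧ f 0 = false ∧ f 1 = false ∧ f 2 = true) := by
  unfold jf
  split_ifs with h0 h1
  · exact Or.inl ⟨rfl, h0⟩
  · exact Or.inr (Or.inl ⟨rfl, by simpa using h0, h1⟩)
  · refine Or.inr (Or.inr ⟨rfl, by simpa using h0, by simpa using h1, ?_⟩)
    have := hc.2 0
    rw [zero_add, show (0 : Fin (k+3)) + 2 = 2 by ring] at this
    rcases this with h | h | h
    · exact absurd h h0
    · exact absurd h h1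
    · exact h

lemma jf_val_le {k : ℕ} (f : Fin (k+3) → Bool) (hc : CycOK k f) : (jf f).1 ≤ 2 := by
  rcases jf_spec f hc with ⟨h, _⟩ | ⟨h, _⟩ | ⟨h, _⟩ <;> rw [h]
  · exact Nat.zero_le 2
  · rw [fin3_one_eq]; show 1 ≤ 2; omega
  · rw [fin3_two_eq]

lemma rot_reconstruct {k : ℕ} (f : Fin (k+3) → Bool) (i : Fin (k+3)) :
    f i = rotf f (i - jf f) := by
  unfold rotf
  rw [show jf f + (i - jf f) = i by ring]

lemma rot_zero {k : ℕ} (f : Fin (k+3) → Bool) (hc : CycOK k f) : rotf f 0 = true := by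
  unfold rotf
  rw [add_zero]
  rcases jf_spec f hc with ⟨h, h'⟩ | ⟨h, _, h'⟩ | ⟨h, _, _, h'⟩ <;> rw [h] <;> exact h'

lemma rot_linok {k : ℕ} (f : Fin (k+3) → Bool) (hc : CycOK k f) : LinOK (rotf f) := by
  refine ⟨?_, ?_, ?_, ?_⟩
  · intro i hi
    have : i = 0 := Fin.val_injective hi
    rw [this]
    exact rot_zero f hc
  · intro i hi
    have hi' : i.1 = k + 2 := by omega
    unfold rotf
    rcases jf_spec f hc with ⟨h, h'⟩ | ⟨h, h', _⟩ | ⟨h, _, h', _⟩ <;> rw [h]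
    · rw [zero_add]
      have he : i + 1 = (0 : Fin (k+3)) := by
        apply Fin.val_injective
        have e : k+2+1 = k+3 := by omega
        rw [fin3_add_one_val, hi']
        show (k+2+1) % (k+3) = 0
        rw [e, Nat.mod_self]
      have := hc.1 i
      rw [he, h'] at this
      simp only [and_true, Bool.not_eq_true] at this
      exact this
    · have he : (1 : Fin (k+3)) + i = 0 := by
        apply Fin.val_injective
        have e : 1+(k+2) = k+3 := by omega
        rw [Fin.val_add, fin3_one_eq, hi']
        show (1 + (k+2)) % (k+3) = 0
        rw [e, Nat.mod_self]
      rw [he]; exact h'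
    · have he : (2 : Fin (k+3)) + i = 1 := by
        apply Fin.val_injective
        have e : 2+(k+2) = (k+3)+1 := by omega
        rw [Fin.val_add, fin3_two_eq, hi']
        show (2 + (k+2)) % (k+3) = ((1 : Fin (k+3)) : ℕ)
        rw [e, Nat.add_mod_left, fin3_one_eq]
        exact Nat.mod_eq_of_lt (by omega)
      rw [he]; exact h'
  · intro i j hj
    have hj' : j = i + 1 := by
      apply Fin.val_injective
      rw [fin3_add_one_val, Nat.mod_eq_of_lt (by omega : i.1 + 1 < k+3), hj]
    subst hj'
    unfold rotf
    rw [show jf f + (i + 1) = (jf f + i) + 1 by ring]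
    exact hc.1 (jf f + i)
  · intro i j l hj hl
    have hj' : j = i + 1 := by
      apply Fin.val_injective
      rw [fin3_add_one_val, Nat.mod_eq_of_lt (by omega : i.1 + 1 < k+3), hj]
    have hl' : l = i + 2 := by
      apply Fin.val_injective
      rw [fin3_add_two_val, Nat.mod_eq_of_lt (by omega : i.1 + 2 < k+3), hl]
    subst hj'; subst hl'
    unfold rotf
    rw [show jf f + (i + 1) = (jf f + i) + 1 by ring,
      show jf f + (i + 2) = (jf f + i) + 2 by ring]
    exact hc.2 (jf f + i)

lemma jf_val_le_one {k : ℕ} (f : Fin (k+3) → Bool) (hc : CycOK k f)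
    (h : rotf f ⟨k+1, by omega⟩ = true) : (jf f).1 ≤ 1 := by
  rcases jf_spec f hc with ⟨hj, _⟩ | ⟨hj, _⟩ | ⟨hj, h0, _⟩ <;> rw [hj]
  · exact Nat.zero_le 1
  · rw [fin3_one_eq]
  · exfalso
    unfold rotf at h
    rw [hj] at h
    have he : (2 : Fin (k+3)) + ⟨k+1, by omega⟩ = 0 := by
      apply Fin.val_injective
      have e : 2+(k+1) = k+3 := by omega
      rw [Fin.val_add, fin3_two_eq]
      show (2 + (k+1)) % (k+3) = 0
      rw [e, Nat.mod_self]
    rw [he, h0] at h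
    exact Bool.false_ne_true h

lemma trunc_left_linok {k : ℕ} (t : Fin (k+3) → Bool) (ht : LinOK t)
    (h : t ⟨k+1, by omega⟩ = true) :
    LinOK (fun i : Fin (k+1) => t ⟨i.1, by omega⟩) := by
  obtain ⟨h0, hl, h11, h000⟩ := ht
  refine ⟨?_, ?_, ?_, ?_⟩
  · intro i hi
    exact h0 ⟨i.1, by omega⟩ hi
  · intro i hi
    have hn := h11 ⟨k, by omega⟩ ⟨k+1, by omega⟩ rfl
    simp only [h, and_true, Bool.not_eq_true] at hn
    show t ⟨i.1, by omega⟩ = false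
    have : (⟨i.1, by omega⟩ : Fin (k+3)) = ⟨k, by omega⟩ :=
      Fin.val_injective (show i.1 = k by omega)
    rw [this]
    exact hn
  · intro i j hj
    exact h11 ⟨i.1, by omega⟩ ⟨j.1, by omega⟩ hj
  · intro i j l hj hl
    exact h000 ⟨i.1, by omega⟩ ⟨j.1, by omega⟩ ⟨l.1, by omega⟩ hj hl

lemma linok_top_of_right {k : ℕ} (t : Fin (k+3) → Bool) (ht : LinOK t)
    (h1 : t ⟨k+1, by omega⟩ = false) : t ⟨k, by omega⟩ = true := by
  obtain ⟨h0, hl, h11, h000⟩ := ht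
  have hlast : t ⟨k+2, by omega⟩ = false := hl _ (show k+2 = k+3-1 by omega)
  have := h000 ⟨k, by omega⟩ ⟨k+1, by omega⟩ ⟨k+2, by omega⟩ rfl rfl
  rcases this with h | h | h
  · exact h
  · rw [h1] at h; exact absurd h (by simp)
  · rw [hlast] at h; exact absurd h (by simp)

lemma trunc_right_linok {k : ℕ} (t : Fin (k+3) → Bool) (ht : LinOK t)
    (h1 : t ⟨k+1, by omega⟩ = false) :
    LinOK (fun i : Fin k => t ⟨i.1, by omega⟩) := by
  have hk : t ⟨k, by omega⟩ = true := linok_top_of_right t ht h1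
  obtain ⟨h0, hl, h11, h000⟩ := ht
  refine ⟨?_, ?_, ?_, ?_⟩
  · intro i hi
    exact h0 ⟨i.1, by omega⟩ hi
  · intro i hi
    have hk1 : 1 ≤ k := by omega
    have hn := h11 ⟨k-1, by omega⟩ ⟨k, by omega⟩ (show k = (k-1) + 1 by omega)
    simp only [hk, and_true, Bool.not_eq_true] at hn
    show t ⟨i.1, by omega⟩ = false
    have : (⟨i.1, by omega⟩ : Fin (k+3)) = ⟨k-1, by omega⟩ :=
      Fin.val_injective (show i.1 = k-1 by omega)
    rw [this]
    exact hn
  · intro i j hj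
    exact h11 ⟨i.1, by omega⟩ ⟨j.1, by omega⟩ hj
  · intro i j l hj hl
    exact h000 ⟨i.1, by omega⟩ ⟨j.1, by omega⟩ ⟨l.1, by omega⟩ hj hl

set_option synthInstance.maxHeartbeats 1000000 in
set_option maxHeartbeats 1000000 in
/-- The main counting bound: `mis (C_{k+3}) ≤ 2 L(k+1) + 3 L(k)`. -/
lemma cyc_count (k : ℕ) :
    Nat.card {s : Set (Fin (k+3)) // IsMaxIndepSet (SimpleGraph.cycleGraph (k+3)) s}
      ≤ 2 * Lcard (k+1) + 3 * Lcard k := by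
  have hcard : 2 * Lcard (k+1) + 3 * Lcard k
      = Nat.card ((Fin 2 × {f : Fin (k+1) → Bool // LinOK f})
          ⊕ (Fin 3 × {f : Fin k → Bool // LinOK f})) := by
    rw [Nat.card_eq_fintype_card]
    simp [Fintype.card_sum, Fintype.card_prod, Lcard]
  rw [hcard]
  have hval : ∀ (S : Set (Fin (k+3))), IsMaxIndepSet (SimpleGraph.cycleGraph (k+3)) S →
      CycOK k (chi S) := fun S hS => mis_cycok S hS
  apply Nat.card_le_card_of_injective
    (fun F => if h : rotf (chi F.1) ⟨k+1, by omega⟩ = true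
      then Sum.inl (⟨min (jf (chi F.1)).1 1, by omega⟩,
        ⟨fun i => rotf (chi F.1) ⟨i.1, by omega⟩,
          trunc_left_linok _ (rot_linok _ (hval F.1 F.2)) h⟩)
      else Sum.inr (⟨min (jf (chi F.1)).1 2, by omega⟩,
        ⟨fun i => rotf (chi F.1) ⟨i.1, by omega⟩,
          trunc_right_linok _ (rot_linok _ (hval F.1 F.2)) (by
            rcases Bool.eq_false_or_eq_true (rotf (chi F.1) ⟨k+1, by omega⟩) with hh|hh
            · exact absurd hh h
            · exact hh)⟩))
  rintro ⟨S, hS⟩ ⟨S', hS'⟩ h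
  dsimp only at h
  have hc := mis_cycok S hS
  have hc' := mis_cycok S' hS'
  have final : chi S = chi S' → (⟨S, hS⟩ : {s : Set (Fin (k+3)) //
      IsMaxIndepSet (SimpleGraph.cycleGraph (k+3)) s}) = ⟨S', hS'⟩ :=
    fun hh => Subtype.ext (chi_inj hh)
  by_cases hA : rotf (chi S) ⟨k+1, by omega⟩ = true <;>
    by_cases hB : rotf (chi S') ⟨k+1, by omega⟩ = true
  · rw [dif_pos hA, dif_pos hB] at h
    rw [Sum.inl.injEq, Prod.mk.injEq, Subtype.mk.injEq] at h
    obtain ⟨hj, ht⟩ := h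
    have hjv : min (jf (chi S)).1 1 = min (jf (chi S')).1 1 := congrArg Fin.val hj
    have hle := jf_val_le_one _ hc hA
    have hle' := jf_val_le_one _ hc' hB
    have hjeq : jf (chi S) = jf (chi S') := Fin.val_injective (by omega)
    have hteq : rotf (chi S) = rotf (chi S') := by
      funext i
      rcases (show i.1 < k+1 ∨ i.1 = k+1 ∨ i.1 = k+2 by omega) with hi | hi | hi
      · have e := congrFun ht ⟨i.1, hi⟩
        have e2 : (⟨i.1, by omega⟩ : Fin (k+3)) = i := Fin.val_injective rfl
        rwa [e2] at e
      · have e1 : i = ⟨k+1, by omega⟩ := Fin.val_injective hi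
        rw [e1, hA, hB]
      · have e1 : i = ⟨k+2, by omega⟩ := Fin.val_injective hi
        rw [e1, (rot_linok _ hc).2.1 _ (show k+2 = k+3-1 by omega),
          (rot_linok _ hc').2.1 _ (show k+2 = k+3-1 by omega)]
    apply final
    funext i
    rw [rot_reconstruct (chi S) i, rot_reconstruct (chi S') i, hjeq, hteq]
  · rw [dif_pos hA, dif_neg hB] at h
    exact absurd h (by simp)
  · rw [dif_neg hA, dif_pos hB] at h
    exact absurd h (by simp)
  · rw [dif_neg hA, dif_neg hB] at h
    rw [Sum.inr.injEq, Prod.mk.injEq, Subtype.mk.injEq] at h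
    obtain ⟨hj, ht⟩ := h
    have hA' : rotf (chi S) ⟨k+1, by omega⟩ = false := by simpa using hA
    have hB' : rotf (chi S') ⟨k+1, by omega⟩ = false := by simpa using hB
    have hjv : min (jf (chi S)).1 2 = min (jf (chi S')).1 2 := congrArg Fin.val hj
    have hle := jf_val_le _ hc
    have hle' := jf_val_le _ hc'
    have hjeq : jf (chi S) = jf (chi S') := Fin.val_injective (by omega)
    have hteq : rotf (chi S) = rotf (chi S') := by
      funext i
      rcases (show i.1 < k ∨ i.1 = k ∨ i.1 = k+1 ∨ i.1 = k+2 by omega) with hi | hi | hi | hi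
      · have e := congrFun ht ⟨i.1, hi⟩
        have e2 : (⟨i.1, by omega⟩ : Fin (k+3)) = i := Fin.val_injective rfl
        rwa [e2] at e
      · have e1 : i = ⟨k, by omega⟩ := Fin.val_injective hi
        rw [e1, linok_top_of_right _ (rot_linok _ hc) hA',
          linok_top_of_right _ (rot_linok _ hc') hB']
      · have e1 : i = ⟨k+1, by omega⟩ := Fin.val_injective hi
        rw [e1, hA', hB']
      · have e1 : i = ⟨k+2, by omega⟩ := Fin.val_injective hi
        rw [e1, (rot_linok _ hc).2.1 _ (show k+2 = k+3-1 by omega),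
          (rot_linok _ hc').2.1 _ (show k+2 = k+3-1 by omega)]
    apply final
    funext i
    rw [rot_reconstruct (chi S) i, rot_reconstruct (chi S') i, hjeq, hteq]

lemma Lcard0 : Lcard 0 = 1 := by decide
lemma Lcard1 : Lcard 1 = 0 := by decide
lemma Lcard2 : Lcard 2 = 1 := by decide
lemma Lcard3 : Lcard 3 = 1 := by decide
lemma Lcard4 : Lcard 4 = 1 := by decide
lemma Lcard5 : Lcard 5 = 2 := by decide

lemma gamma_bound (γ : ℝ) (hγ : 1 + γ = γ ^ 3) :
    ∀ k : ℕ, (2 * Lcard (k+1) + 3 * Lcard k : ℝ) ≤ 3 * γ ^ k := by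
  have h13 : 13/10 ≤ γ := by
    nlinarith [sq_nonneg (γ + 13/20), sq_nonneg γ, sq_nonneg (γ - 13/10), sq_nonneg (γ+1)]
  intro k
  induction k using Nat.strong_induction_on with
  | _ k ih =>
    match k with
    | 0 => rw [Lcard1, Lcard0]; norm_num
    | 1 => rw [Lcard2, Lcard1]; push_cast; nlinarith
    | 2 => rw [Lcard3, Lcard2]; push_cast; nlinarith
    | 3 => rw [Lcard4, Lcard3]; push_cast; nlinarith
    | 4 => rw [Lcard5, Lcard4]; push_cast; nlinarith
    | (n+5) =>
      have r1 : Lcard (n+6) ≤ Lcard (n+4) + Lcard (n+3) := Lcard_rec (n+1)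
      have r2 : Lcard (n+5) ≤ Lcard (n+3) + Lcard (n+2) := Lcard_rec n
      have ih1 : (2 * Lcard (n+4) + 3 * Lcard (n+3) : ℝ) ≤ 3 * γ ^ (n+3) :=
        ih (n+3) (by omega)
      have ih2 : (2 * Lcard (n+3) + 3 * Lcard (n+2) : ℝ) ≤ 3 * γ ^ (n+2) :=
        ih (n+2) (by omega)
      have hpow : γ ^ (n+5) = γ ^ (n+2) + γ ^ (n+3) := by
        have : γ ^ (n+5) = γ ^ (n+2) * γ ^ 3 := by ring
        rw [this, ← hγ]
        ring
      have c1 : (Lcard (n+6) : ℝ) ≤ (Lcard (n+4) : ℝ) + (Lcard (n+3) : ℝ) := by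
        exact_mod_cast r1
      have c2 : (Lcard (n+5) : ℝ) ≤ (Lcard (n+3) : ℝ) + (Lcard (n+2) : ℝ) := by
        exact_mod_cast r2
      have : (2 * Lcard (n+5+1) + 3 * Lcard (n+5) : ℝ)
          ≤ (2 * Lcard (n+4) + 3 * Lcard (n+3) : ℝ) + (2 * Lcard (n+3) + 3 * Lcard (n+2)) := by
        push_cast at c1 c2 ⊢
        linarith
      calc (2 * Lcard (n+5+1) + 3 * Lcard (n+5) : ℝ)
          ≤ (2 * Lcard (n+4) + 3 * Lcard (n+3) : ℝ) + (2 * Lcard (n+3) + 3 * Lcard (n+2)) := this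
        _ ≤ 3 * γ ^ (n+3) + 3 * γ ^ (n+2) := by linarith
        _ = 3 * γ ^ (n+5) := by rw [hpow]; ring

theorem mis_cycleGraph_le (γ : ℝ) (hγ : 1 + γ = γ ^ 3) (n : ℕ) (hn : 3 ≤ n) :
    (mis (SimpleGraph.cycleGraph n) : ℝ) ≤ 3 * γ ^ (n - 3) := by
  obtain ⟨k, rfl⟩ : ∃ k, n = k + 3 := ⟨n - 3, by omega⟩
  have h1 : mis (SimpleGraph.cycleGraph (k+3)) ≤ 2 * Lcard (k+1) + 3 * Lcard k :=
    cyc_count k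
  have h2 : (2 * Lcard (k+1) + 3 * Lcard k : ℝ) ≤ 3 * γ ^ k := gamma_bound γ hγ k
  have h3 : (mis (SimpleGraph.cycleGraph (k+3)) : ℝ) ≤ (2 * Lcard (k+1) + 3 * Lcard k : ℝ) := by
    exact_mod_cast h1
  rw [show k + 3 - 3 = k by omega]
  linarith
end
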